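/- arXiv:0705.2267 — 7 statements merged into one kernel-verified Lean document; each statement's English description precedes it below -/
import Mathlib

section
/- For every integer m ≥ 2, one has 2·ζ(m,1) = m·ζ(m+1) − Σ_{j=1}^{m−2} ζ(j+1)·ζ(m−j), where ζ(m,1) = Σ_{k>l≥1} 1/(k^m · l) and ζ(s) is the Riemann zeta value. -/
open Finset Filter

/-- The Riemann zeta value ζ(s) = ∑_{k ≥ 1} 1/k^s (s a natural number). -/
noncomputable def zeta (s : ℕ) : ℝ := ∑' k : ℕ, (((k : ℝ) + 1) ^ s)⁻¹

/-- The double zeta value ζ(s₁, s₂) = ∑_{k > l ≥ 1} 1/(k^{s₁} l^{s₂}). -/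
noncomputable def zeta2 (s₁ s₂ : ℕ) : ℝ :=
  ∑' k : ℕ, ∑' l : ℕ, if 1 ≤ l ∧ l < k then ((k : ℝ) ^ s₁ * (l : ℝ) ^ s₂)⁻¹ else 0

/-- harmonic number H n = ∑_{i=1}^n 1/i -/
noncomputable def Hn (n : ℕ) : ℝ := ∑ i ∈ Finset.range n, ((i : ℝ) + 1)⁻¹

noncomputable def Wf (s₁ s₂ : ℕ) (p : ℕ × ℕ) : ℝ :=
  if p.2 < p.1 then (((p.1 : ℝ) + 1) ^ s₁ * ((p.2 : ℝ) + 1) ^ s₂)⁻¹ else 0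

noncomputable def Vf (s₁ s₂ : ℕ) (p : ℕ × ℕ) : ℝ :=
  (((p.1 : ℝ) + (p.2 : ℝ) + 2) ^ s₁ * ((p.2 : ℝ) + 1) ^ s₂)⁻¹

lemma zeta_summable {s : ℕ} (hs : 2 ≤ s) : Summable (fun k : ℕ => (((k : ℝ) + 1) ^ s)⁻¹) := by
  have h : Summable (fun n : ℕ => 1 / (n : ℝ) ^ s) := Real.summable_one_div_nat_pow.mpr hs
  have := (summable_nat_add_iff 1).mpr h
  simpa [one_div] using this

lemma half_summable : Summable (fun k : ℕ => (((k : ℝ) + 1) ^ (3/2 : ℝ))⁻¹) := by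
  have h : Summable (fun n : ℕ => 1 / (n : ℝ) ^ (3/2 : ℝ)) :=
    Real.summable_one_div_nat_rpow.mpr (by norm_num)
  have := (summable_nat_add_iff 1).mpr h
  simpa [one_div] using this

lemma master_summable :
    Summable (fun p : ℕ × ℕ => (((p.1 : ℝ) + 1) ^ (3/2 : ℝ))⁻¹ * (((p.2 : ℝ) + 1) ^ (3/2 : ℝ))⁻¹) := by
  refine half_summable.mul_of_nonneg half_summable ?_ ?_ <;>
    intro k <;> positivity

/-- key inequality : x^{3/2} y^{3/2} ≤ K² x when 1 ≤ x ≤ K, 1 ≤ y ≤ K. -/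
lemma key_ineq {x y K : ℝ} (hx : 1 ≤ x) (hxK : x ≤ K) (hy : 1 ≤ y) (hyK : y ≤ K) :
    x ^ (3/2 : ℝ) * y ^ (3/2 : ℝ) ≤ K ^ 2 * x := by
  have hx0 : (0:ℝ) ≤ x := by linarith
  have hy0 : (0:ℝ) ≤ y := by linarith
  have hK0 : (0:ℝ) ≤ K := by linarith
  have h1 : x ^ (3/2 : ℝ) ≤ K ^ (1/2 : ℝ) * x := by
    have hxx : x ^ (3/2 : ℝ) = x ^ (1/2 : ℝ) * x := by
      rw [show (3/2:ℝ) = 1/2 + 1 by norm_num, Real.rpow_add (by linarith : (0:ℝ) < x),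
        Real.rpow_one]
    rw [hxx]
    have : x ^ (1/2 : ℝ) ≤ K ^ (1/2 : ℝ) := Real.rpow_le_rpow hx0 hxK (by norm_num)
    nlinarith [Real.rpow_nonneg hx0 (1/2:ℝ)]
  have h2 : y ^ (3/2 : ℝ) ≤ K ^ (3/2 : ℝ) := Real.rpow_le_rpow hy0 hyK (by norm_num)
  calc x ^ (3/2:ℝ) * y ^ (3/2:ℝ) ≤ (K ^ (1/2:ℝ) * x) * K ^ (3/2:ℝ) := by
        apply mul_le_mul h1 h2 (by positivity) (by positivity)
    _ = (K ^ (1/2:ℝ) * K ^ (3/2:ℝ)) * x := by ring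
    _ = K ^ 2 * x := by
        rw [← Real.rpow_add' hK0 (by norm_num)]
        norm_num

lemma Wf_nonneg (s₁ s₂ : ℕ) (p : ℕ × ℕ) : 0 ≤ Wf s₁ s₂ p := by
  unfold Wf; split <;> positivity

lemma Wf_summable {s₁ s₂ : ℕ} (h₁ : 2 ≤ s₁) (h₂ : 1 ≤ s₂) : Summable (Wf s₁ s₂) := by
  apply Summable.of_nonneg_of_le (Wf_nonneg s₁ s₂) _ master_summable
  rintro ⟨k, l⟩
  unfold Wf
  split
  · rename_i hlk
    simp only at hlk ⊢
    rw [← mul_inv]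
    apply inv_anti₀ (by positivity)
    have hk1 : (1:ℝ) ≤ (k:ℝ) + 1 := by
      have : (0:ℝ) ≤ (k:ℝ) := Nat.cast_nonneg k
      linarith
    have hl1 : (1:ℝ) ≤ (l:ℝ) + 1 := by
      have : (0:ℝ) ≤ (l:ℝ) := Nat.cast_nonneg l
      linarith
    have hlk' : (l:ℝ) + 1 ≤ (k:ℝ) + 1 := by
      have : (l:ℝ) ≤ k := by exact_mod_cast hlk.le
      linarith
    calc ((k:ℝ)+1) ^ (3/2:ℝ) * ((l:ℝ)+1) ^ (3/2:ℝ)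
        ≤ ((k:ℝ)+1) ^ 2 * ((l:ℝ)+1) := by
          rw [mul_comm (((k:ℝ)+1) ^ (3/2:ℝ))]
          exact key_ineq hl1 hlk' hk1 le_rfl
      _ ≤ ((k:ℝ)+1) ^ s₁ * ((l:ℝ)+1) ^ s₂ := by
          apply mul_le_mul (pow_le_pow_right₀ hk1 h₁) _ (by positivity) (by positivity)
          calc ((l:ℝ)+1) = ((l:ℝ)+1) ^ 1 := (pow_one _).symm
            _ ≤ ((l:ℝ)+1) ^ s₂ := pow_le_pow_right₀ hl1 h₂
  · simp only [mul_inv]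
    positivity

lemma Vf_eq_comp (s₁ s₂ : ℕ) :
    Vf s₁ s₂ = (Wf s₁ s₂) ∘ (fun p : ℕ × ℕ => (p.2 + p.1 + 1, p.2)) := by
  funext ⟨d, l⟩
  simp only [Vf, Wf, Function.comp_apply]
  rw [if_pos (by omega)]
  push_cast
  ring_nf

lemma shear_inj : Function.Injective (fun p : ℕ × ℕ => (p.2 + p.1 + 1, p.2)) := by
  rintro ⟨a, b⟩ ⟨c, d⟩ h
  have h1 : b + a + 1 = d + c + 1 := congrArg Prod.fst h
  have h2 : b = d := congrArg Prod.snd h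
  simp only [Prod.mk.injEq]
  omega

lemma shear_range {s₁ s₂ : ℕ} :
    ∀ x ∉ Set.range (fun p : ℕ × ℕ => (p.2 + p.1 + 1, p.2)), Wf s₁ s₂ x = 0 := by
  rintro ⟨k, l⟩ hx
  unfold Wf
  rw [if_neg]
  intro hlk
  simp only at hlk
  refine hx ⟨(k - l - 1, l), ?_⟩
  simp only [Prod.mk.injEq]
  exact ⟨by omega, trivial⟩

lemma V_tsum_eq_W (s₁ s₂ : ℕ) : ∑' p, Vf s₁ s₂ p = ∑' p, Wf s₁ s₂ p := by
  rw [Vf_eq_comp]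
  exact shear_inj.tsum_eq (Function.support_subset_iff'.mpr shear_range)

lemma Vf_summable {s₁ s₂ : ℕ} (h₁ : 2 ≤ s₁) (h₂ : 1 ≤ s₂) : Summable (Vf s₁ s₂) := by
  rw [Vf_eq_comp]
  exact (shear_inj.summable_iff shear_range).mpr (Wf_summable h₁ h₂)

lemma zeta2_eq_W {s₁ s₂ : ℕ} (h : Summable (Wf s₁ s₂)) : zeta2 s₁ s₂ = ∑' p, Wf s₁ s₂ p := by
  have inner_eq : ∀ k : ℕ,
      (∑' l : ℕ, if 1 ≤ l ∧ l < k then ((k : ℝ) ^ s₁ * (l : ℝ) ^ s₂)⁻¹ else 0)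
        = ∑' l : ℕ, (if l + 1 < k then ((k : ℝ) ^ s₁ * ((l : ℝ) + 1) ^ s₂)⁻¹ else 0) := by
    intro k
    rw [← Function.Injective.tsum_eq Nat.succ_injective
      (f := fun l : ℕ => if 1 ≤ l ∧ l < k then ((k : ℝ) ^ s₁ * (l : ℝ) ^ s₂)⁻¹ else 0)]
    · apply tsum_congr
      intro l
      have : (1 ≤ Nat.succ l ∧ Nat.succ l < k) ↔ (l + 1 < k) := by omega
      rw [if_congr this rfl rfl]
      push_cast
      rfl
    · intro l hl
      simp only [Function.mem_support, ne_eq] at hl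
      rcases Nat.eq_zero_or_pos l with h0 | h0
      · exfalso; apply hl; rw [h0, if_neg]; omega
      · exact ⟨l - 1, by omega⟩
  unfold zeta2
  simp_rw [inner_eq]
  have outer_eq :
      (∑' k : ℕ, ∑' l : ℕ, (if l + 1 < k then ((k : ℝ) ^ s₁ * ((l : ℝ) + 1) ^ s₂)⁻¹ else 0))
        = ∑' k : ℕ, ∑' l : ℕ, Wf s₁ s₂ (k, l) := by
    rw [← Function.Injective.tsum_eq Nat.succ_injective
      (f := fun k : ℕ => ∑' l : ℕ, (if l + 1 < k then ((k : ℝ) ^ s₁ * ((l : ℝ) + 1) ^ s₂)⁻¹ else 0))]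
    · apply tsum_congr
      intro k
      apply tsum_congr
      intro l
      have : (l + 1 < Nat.succ k) ↔ (l < k) := by omega
      rw [if_congr this rfl rfl]
      unfold Wf
      simp only
      split <;> [skip; rfl]
      push_cast
      rfl
    · intro k hk
      simp only [Function.mem_support, ne_eq] at hk
      rcases Nat.eq_zero_or_pos k with h0 | h0
      · exfalso
        apply hk
        rw [h0]
        simp
      · exact ⟨k - 1, by omega⟩
  rw [outer_eq]
  exact (Summable.tsum_prod' h h.prod_factor).symm

lemma prodComm_tsum (f : ℕ × ℕ → ℝ) : ∑' p : ℕ × ℕ, f (p.2, p.1) = ∑' p, f p := by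
  exact Equiv.tsum_eq (Equiv.prodComm ℕ ℕ) f

lemma prodComm_summable {f : ℕ × ℕ → ℝ} (h : Summable f) :
    Summable (fun p : ℕ × ℕ => f (p.2, p.1)) := by
  exact h.comp_injective (Equiv.prodComm ℕ ℕ).injective

lemma diag_tsum (a b : ℕ) :
    ∑' p : ℕ × ℕ, (if p.1 = p.2 then (((p.1:ℝ) + 1) ^ a)⁻¹ * (((p.2:ℝ) + 1) ^ b)⁻¹ else 0)
      = zeta (a + b) := by
  have hinj : Function.Injective (fun k : ℕ => (k, k) : ℕ → ℕ × ℕ) := by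
    intro x y h
    exact congrArg Prod.fst h
  rw [← Function.Injective.tsum_eq hinj]
  · unfold zeta
    apply tsum_congr
    intro k
    show (if k = k then (((k:ℝ) + 1) ^ a)⁻¹ * (((k:ℝ) + 1) ^ b)⁻¹ else 0) = _
    rw [if_pos rfl, pow_add, mul_inv]
  · rintro ⟨k, l⟩ hp
    simp only [Function.mem_support, ne_eq] at hp
    by_cases hkl : k = l
    · exact ⟨k, by simp [hkl]⟩
    · exfalso
      apply hp
      show (if k = l then (((k:ℝ) + 1) ^ a)⁻¹ * (((l:ℝ) + 1) ^ b)⁻¹ else 0) = 0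
      rw [if_neg hkl]

lemma diag_summable (a b : ℕ) (hab : 2 ≤ a + b) :
    Summable (fun p : ℕ × ℕ =>
      (if p.1 = p.2 then (((p.1:ℝ) + 1) ^ a)⁻¹ * (((p.2:ℝ) + 1) ^ b)⁻¹ else 0)) := by
  have hinj : Function.Injective (fun k : ℕ => (k, k) : ℕ → ℕ × ℕ) := by
    intro x y h
    exact congrArg Prod.fst h
  rw [← hinj.summable_iff]
  · apply Summable.congr (zeta_summable hab)
    intro k
    show (((k:ℝ) + 1) ^ (a + b))⁻¹
      = (if k = k then (((k:ℝ) + 1) ^ a)⁻¹ * (((k:ℝ) + 1) ^ b)⁻¹ else 0)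
    rw [if_pos rfl, pow_add, mul_inv]
  · rintro ⟨k, l⟩ hp
    by_cases h : k = l
    · exact (hp ⟨k, by simp [h]⟩).elim
    · show (if k = l then (((k:ℝ) + 1) ^ a)⁻¹ * (((l:ℝ) + 1) ^ b)⁻¹ else 0) = 0
      rw [if_neg h]

lemma stuffle {a b : ℕ} (ha : 2 ≤ a) (hb : 2 ≤ b) :
    zeta a * zeta b = (∑' p, Wf a b p) + (∑' p, Wf b a p) + zeta (a + b) := by
  set A : ℕ → ℝ := fun k => (((k:ℝ) + 1) ^ a)⁻¹ with hA
  set B : ℕ → ℝ := fun k => (((k:ℝ) + 1) ^ b)⁻¹ with hB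
  have hAs : Summable A := zeta_summable ha
  have hBs : Summable B := zeta_summable hb
  have hprod : Summable (fun p : ℕ × ℕ => A p.1 * B p.2) :=
    hAs.mul_of_nonneg hBs (fun k => by positivity) (fun k => by positivity)
  have hswap : Summable (fun p : ℕ × ℕ => (if p.1 < p.2 then A p.1 * B p.2 else 0)) := by
    apply Summable.congr (prodComm_summable (Wf_summable hb (show 1 ≤ a by omega)))
    rintro ⟨k, l⟩
    show Wf b a (l, k) = _
    simp only [Wf]
    split
    · rw [mul_inv, mul_comm]
    · rfl
  have hdiag := diag_summable a b (by omega)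
  have hW : Summable (Wf a b) := Wf_summable ha (by omega)
  have key : (fun p : ℕ × ℕ => A p.1 * B p.2) = fun p =>
      Wf a b p + ((if p.1 < p.2 then A p.1 * B p.2 else 0)
        + (if p.1 = p.2 then (((p.1:ℝ) + 1) ^ a)⁻¹ * (((p.2:ℝ) + 1) ^ b)⁻¹ else 0)) := by
    funext ⟨k, l⟩
    simp only [Wf]
    rcases lt_trichotomy l k with h | h | h
    · rw [if_pos h, if_neg (show ¬ k < l by omega), if_neg (show ¬ k = l by omega), mul_inv]
      simp only [hA, hB]
      ring
    · rw [if_neg (show ¬ l < k by omega), if_neg (show ¬ k < l by omega),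
        if_pos (show k = l by omega)]
      simp only [hA, hB]
      ring
    · rw [if_neg (show ¬ l < k by omega), if_pos h, if_neg (show ¬ k = l by omega)]
      ring
  have lhs_eq : ∑' p : ℕ × ℕ, A p.1 * B p.2 = zeta a * zeta b := by
    rw [Summable.tsum_prod' hprod hprod.prod_factor]
    have : ∀ k : ℕ, ∑' l, A k * B l = A k * zeta b := fun k => tsum_mul_left
    simp_rw [this]
    rw [tsum_mul_right]
    rfl
  have rhs_eq : ∑' p : ℕ × ℕ, A p.1 * B p.2
      = (∑' p, Wf a b p) + ((∑' p : ℕ × ℕ, (if p.1 < p.2 then A p.1 * B p.2 else 0))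
        + ∑' p : ℕ × ℕ, (if p.1 = p.2 then (((p.1:ℝ) + 1) ^ a)⁻¹ * (((p.2:ℝ) + 1) ^ b)⁻¹ else 0)) := by
    rw [← Summable.tsum_add hswap hdiag, ← Summable.tsum_add hW (hswap.add hdiag)]
    exact tsum_congr (fun p => congrFun key p)
  have swap_eq : (∑' p : ℕ × ℕ, (if p.1 < p.2 then A p.1 * B p.2 else 0)) = ∑' p, Wf b a p := by
    rw [← prodComm_tsum (fun p => (if p.1 < p.2 then A p.1 * B p.2 else 0))]
    apply tsum_congr
    rintro ⟨k, l⟩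
    show (if l < k then A l * B k else 0)
      = (if l < k then ((((k:ℝ)) + 1) ^ b * (((l:ℝ)) + 1) ^ a)⁻¹ else 0)
    simp only [hA, hB]
    split
    · rw [mul_inv, mul_comm]
    · rfl
  rw [← lhs_eq, rhs_eq, swap_eq, diag_tsum]
  ring

noncomputable def Uf (m : ℕ) (p : ℕ × ℕ) : ℝ :=
  (((p.1 : ℝ) + 1) * ((p.1 : ℝ) + (p.2 : ℝ) + 2) ^ m)⁻¹

noncomputable def Tf (n : ℕ) (p : ℕ × ℕ) : ℝ :=
  (((p.1 : ℝ) + 1) * ((p.1 : ℝ) + (p.2 : ℝ) + 2) * ((p.2 : ℝ) + 1) ^ n)⁻¹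

lemma Uf_eq_Vf_swap (m : ℕ) : ∀ p : ℕ × ℕ, Vf m 1 (p.2, p.1) = Uf m p := by
  rintro ⟨d, l⟩
  simp only [Vf, Uf, pow_one]
  rw [mul_comm]
  ring_nf

lemma Uf_summable {m : ℕ} (hm : 2 ≤ m) : Summable (Uf m) :=
  Summable.congr (prodComm_summable (Vf_summable hm le_rfl)) (Uf_eq_Vf_swap m)

lemma Uf_tsum (m : ℕ) : ∑' p, Uf m p = ∑' p, Wf m 1 p := by
  rw [← V_tsum_eq_W m 1, ← prodComm_tsum (Vf m 1)]
  exact tsum_congr (fun p => (Uf_eq_Vf_swap m p).symm)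

/-- The finite partial fraction identity. -/
lemma claimA (D L : ℝ) (hD : 1 ≤ D) (hL : 1 ≤ L) (n : ℕ) :
    ∑ i ∈ Finset.range n, ((D + L) ^ (i + 2) * L ^ (n - i))⁻¹
      = (D * (D + L) * L ^ n)⁻¹ - (D * (D + L) ^ (n + 1))⁻¹ := by
  have hD0 : (0:ℝ) < D := by linarith
  have hL0 : (0:ℝ) < L := by linarith
  have hK0 : (0:ℝ) < D + L := by linarith
  induction n with
  | zero => simp
  | succ n ih =>
    rw [Finset.sum_range_succ]
    have step : ∀ i ∈ Finset.range n,
        ((D + L) ^ (i + 2) * L ^ (n + 1 - i))⁻¹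
          = ((D + L) ^ (i + 2) * L ^ (n - i))⁻¹ * L⁻¹ := by
      intro i hi
      rw [Finset.mem_range] at hi
      have : n + 1 - i = (n - i) + 1 := by omega
      rw [this, pow_succ L (n - i), ← mul_assoc, mul_inv]
    rw [Finset.sum_congr rfl step, ← Finset.sum_mul, ih]
    have h1 : (D + L) ^ (n + 2) ≠ 0 := by positivity
    have h2 : (D + L) ^ (n + 1) ≠ 0 := by positivity
    have h3 : L ^ n ≠ 0 := by positivity
    have h4 : L ^ (n + 1) ≠ 0 := by positivity
    have e1 : (D + L) ^ (n + 2) = (D + L) ^ (n + 1) * (D + L) := pow_succ _ _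
    have e2 : L ^ (n + 1) = L ^ n * L := pow_succ _ _
    have hn1 : n + 1 - n = 1 := by omega
    rw [hn1, e1, e2, pow_one]
    field_simp
    ring

lemma harm_term_nonneg (c : ℕ) (d : ℕ) :
    0 ≤ ((d:ℝ) + 1)⁻¹ - ((d:ℝ) + 1 + (c:ℝ))⁻¹ := by
  have h1 : (0:ℝ) < (d:ℝ) + 1 := by positivity
  have h2 : ((d:ℝ) + 1) ≤ (d:ℝ) + 1 + (c:ℝ) := by
    have : (0:ℝ) ≤ (c:ℝ) := Nat.cast_nonneg c
    linarith
  have := inv_anti₀ h1 h2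
  linarith

lemma harm_summable (c : ℕ) :
    Summable (fun d : ℕ => ((d:ℝ) + 1)⁻¹ - ((d:ℝ) + 1 + (c:ℝ))⁻¹) := by
  apply Summable.of_nonneg_of_le (harm_term_nonneg c) _ ((zeta_summable le_rfl).mul_left (c:ℝ))
  intro d
  have h1 : (0:ℝ) < (d:ℝ) + 1 := by positivity
  have h2 : (0:ℝ) < (d:ℝ) + 1 + (c:ℝ) := by positivity
  rw [inv_sub_inv (ne_of_gt h1) (ne_of_gt h2)]
  have he : (d:ℝ) + 1 + (c:ℝ) - ((d:ℝ) + 1) = (c:ℝ) := by ring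
  rw [he]
  rw [div_eq_mul_inv]
  apply mul_le_mul_of_nonneg_left _ (Nat.cast_nonneg c)
  apply inv_anti₀ (by positivity)
  have : (1:ℝ) ≤ (d:ℝ) + 1 + (c:ℝ) := by
    have : (0:ℝ) ≤ (d:ℝ) := Nat.cast_nonneg d
    have : (0:ℝ) ≤ (c:ℝ) := Nat.cast_nonneg c
    linarith
  calc ((d:ℝ) + 1) ^ 2 = ((d:ℝ)+1) * ((d:ℝ)+1) := by ring
    _ ≤ ((d:ℝ)+1) * ((d:ℝ)+1+(c:ℝ)) := by
        have hc : (0:ℝ) ≤ (c:ℝ) := Nat.cast_nonneg c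
        nlinarith

lemma harm_partial (c N : ℕ) :
    ∑ d ∈ Finset.range N, (((d:ℝ) + 1)⁻¹ - ((d:ℝ) + 1 + (c:ℝ))⁻¹)
      = Hn c - ∑ i ∈ Finset.range c, ((N:ℝ) + (i:ℝ) + 1)⁻¹ := by
  set f : ℕ → ℝ := fun j => ((j:ℝ) + 1)⁻¹ with hf
  have h1 : ∑ d ∈ Finset.range N, (((d:ℝ) + 1)⁻¹ - ((d:ℝ) + 1 + (c:ℝ))⁻¹)
      = ∑ d ∈ Finset.range N, f d - ∑ d ∈ Finset.range N, f (c + d) := by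
    rw [← Finset.sum_sub_distrib]
    apply Finset.sum_congr rfl
    intro d _
    simp only [hf]
    push_cast
    ring_nf
  have h2 : ∑ d ∈ Finset.range N, f (c + d) = ∑ j ∈ Finset.Ico c (c + N), f j := by
    rw [Finset.sum_Ico_eq_sum_range, Nat.add_sub_cancel_left]
  have h3 : ∑ i ∈ Finset.range c, ((N:ℝ) + (i:ℝ) + 1)⁻¹ = ∑ j ∈ Finset.Ico N (N + c), f j := by
    rw [Finset.sum_Ico_eq_sum_range]
    simp only [Nat.add_sub_cancel_left, hf]
    apply Finset.sum_congr rfl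
    intro i _
    push_cast
    ring_nf
  have h4 : Hn c = ∑ j ∈ Finset.Ico 0 c, f j := by
    unfold Hn
    rw [Finset.range_eq_Ico]
  have h5 : ∑ d ∈ Finset.range N, f d = ∑ j ∈ Finset.Ico 0 N, f j := by
    rw [Finset.range_eq_Ico]
  have hA : (∑ j ∈ Finset.Ico 0 N, f j) + ∑ j ∈ Finset.Ico N (N + c), f j
      = ∑ j ∈ Finset.Ico 0 (N + c), f j :=
    Finset.sum_Ico_consecutive f (Nat.zero_le N) (Nat.le_add_right N c)
  have hB : (∑ j ∈ Finset.Ico 0 c, f j) + ∑ j ∈ Finset.Ico c (c + N), f j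
      = ∑ j ∈ Finset.Ico 0 (c + N), f j :=
    Finset.sum_Ico_consecutive f (Nat.zero_le c) (Nat.le_add_right c N)
  have hcomm : (c + N) = (N + c) := Nat.add_comm c N
  rw [h1, h2, h3, h4, h5, hcomm]
  rw [hcomm] at hB
  linarith

lemma harm_tail_tendsto (c : ℕ) :
    Filter.Tendsto (fun N : ℕ => ∑ i ∈ Finset.range c, ((N:ℝ) + (i:ℝ) + 1)⁻¹)
      Filter.atTop (nhds 0) := by
  apply squeeze_zero (fun N => by positivity)
    (g := fun N : ℕ => (c:ℝ) * ((N:ℝ) + 1)⁻¹)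
  · intro N
    calc ∑ i ∈ Finset.range c, ((N:ℝ) + (i:ℝ) + 1)⁻¹
        ≤ ∑ _i ∈ Finset.range c, ((N:ℝ) + 1)⁻¹ := by
          apply Finset.sum_le_sum
          intro i _
          apply inv_anti₀ (by positivity)
          have : (0:ℝ) ≤ (i:ℝ) := Nat.cast_nonneg i
          linarith
      _ = (c:ℝ) * ((N:ℝ) + 1)⁻¹ := by
          rw [Finset.sum_const, Finset.card_range, nsmul_eq_mul]
  · have := tendsto_one_div_add_atTop_nhds_zero_nat.const_mul (c:ℝ)
    simpa [one_div] using this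

lemma harm_tsum (c : ℕ) :
    ∑' d : ℕ, (((d:ℝ) + 1)⁻¹ - ((d:ℝ) + 1 + (c:ℝ))⁻¹) = Hn c := by
  have hs := harm_summable c
  have ht := hs.hasSum.tendsto_sum_nat
  have ht2 : Filter.Tendsto
      (fun N : ℕ => ∑ d ∈ Finset.range N, (((d:ℝ) + 1)⁻¹ - ((d:ℝ) + 1 + (c:ℝ))⁻¹))
      Filter.atTop (nhds (Hn c)) := by
    simp_rw [harm_partial c]
    have := (harm_tail_tendsto c).const_sub (Hn c)
    simpa using this
  exact tendsto_nhds_unique ht ht2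

lemma Tf_pointwise (n : ℕ) (p : ℕ × ℕ) :
    Tf n p = (∑ i ∈ Finset.range n, Vf (i + 2) (n - i) p) + Uf (n + 1) p := by
  obtain ⟨d, l⟩ := p
  have hD : (1:ℝ) ≤ (d:ℝ) + 1 := by
    have : (0:ℝ) ≤ (d:ℝ) := Nat.cast_nonneg d
    linarith
  have hL : (1:ℝ) ≤ (l:ℝ) + 1 := by
    have : (0:ℝ) ≤ (l:ℝ) := Nat.cast_nonneg l
    linarith
  have hA := claimA ((d:ℝ) + 1) ((l:ℝ) + 1) hD hL n
  have hKe : ((d:ℝ) + 1) + ((l:ℝ) + 1) = (d:ℝ) + (l:ℝ) + 2 := by ring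
  rw [hKe] at hA
  have hV : ∀ i, Vf (i + 2) (n - i) (d, l)
      = (((d:ℝ) + (l:ℝ) + 2) ^ (i + 2) * ((l:ℝ) + 1) ^ (n - i))⁻¹ := by
    intro i; rfl
  simp only [Tf, Uf, hV]
  rw [hA]
  ring

lemma Vi_summable {n : ℕ} : ∀ i ∈ Finset.range n, Summable (Vf (i + 2) (n - i)) := by
  intro i hi
  rw [Finset.mem_range] at hi
  exact Vf_summable (by omega) (by omega)

lemma Tf_summable {n : ℕ} (hn : 1 ≤ n) : Summable (Tf n) := by
  have : Tf n = fun p => (∑ i ∈ Finset.range n, Vf (i + 2) (n - i) p) + Uf (n + 1) p :=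
    funext (Tf_pointwise n)
  rw [this]
  exact (summable_sum Vi_summable).add (Uf_summable (by omega))

lemma Tf_tsum_split {n : ℕ} (hn : 1 ≤ n) :
    ∑' p, Tf n p
      = (∑ i ∈ Finset.range n, ∑' p, Vf (i + 2) (n - i) p) + ∑' p, Uf (n + 1) p := by
  calc ∑' p, Tf n p
      = ∑' p, ((∑ i ∈ Finset.range n, Vf (i + 2) (n - i) p) + Uf (n + 1) p) :=
        tsum_congr (Tf_pointwise n)
    _ = (∑' p, ∑ i ∈ Finset.range n, Vf (i + 2) (n - i) p) + ∑' p, Uf (n + 1) p :=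
        Summable.tsum_add (summable_sum Vi_summable) (Uf_summable (by omega))
    _ = (∑ i ∈ Finset.range n, ∑' p, Vf (i + 2) (n - i) p) + ∑' p, Uf (n + 1) p := by
        rw [Summable.tsum_finsetSum Vi_summable]

lemma Tf_tsum_eval {n : ℕ} (hn : 1 ≤ n) :
    ∑' p, Tf n p = (∑' p, Wf (n + 1) 1 p) + zeta (n + 2) := by
  set g : ℕ × ℕ → ℝ := fun q => Tf n (q.2, q.1) with hgdef
  have hg : Summable g := prodComm_summable (Tf_summable hn)
  have hgt : ∑' q, g q = ∑' p, Tf n p := prodComm_tsum (Tf n)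
  have inner : ∀ l : ℕ, ∑' d : ℕ, g (l, d) = (((l:ℝ) + 1) ^ (n + 1))⁻¹ * Hn (l + 1) := by
    intro l
    have hpt : ∀ d : ℕ, g (l, d)
        = (((l:ℝ) + 1) ^ (n + 1))⁻¹ * (((d:ℝ) + 1)⁻¹ - ((d:ℝ) + 1 + (((l:ℕ) + 1 : ℕ) : ℝ))⁻¹) := by
      intro d
      show Tf n (d, l) = _
      simp only [Tf]
      push_cast
      have hD0 : (0:ℝ) < (d:ℝ) + 1 := by positivity
      have hL0 : (0:ℝ) < (l:ℝ) + 1 := by positivity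
      have hK0 : (0:ℝ) < (d:ℝ) + (l:ℝ) + 2 := by positivity
      have hLn : ((l:ℝ) + 1) ^ n ≠ 0 := by positivity
      rw [pow_succ]
      field_simp
      ring
    rw [tsum_congr hpt, tsum_mul_left, harm_tsum (l + 1)]
  have fib : ∀ l : ℕ, HasSum (fun d => g (l, d)) ((((l:ℝ) + 1) ^ (n + 1))⁻¹ * Hn (l + 1)) := by
    intro l
    have := (hg.prod_factor l).hasSum
    rwa [inner l] at this
  have H1 : HasSum (fun l : ℕ => (((l:ℝ) + 1) ^ (n + 1))⁻¹ * Hn (l + 1)) (∑' q, g q) :=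
    HasSum.prod_fiberwise hg.hasSum fib
  have hs1 : Summable (fun l : ℕ => (((l:ℝ) + 1) ^ (n + 1))⁻¹ * Hn (l + 1)) := H1.summable
  have hz : Summable (fun l : ℕ => (((l:ℝ) + 1) ^ (n + 2))⁻¹) := zeta_summable (by omega)
  have hsplit : ∀ l : ℕ, (((l:ℝ) + 1) ^ (n + 1))⁻¹ * Hn (l + 1)
      = (((l:ℝ) + 1) ^ (n + 1))⁻¹ * Hn l + (((l:ℝ) + 1) ^ (n + 2))⁻¹ := by
    intro l
    have h1 : Hn (l + 1) = Hn l + ((l:ℝ) + 1)⁻¹ := Finset.sum_range_succ _ l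
    rw [h1, mul_add]
    congr 1
    rw [← mul_inv, ← pow_succ]
  have hs2 : Summable (fun l : ℕ => (((l:ℝ) + 1) ^ (n + 1))⁻¹ * Hn l) := by
    apply Summable.congr (hs1.sub hz)
    intro l
    rw [hsplit l]
    ring
  have hWn : Summable (Wf (n + 1) 1) := Wf_summable (by omega) le_rfl
  have hH : ∀ l : ℕ, (((l:ℝ) + 1) ^ (n + 1))⁻¹ * Hn l = ∑' i : ℕ, Wf (n + 1) 1 (l, i) := by
    intro l
    rw [tsum_eq_sum (s := Finset.range l) (f := fun i => Wf (n + 1) 1 (l, i)) ?side]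
    · unfold Hn
      rw [Finset.mul_sum]
      apply Finset.sum_congr rfl
      intro i hi
      rw [Finset.mem_range] at hi
      show _ = Wf (n + 1) 1 (l, i)
      simp only [Wf]
      rw [if_pos hi, pow_one, mul_inv]
    case side =>
      intro i hi
      rw [Finset.mem_range] at hi
      show Wf (n + 1) 1 (l, i) = 0
      simp only [Wf]
      rw [if_neg (by omega)]
  calc ∑' p, Tf n p = ∑' q, g q := hgt.symm
    _ = ∑' l : ℕ, ((((l:ℝ) + 1) ^ (n + 1))⁻¹ * Hn (l + 1)) := H1.tsum_eq.symm
    _ = ∑' l : ℕ, ((((l:ℝ) + 1) ^ (n + 1))⁻¹ * Hn l + (((l:ℝ) + 1) ^ (n + 2))⁻¹) :=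
        tsum_congr hsplit
    _ = (∑' l : ℕ, (((l:ℝ) + 1) ^ (n + 1))⁻¹ * Hn l) + ∑' l : ℕ, (((l:ℝ) + 1) ^ (n + 2))⁻¹ :=
        Summable.tsum_add hs2 hz
    _ = (∑' l : ℕ, ∑' i : ℕ, Wf (n + 1) 1 (l, i)) + zeta (n + 2) := by
        rw [tsum_congr hH]
        rfl
    _ = (∑' p, Wf (n + 1) 1 p) + zeta (n + 2) := by
        rw [← Summable.tsum_prod' hWn hWn.prod_factor]

lemma sum_theorem {n : ℕ} (hn : 1 ≤ n) :
    ∑ i ∈ Finset.range n, (∑' p, Wf (i + 2) (n - i) p) = zeta (n + 2) := by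
  have h1 := Tf_tsum_split hn
  have h2 := Tf_tsum_eval hn
  have h3 := Uf_tsum (n + 1)
  have h4 : ∑ i ∈ Finset.range n, (∑' p, Vf (i + 2) (n - i) p)
      = ∑ i ∈ Finset.range n, (∑' p, Wf (i + 2) (n - i) p) :=
    Finset.sum_congr rfl (fun i _ => V_tsum_eq_W _ _)
  rw [h2, h3, h4] at h1
  linarith

/-- Euler's identity: for m ≥ 2,
    2ζ(m,1) = mζ(m+1) − ∑_{j=1}^{m−2} ζ(j+1)ζ(m−j). -/
theorem euler_double_zeta (m : ℕ) (hm : 2 ≤ m) :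
    2 * zeta2 m 1 = m * zeta (m + 1) - ∑ j ∈ Finset.Icc 1 (m - 2), zeta (j + 1) * zeta (m - j) := by
  set n := m - 2 with hn
  have hmn : m = n + 2 := by omega
  have hW : Summable (Wf m 1) := Wf_summable hm le_rfl
  have hz2 : zeta2 m 1 = ∑' p, Wf m 1 p := zeta2_eq_W hW
  -- convert the Icc sum to a range sum
  have hIcc : ∑ j ∈ Finset.Icc 1 n, zeta (j + 1) * zeta (m - j)
      = ∑ i ∈ Finset.range n, zeta (i + 2) * zeta (n + 1 - i) := by
    rw [← Finset.Ico_add_one_right_eq_Icc, Finset.sum_Ico_eq_sum_range]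
    apply Finset.sum_congr (by simp)
    intro i hi
    rw [Finset.mem_range] at hi
    have e1 : 1 + i + 1 = i + 2 := by omega
    have e2 : m - (1 + i) = n + 1 - i := by omega
    rw [e1, e2]
  -- stuffle each term
  have hstuffle : ∀ i ∈ Finset.range n, zeta (i + 2) * zeta (n + 1 - i)
      = (∑' p, Wf (i + 2) (n + 1 - i) p) + (∑' p, Wf (n + 1 - i) (i + 2) p) + zeta (m + 1) := by
    intro i hi
    rw [Finset.mem_range] at hi
    have h := stuffle (a := i + 2) (b := n + 1 - i) (by omega) (by omega)
    have e : i + 2 + (n + 1 - i) = m + 1 := by omega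
    rw [e] at h
    exact h
  -- the reflected sum
  have hreflect : ∑ i ∈ Finset.range n, (∑' p, Wf (n + 1 - i) (i + 2) p)
      = ∑ i ∈ Finset.range n, (∑' p, Wf (i + 2) (n + 1 - i) p) := by
    rw [← Finset.sum_range_reflect (fun i => ∑' p, Wf (i + 2) (n + 1 - i) p) n]
    apply Finset.sum_congr rfl
    intro j hj
    rw [Finset.mem_range] at hj
    have e1 : n - 1 - j + 2 = n + 1 - j := by omega
    have e2 : n + 1 - (n - 1 - j) = j + 2 := by omega
    rw [e1, e2]
  -- sum theorem with n+1
  have hsumthm := sum_theorem (n := n + 1) (by omega)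
  rw [Finset.sum_range_succ] at hsumthm
  have e3 : n + 1 - n = 1 := by omega
  have e4 : n + 2 = m := by omega
  rw [e3, e4] at hsumthm
  have e5 : n + 1 + 2 = m + 1 := by omega
  rw [e5] at hsumthm
  -- note for i ∈ range (n+1) exponents: (n+1) - i matches n + 1 - i ✓
  have hrange : ∑ i ∈ Finset.range n, (∑' p, Wf (i + 2) (n + 1 - i) p)
      = zeta (m + 1) - ∑' p, Wf m 1 p := by linarith
  have hfinal : ∑ i ∈ Finset.range n, zeta (i + 2) * zeta (n + 1 - i)
      = 2 * (zeta (m + 1) - ∑' p, Wf m 1 p) + n * zeta (m + 1) := by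
    rw [Finset.sum_congr rfl hstuffle]
    rw [Finset.sum_add_distrib, Finset.sum_add_distrib, hreflect, hrange]
    rw [Finset.sum_const, Finset.card_range, nsmul_eq_mul]
    ring
  have hcast : (m:ℝ) = (n:ℝ) + 2 := by
    rw [hmn]
    push_cast
    ring
  rw [hz2, hIcc, hfinal, hcast]
  ring
end

section
/- ζ(1̄,1̄) = ζ(2̄) + ζ(1̄,1), i.e., Σ_{k>l≥1} (−1)^{k+l}/(k·l) = Σ_{k≥1} (−1)^k/k² + Σ_{k>l≥1} (−1)^k/(k·l). -/
open Filter Topology Finset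

lemma sum_Ico_one (g : ℕ → ℝ) (h0 : g 0 = 0) (k : ℕ) :
    ∑ l ∈ Finset.Ico 1 k, g l = ∑ l ∈ Finset.range k, g l := by
  rw [Finset.range_eq_Ico]
  rcases Nat.eq_zero_or_pos k with rfl | hk
  · simp
  · rw [Finset.sum_eq_sum_Ico_succ_bot hk, h0, zero_add]

lemma square_identity (N : ℕ) :
    2 * ∑ k ∈ Finset.range N,
        (((-1:ℝ)^k * (k:ℝ)⁻¹) * ∑ l ∈ Finset.range k, ((-1:ℝ)^l * (l:ℝ)⁻¹))
      = (∑ k ∈ Finset.range N, (-1:ℝ)^k * (k:ℝ)⁻¹)^2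
        - ∑ k ∈ Finset.range N, ((k:ℝ)⁻¹)^2 := by
  induction N with
  | zero => simp
  | succ n ih =>
    rw [Finset.sum_range_succ, Finset.sum_range_succ,
      Finset.sum_range_succ (f := fun k => ((k:ℝ)⁻¹)^2)]
    have h1 : ((-1:ℝ)^(n*2)) = 1 := by
      rw [pow_mul']; norm_num
    linear_combination ih - ((n:ℝ)⁻¹)^2 * h1

lemma partial_fraction (n : ℕ) :
    ∑ k ∈ Finset.Ico 1 n, ((k:ℝ)⁻¹ * (((n - k : ℕ)):ℝ)⁻¹)
      = 2 * (n:ℝ)⁻¹ * ∑ l ∈ Finset.Ico 1 n, (l:ℝ)⁻¹ := by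
  rcases Nat.eq_zero_or_pos n with rfl | hn
  · simp
  have hrefl : ∑ k ∈ Finset.Ico 1 n, (((n - k : ℕ)):ℝ)⁻¹
      = ∑ l ∈ Finset.Ico 1 n, (l:ℝ)⁻¹ := by
    refine Finset.sum_nbij' (fun k => n - k) (fun k => n - k) ?_ ?_ ?_ ?_ ?_ <;>
      intro k hk <;> simp only [Finset.mem_Ico] at * <;> try omega
  have hstep : ∑ k ∈ Finset.Ico 1 n, ((k:ℝ)⁻¹ * (((n - k : ℕ)):ℝ)⁻¹)
      = ∑ k ∈ Finset.Ico 1 n, (n:ℝ)⁻¹ * ((k:ℝ)⁻¹ + (((n - k : ℕ)):ℝ)⁻¹) := by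
    refine Finset.sum_congr rfl ?_
    intro k hk
    simp only [Finset.mem_Ico] at hk
    have hk0 : (k:ℝ) ≠ 0 := Nat.cast_ne_zero.mpr (by omega)
    have hnk0 : (((n - k : ℕ)):ℝ) ≠ 0 := Nat.cast_ne_zero.mpr (by omega)
    have hn0 : (n:ℝ) ≠ 0 := Nat.cast_ne_zero.mpr (by omega)
    have hadd : (k:ℝ) + (((n - k : ℕ)):ℝ) = (n:ℝ) := by
      have : k + (n - k) = n := by omega
      exact_mod_cast congrArg (Nat.cast : ℕ → ℝ) this
    field_simp
    linear_combination (-1 + (k:ℝ) * (((n - k : ℕ)):ℝ) - (k:ℝ) * (((n - k : ℕ)):ℝ)) * hadd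
  rw [hstep, ← Finset.mul_sum, Finset.sum_add_distrib, hrefl]
  ring

lemma hasSum_neglog {x : ℝ} (hx : |x| < 1) :
    HasSum (fun n : ℕ => (-x)^n * (n:ℝ)⁻¹) (-Real.log (1+x)) := by
  have h := Real.hasSum_pow_div_log_of_abs_lt_one (x := -x) (by rwa [abs_neg])
  have h2 : HasSum (fun n : ℕ => (-x)^(n+1) * (((n+1:ℕ)):ℝ)⁻¹) (-Real.log (1+x)) := by
    have hfun : (fun n : ℕ => (-x)^(n+1) * (((n+1:ℕ)):ℝ)⁻¹)
        = (fun n : ℕ => (-x)^(n+1)/((n:ℝ)+1)) := by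
      funext n; push_cast; rw [div_eq_mul_inv]
    rw [hfun, show (1:ℝ)+x = 1 - -x by ring]
    exact h
  have h3 : HasSum (fun n : ℕ => (-x)^n * (n:ℝ)⁻¹)
      (((-x)^(0:ℕ) * ((0:ℕ):ℝ)⁻¹) + -Real.log (1+x)) := HasSum.zero_add h2
  simpa using h3

lemma summable_norm_term {x : ℝ} (hx : |x| < 1) :
    Summable (fun n : ℕ => ‖(-x)^n * (n:ℝ)⁻¹‖) := by
  refine Summable.of_nonneg_of_le (fun n => norm_nonneg _) (fun n => ?_)
    (summable_geometric_of_lt_one (abs_nonneg x) hx)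
  rw [norm_mul, norm_pow, norm_neg, Real.norm_eq_abs, Real.norm_eq_abs]
  have h1 : |((n:ℝ))⁻¹| ≤ 1 := by
    rw [abs_inv, Nat.abs_cast]
    rcases n with _|m
    · simp
    · exact inv_le_one_of_one_le₀ (by exact_mod_cast Nat.succ_le_succ (Nat.zero_le m))
  exact mul_le_of_le_one_right (pow_nonneg (abs_nonneg x) n) h1

lemma cauchy_term (x : ℝ) (n : ℕ) :
    ∑ k ∈ Finset.range (n+1), (((-x)^k * (k:ℝ)⁻¹) * ((-x)^(n-k) * (((n-k:ℕ)):ℝ)⁻¹))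
      = 2 * ((((-1:ℝ)^n * (n:ℝ)⁻¹) * ∑ l ∈ Finset.range n, (l:ℝ)⁻¹) * x^n) := by
  rw [Finset.sum_range_succ]
  have htop : (((-x)^n * (n:ℝ)⁻¹) * ((-x)^(n-n) * (((n-n:ℕ)):ℝ)⁻¹)) = 0 := by
    simp [Nat.sub_self]
  rw [htop, add_zero]
  rw [← sum_Ico_one (fun k => (((-x)^k * (k:ℝ)⁻¹) * ((-x)^(n-k) * (((n-k:ℕ)):ℝ)⁻¹))) (by simp)]
  have hpt : ∀ k ∈ Finset.Ico 1 n,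
      (((-x)^k * (k:ℝ)⁻¹) * ((-x)^(n-k) * (((n-k:ℕ)):ℝ)⁻¹))
        = (-x)^n * ((k:ℝ)⁻¹ * (((n-k:ℕ)):ℝ)⁻¹) := by
    intro k hk
    simp only [Finset.mem_Ico] at hk
    have hp : (-x)^k * (-x)^(n-k) = (-x)^n := by
      rw [← pow_add]; congr 1; omega
    calc (((-x)^k * (k:ℝ)⁻¹) * ((-x)^(n-k) * (((n-k:ℕ)):ℝ)⁻¹))
        = ((-x)^k * (-x)^(n-k)) * ((k:ℝ)⁻¹ * (((n-k:ℕ)):ℝ)⁻¹) := by ring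
      _ = _ := by rw [hp]
  rw [Finset.sum_congr rfl hpt, ← Finset.mul_sum, partial_fraction,
    sum_Ico_one (fun l => ((l:ℝ))⁻¹) (by simp), neg_pow]
  ring

/-- ζ(1̄,1̄) = ζ(2̄) + ζ(1̄,1): the conditionally convergent double Euler sums
are interpreted as limits of partial sums (over the leading index). -/
theorem zeta_1bar_1bar (a b : ℝ)
    (ha : Tendsto (fun N : ℕ => ∑ k ∈ Finset.Icc 1 N, ∑ l ∈ Finset.Ico 1 k,
        (-1 : ℝ) ^ (k + l) * ((k : ℝ) * (l : ℝ))⁻¹) atTop (𝓝 a))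
    (hb : Tendsto (fun N : ℕ => ∑ k ∈ Finset.Icc 1 N, ∑ l ∈ Finset.Ico 1 k,
        (-1 : ℝ) ^ k * ((k : ℝ) * (l : ℝ))⁻¹) atTop (𝓝 b)) :
    a = (∑' k : ℕ, (-1 : ℝ) ^ (k + 1) * (((k : ℝ) + 1) ^ 2)⁻¹) + b := by
  -- abbreviations
  set e : ℕ → ℝ := fun k => (-1:ℝ)^k * (k:ℝ)⁻¹ with he
  set ψA : ℕ → ℝ := fun k => e k * ∑ l ∈ Finset.range k, e l with hψA
  set ψB : ℕ → ℝ := fun k => e k * ∑ l ∈ Finset.range k, (l:ℝ)⁻¹ with hψB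
  -- rewrite the partial sums of `ha`
  have htermA : ∀ k : ℕ, (∑ l ∈ Finset.Ico 1 k, (-1:ℝ)^(k+l) * ((k:ℝ)*(l:ℝ))⁻¹) = ψA k := by
    intro k
    simp only [hψA, he]
    rw [← sum_Ico_one (fun l => (-1:ℝ)^l * (l:ℝ)⁻¹) (by simp), Finset.mul_sum]
    refine Finset.sum_congr rfl fun l hl => ?_
    rw [pow_add, mul_inv]; ring
  have htermB : ∀ k : ℕ, (∑ l ∈ Finset.Ico 1 k, (-1:ℝ)^k * ((k:ℝ)*(l:ℝ))⁻¹) = ψB k := by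
    intro k
    simp only [hψB, he]
    rw [← sum_Ico_one (fun l => ((l:ℝ))⁻¹) (by simp), Finset.mul_sum]
    refine Finset.sum_congr rfl fun l hl => ?_
    rw [mul_inv]; ring
  have hψA0 : ψA 0 = 0 := by simp [hψA]
  have hψB0 : ψB 0 = 0 := by simp [hψB]
  have hAeq : ∀ N : ℕ, (∑ k ∈ Finset.Icc 1 N, ∑ l ∈ Finset.Ico 1 k,
      (-1:ℝ)^(k+l) * ((k:ℝ)*(l:ℝ))⁻¹) = ∑ k ∈ Finset.range (N+1), ψA k := by
    intro N
    rw [← Finset.Ico_add_one_right_eq_Icc, ← sum_Ico_one ψA hψA0]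
    exact Finset.sum_congr rfl fun k _ => htermA k
  have hBeq : ∀ N : ℕ, (∑ k ∈ Finset.Icc 1 N, ∑ l ∈ Finset.Ico 1 k,
      (-1:ℝ)^k * ((k:ℝ)*(l:ℝ))⁻¹) = ∑ k ∈ Finset.range (N+1), ψB k := by
    intro N
    rw [← Finset.Ico_add_one_right_eq_Icc, ← sum_Ico_one ψB hψB0]
    exact Finset.sum_congr rfl fun k _ => htermB k
  have hA : Tendsto (fun N => ∑ k ∈ Finset.range N, ψA k) atTop (𝓝 a) :=
    (tendsto_add_atTop_iff_nat 1).mp (ha.congr hAeq)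
  have hB : Tendsto (fun N => ∑ k ∈ Finset.range N, ψB k) atTop (𝓝 b) :=
    (tendsto_add_atTop_iff_nat 1).mp (hb.congr hBeq)
  -- convergence of the alternating harmonic series
  have hanti : Antitone (fun i : ℕ => ((i:ℝ)+1)⁻¹) := by
    intro m n h
    have hmn : (m:ℝ) ≤ (n:ℝ) := by exact_mod_cast h
    dsimp only
    rw [inv_eq_one_div, inv_eq_one_div]
    exact one_div_le_one_div_of_le (by positivity) (by linarith)
  have htend0 : Tendsto (fun i : ℕ => ((i:ℝ)+1)⁻¹) atTop (𝓝 0) := by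
    simpa [one_div] using tendsto_one_div_add_atTop_nhds_zero_nat (𝕜 := ℝ)
  obtain ⟨l0, hl0⟩ := hanti.tendsto_alternating_series_of_tendsto_zero htend0
  have hshift : ∀ N, ∑ k ∈ Finset.range (N+1), e k
      = -(∑ i ∈ Finset.range N, (-1:ℝ)^i * ((i:ℝ)+1)⁻¹) := by
    intro N
    rw [Finset.sum_range_succ']
    have hterm : ∀ i : ℕ, e (i+1) = -((-1:ℝ)^i * ((i:ℝ)+1)⁻¹) := by
      intro i; rw [he]; push_cast; ring
    rw [Finset.sum_congr rfl (fun i _ => hterm i), Finset.sum_neg_distrib]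
    simp [he]
  have hu : Tendsto (fun N => ∑ k ∈ Finset.range N, e k) atTop (𝓝 (-l0)) :=
    (tendsto_add_atTop_iff_nat 1).mp (hl0.neg.congr fun N => (hshift N).symm)
  -- Abel's limit theorem to identify -l0 = -log 2
  have habelU := Real.tendsto_tsum_powerSeries_nhdsWithin_lt hu
  have hIoo : Set.Ioo (0:ℝ) 1 ∈ 𝓝[<] (1:ℝ) :=
    Ioo_mem_nhdsLT_of_mem (by norm_num : (1:ℝ) ∈ Set.Ioc (0:ℝ) 1)
  have htsU : ∀ x ∈ Set.Ioo (0:ℝ) 1, (∑' n : ℕ, e n * x^n) = -Real.log (1+x) := by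
    intro x hx
    have hax : |x| < 1 := by rw [abs_of_pos hx.1]; exact hx.2
    have hfun : (fun n : ℕ => e n * x^n) = fun n : ℕ => (-x)^n * (n:ℝ)⁻¹ := by
      funext n; rw [he, neg_pow]; ring
    rw [hfun]
    exact (hasSum_neglog hax).tsum_eq
  have hlogC : Tendsto (fun x : ℝ => -Real.log (1+x)) (𝓝[<] (1:ℝ)) (𝓝 (-Real.log 2)) := by
    have hc : ContinuousAt (fun x : ℝ => -Real.log (1+x)) 1 := by
      have h1 : ContinuousAt (fun x : ℝ => 1 + x) 1 := by fun_prop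
      exact ((Real.continuousAt_log (by norm_num)).comp h1).neg
    have := hc.tendsto.mono_left (nhdsWithin_le_nhds (s := Set.Iio (1:ℝ)))
    simpa [show (1:ℝ)+1 = 2 by norm_num] using this
  have hl0val : -l0 = -Real.log 2 := by
    refine tendsto_nhds_unique (habelU.congr' ?_) hlogC
    filter_upwards [hIoo] with x hx using htsU x hx
  -- Abel's limit theorem for b
  have habelB := Real.tendsto_tsum_powerSeries_nhdsWithin_lt hB
  have htsB : ∀ x ∈ Set.Ioo (0:ℝ) 1, (∑' n : ℕ, ψB n * x^n) = (Real.log (1+x))^2/2 := by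
    intro x hx
    have hax : |x| < 1 := by rw [abs_of_pos hx.1]; exact hx.2
    have hnorm := summable_norm_term hax
    have hprod := hasSum_sum_range_mul_of_summable_norm hnorm hnorm
    rw [(hasSum_neglog hax).tsum_eq] at hprod
    have hfun : (fun n : ℕ => ∑ k ∈ Finset.range (n+1),
        (((-x)^k * (k:ℝ)⁻¹) * ((-x)^(n-k) * (((n-k:ℕ)):ℝ)⁻¹)))
        = fun n : ℕ => 2 * (ψB n * x^n) := by
      funext n
      rw [cauchy_term x n, hψB, he]
    rw [hfun] at hprod
    have h4 := hprod.div_const 2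
    have hfun2 : (fun n : ℕ => 2 * (ψB n * x^n) / 2) = fun n : ℕ => ψB n * x^n := by
      funext n; ring
    rw [hfun2] at h4
    rw [h4.tsum_eq]; ring
  have hlogC2 : Tendsto (fun x : ℝ => (Real.log (1+x))^2/2) (𝓝[<] (1:ℝ))
      (𝓝 ((Real.log 2)^2/2)) := by
    have hc : ContinuousAt (fun x : ℝ => (Real.log (1+x))^2/2) 1 := by
      have h1 : ContinuousAt (fun x : ℝ => 1 + x) 1 := by fun_prop
      exact (((Real.continuousAt_log (by norm_num)).comp h1).pow 2).div_const 2
    have := hc.tendsto.mono_left (nhdsWithin_le_nhds (s := Set.Iio (1:ℝ)))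
    simpa [show (1:ℝ)+1 = 2 by norm_num] using this
  have hbval : b = (Real.log 2)^2/2 := by
    refine tendsto_nhds_unique (habelB.congr' ?_) hlogC2
    filter_upwards [hIoo] with x hx using htsB x hx
  -- the sum of 1/k^2
  have hZsummable : Summable (fun k : ℕ => ((k:ℝ)⁻¹)^2) := by
    have h := (Real.summable_one_div_nat_pow (p := 2)).mpr (by norm_num)
    have hfun : (fun n : ℕ => 1/(n:ℝ)^2) = fun k : ℕ => ((k:ℝ)⁻¹)^2 := by
      funext n; rw [one_div, inv_pow]
    rwa [hfun] at h
  set Z : ℝ := ∑' k : ℕ, ((k:ℝ)⁻¹)^2 with hZdef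
  have hZsum : HasSum (fun k : ℕ => ((k:ℝ)⁻¹)^2) Z := hZsummable.hasSum
  have hH2 : Tendsto (fun N => ∑ k ∈ Finset.range N, ((k:ℝ)⁻¹)^2) atTop (𝓝 Z) :=
    hZsum.tendsto_sum_nat
  -- identify 2a
  have h2a : 2*a = (-l0)^2 - Z := by
    refine tendsto_nhds_unique ((hA.const_mul 2).congr fun N => ?_) ((hu.pow 2).sub hH2)
    simpa [hψA, he] using square_identity N
  -- compute the alternating zeta(2) value: S = -Z/2
  have hg : HasSum (fun k : ℕ => ((((k:ℝ)+1))^2)⁻¹) Z := by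
    have h1 : HasSum (fun n : ℕ => ((((n+1:ℕ)):ℝ)⁻¹)^2) Z := by
      rw [hasSum_nat_add_iff (f := fun k : ℕ => ((k:ℝ)⁻¹)^2) 1]
      simpa using hZsum
    have hfun : (fun n : ℕ => ((((n+1:ℕ)):ℝ)⁻¹)^2) = fun n : ℕ => ((((n:ℝ)+1))^2)⁻¹ := by
      funext n; push_cast; rw [inv_pow]
    rwa [hfun] at h1
  have hodd : HasSum (fun m : ℕ => ((((2*m+1:ℕ):ℝ)+1)^2)⁻¹) (Z/4) := by
    have h := hg.mul_left (4⁻¹:ℝ)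
    have hfun : (fun m : ℕ => (4⁻¹:ℝ) * ((((m:ℝ)+1))^2)⁻¹)
        = fun m : ℕ => ((((2*m+1:ℕ):ℝ)+1)^2)⁻¹ := by
      funext m; push_cast
      rw [show ((2*(m:ℝ)+1)+1) = 2*((m:ℝ)+1) by ring, mul_pow, mul_inv]
      norm_num
    rw [hfun] at h
    have : (4⁻¹:ℝ) * Z = Z/4 := by ring
    rwa [this] at h
  have hEsummable : Summable (fun m : ℕ => ((((2*m:ℕ):ℝ)+1)^2)⁻¹) :=
    hg.summable.comp_injective (fun p q hpq => by omega)
  set E : ℝ := ∑' m : ℕ, ((((2*m:ℕ):ℝ)+1)^2)⁻¹ with hEdef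
  have hE : HasSum (fun m : ℕ => ((((2*m:ℕ):ℝ)+1)^2)⁻¹) E := hEsummable.hasSum
  have hZsplit : HasSum (fun k : ℕ => ((((k:ℝ)+1))^2)⁻¹) (E + Z/4) :=
    HasSum.even_add_odd hE hodd
  have hEZ : E + Z/4 = Z := hZsplit.unique hg
  have hfeven : HasSum (fun m : ℕ => (-1:ℝ)^(2*m+1) * ((((2*m:ℕ):ℝ)+1)^2)⁻¹) (-E) := by
    have hfun : (fun m : ℕ => (-1:ℝ)^(2*m+1) * ((((2*m:ℕ):ℝ)+1)^2)⁻¹)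
        = fun m : ℕ => -(((((2*m:ℕ):ℝ)+1)^2)⁻¹) := by
      funext m; rw [pow_succ, pow_mul]; norm_num
    rw [hfun]; exact hE.neg
  have hfodd : HasSum (fun m : ℕ => (-1:ℝ)^(2*m+1+1) * ((((2*m+1:ℕ):ℝ)+1)^2)⁻¹) (Z/4) := by
    have hfun : (fun m : ℕ => (-1:ℝ)^(2*m+1+1) * ((((2*m+1:ℕ):ℝ)+1)^2)⁻¹)
        = fun m : ℕ => ((((2*m+1:ℕ):ℝ)+1)^2)⁻¹ := by
      funext m; rw [show 2*m+1+1 = 2*(m+1) by ring, pow_mul]; norm_num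
    rw [hfun]; exact hodd
  have hS : HasSum (fun k : ℕ => (-1:ℝ)^(k+1) * (((k:ℝ)+1)^2)⁻¹) (-E + Z/4) :=
    HasSum.even_add_odd (f := fun k : ℕ => (-1:ℝ)^(k+1) * (((k:ℝ)+1)^2)⁻¹) hfeven hfodd
  rw [hS.tsum_eq]
  -- final arithmetic
  have hl0' : l0 = Real.log 2 := by linarith [neg_inj.mp hl0val]
  rw [hl0'] at h2a
  have : (-Real.log 2)^2 = (Real.log 2)^2 := by ring
  rw [this] at h2a
  linarith [h2a, hbval, hEZ]
end

section
/- 2·ζ(1̄,1) = (ln 2)², i.e., 2·Σ_{k>l≥1} (−1)^k/(k·l) = (ln 2)². -/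
open Filter Topology Finset

private noncomputable def Hsum (m : ℕ) : ℝ := ∑ i ∈ range m, ((i : ℝ) + 1)⁻¹

private noncomputable def F (n : ℕ) : ℝ :=
  ∑ l ∈ Finset.Ico 1 n, (-1 : ℝ) ^ n * ((n : ℝ) * (l : ℝ))⁻¹

private lemma inv_mul_inv_eq (A B : ℝ) (hA : A ≠ 0) (hB : B ≠ 0) (hAB : A + B ≠ 0) :
    A⁻¹ * B⁻¹ = (A + B)⁻¹ * (A⁻¹ + B⁻¹) := by
  field_simp
  ring

private lemma partial_frac (n : ℕ) :
    ∑ k ∈ range (n + 1), ((k : ℝ) + 1)⁻¹ * (((n - k : ℕ) : ℝ) + 1)⁻¹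
      = 2 * ((n : ℝ) + 2)⁻¹ * Hsum (n + 1) := by
  have h1 : ∀ k ∈ range (n + 1),
      ((k : ℝ) + 1)⁻¹ * (((n - k : ℕ) : ℝ) + 1)⁻¹
        = ((n : ℝ) + 2)⁻¹ * (((k : ℝ) + 1)⁻¹ + (((n - k : ℕ) : ℝ) + 1)⁻¹) := by
    intro k hk
    have hkn : k ≤ n := Nat.lt_succ_iff.mp (mem_range.mp hk)
    have hcast : ((n - k : ℕ) : ℝ) = (n : ℝ) - k := by
      push_cast [Nat.cast_sub hkn]; ring
    have hAB : ((k : ℝ) + 1) + (((n - k : ℕ) : ℝ) + 1) = (n : ℝ) + 2 := by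
      rw [hcast]; ring
    rw [inv_mul_inv_eq _ _ (by positivity) (by positivity) (by rw [hAB]; positivity), hAB]
  rw [Finset.sum_congr rfl h1, ← Finset.mul_sum, Finset.sum_add_distrib]
  have h2 : ∑ k ∈ range (n + 1), (((n - k : ℕ) : ℝ) + 1)⁻¹
      = ∑ k ∈ range (n + 1), ((k : ℝ) + 1)⁻¹ := by
    have := Finset.sum_range_reflect (fun i => ((i : ℝ) + 1)⁻¹) (n + 1)
    simpa using this
  rw [h2, Hsum]
  ring

private lemma F_eq (n : ℕ) :
    F (n + 2) = (-1 : ℝ) ^ (n + 2) * ((n : ℝ) + 2)⁻¹ * Hsum (n + 1) := by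
  rw [F, Finset.sum_Ico_eq_sum_range]
  rw [show n + 2 - 1 = n + 1 from rfl]
  rw [Hsum, Finset.mul_sum]
  apply Finset.sum_congr rfl
  intro i hi
  push_cast
  rw [mul_inv]
  ring

private lemma F_zero : F 0 = 0 := by simp [F]

private lemma F_one : F 1 = 0 := by simp [F]

private lemma hasSum_F (x : ℝ) (hx : |x| < 1) :
    HasSum (fun n : ℕ => F n * x ^ n) (Real.log (1 + x) ^ 2 / 2) := by
  have hnx : |(-x)| < 1 := by rwa [abs_neg]
  have hlog := Real.hasSum_pow_div_log_of_abs_lt_one hnx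
  rw [sub_neg_eq_add] at hlog
  set g : ℕ → ℝ := fun n => (-x) ^ (n + 1) / ((n : ℝ) + 1) with hg
  have hnorm : Summable fun n => ‖g n‖ := by
    have hb : ∀ n : ℕ, ‖g n‖ ≤ |x| ^ n * |x| := by
      intro n
      rw [hg]
      simp only [norm_div, norm_pow, norm_neg, Real.norm_eq_abs]
      rw [← pow_succ]
      have h1 : (0 : ℝ) < |((n : ℝ) + 1)| := by positivity
      rw [div_le_iff₀ h1]
      nth_rw 1 [← mul_one (|x| ^ (n + 1))]
      apply mul_le_mul_of_nonneg_left _ (by positivity)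
      rw [abs_of_nonneg (by positivity)]
      linarith [Nat.cast_nonneg (α := ℝ) n]
    exact Summable.of_nonneg_of_le (fun n => norm_nonneg _) hb
      ((summable_geometric_of_lt_one (abs_nonneg x) hx).mul_right _)
  have hprod := hasSum_sum_range_mul_of_summable_norm hnorm hnorm
  rw [hlog.tsum_eq] at hprod
  have hterm : ∀ n : ℕ, ∑ k ∈ range (n + 1), g k * g (n - k)
      = 2 * (F (n + 2) * x ^ (n + 2)) := by
    intro n
    have h1 : ∀ k ∈ range (n + 1), g k * g (n - k)
        = (-x) ^ (n + 2) * (((k : ℝ) + 1)⁻¹ * (((n - k : ℕ) : ℝ) + 1)⁻¹) := by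
      intro k hk
      have hkn : k ≤ n := Nat.lt_succ_iff.mp (mem_range.mp hk)
      rw [hg]
      simp only
      rw [div_mul_div_comm, ← pow_add]
      have h2 : k + 1 + (n - k + 1) = n + 2 := by omega
      rw [h2, div_eq_mul_inv, mul_inv]
    rw [Finset.sum_congr rfl h1, ← Finset.mul_sum, partial_frac, F_eq n]
    have h3 : (-x) ^ (n + 2) = (-1 : ℝ) ^ (n + 2) * x ^ (n + 2) := by
      rw [← neg_one_mul, mul_pow]
    rw [h3]
    ring
  have hprod2 : HasSum (fun n : ℕ => F (n + 2) * x ^ (n + 2))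
      (Real.log (1 + x) ^ 2 / 2) := by
    have h4 := hprod.div_const 2
    have h5 : (fun n : ℕ => (∑ k ∈ range (n + 1), g k * g (n - k)) / 2)
        = fun n : ℕ => F (n + 2) * x ^ (n + 2) := by
      funext n; rw [hterm n]; ring
    rw [h5] at h4
    have h6 : -Real.log (1 + x) * -Real.log (1 + x) / 2 = Real.log (1 + x) ^ 2 / 2 := by
      ring
    rwa [h6] at h4
  have := (hasSum_nat_add_iff (f := fun n : ℕ => F n * x ^ n) 2).mp hprod2
  simpa [Finset.sum_range_succ, F_zero, F_one] using this

/-- 2·ζ(1̄,1) = (ln 2)², where ζ(1̄,1) = ∑_{k>l≥1} (−1)^k/(k·l) is interpreted as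
the limit of partial sums (over the leading index). -/
theorem two_zeta_1bar_1 (a : ℝ)
    (ha : Tendsto (fun N : ℕ => ∑ k ∈ Finset.Icc 1 N, ∑ l ∈ Finset.Ico 1 k,
        (-1 : ℝ) ^ k * ((k : ℝ) * (l : ℝ))⁻¹) atTop (𝓝 a)) :
    2 * a = Real.log 2 ^ 2 := by
  have h0 : Tendsto (fun n : ℕ => ∑ i ∈ Finset.range n, F i) atTop (𝓝 a) := by
    rw [← tendsto_add_atTop_iff_nat 1]
    have heq : ∀ N : ℕ, ∑ i ∈ Finset.range (N + 1), F i
        = ∑ k ∈ Finset.Icc 1 N, ∑ l ∈ Finset.Ico 1 k,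
            (-1 : ℝ) ^ k * ((k : ℝ) * (l : ℝ))⁻¹ := by
      intro N
      rw [Finset.sum_range_succ', F_zero, add_zero]
      rw [show Finset.Icc 1 N = Finset.Ico 1 (N + 1) from rfl]
      rw [Finset.sum_Ico_eq_sum_range]
      rw [show N + 1 - 1 = N from rfl]
      apply Finset.sum_congr rfl
      intro i _
      rw [F, add_comm 1 i]
    exact ha.congr fun N => (heq N).symm
  have abel := Real.tendsto_tsum_powerSeries_nhdsWithin_lt h0
  have habel2 : Tendsto (fun x : ℝ => Real.log (1 + x) ^ 2 / 2) (𝓝[<] (1 : ℝ)) (𝓝 a) := by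
    apply abel.congr'
    filter_upwards [Ioo_mem_nhdsLT_of_mem (show (1 : ℝ) ∈ Set.Ioc (-1) 1 by norm_num)]
      with x hx
    have hx1 : |x| < 1 := abs_lt.mpr ⟨hx.1, hx.2⟩
    exact (hasSum_F x hx1).tsum_eq
  have hcont : Tendsto (fun x : ℝ => Real.log (1 + x) ^ 2 / 2) (𝓝[<] (1 : ℝ))
      (𝓝 (Real.log 2 ^ 2 / 2)) := by
    have c1 : ContinuousAt (fun x : ℝ => 1 + x) 1 := by fun_prop
    have c2 : ContinuousAt (fun x : ℝ => Real.log (1 + x)) 1 :=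
      (Real.continuousAt_log (by norm_num)).comp c1
    have c3 : ContinuousAt (fun x : ℝ => Real.log (1 + x) ^ 2 / 2) 1 := by
      exact (c2.pow 2).div_const 2
    have := c3.tendsto.mono_left (nhdsWithin_le_nhds (s := Set.Iio (1 : ℝ)))
    norm_num at this
    exact this
  have hfin := tendsto_nhds_unique habel2 hcont
  rw [hfin]
  ring
end

section
/- ζ(3) = 8·ζ(2̄,1), i.e., Σ_{k≥1} 1/k³ = 8·Σ_{k>l≥1} (−1)^k/(k²·l). -/
open Finset

noncomputable def Hh (n : ℕ) : ℝ := ∑ j ∈ Finset.range n, ((j:ℝ)+1)⁻¹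

lemma Hh_succ (n : ℕ) : Hh (n+1) = Hh n + ((n:ℝ)+1)⁻¹ := by
  simp [Hh, Finset.sum_range_succ]

lemma Hh_nonneg (n : ℕ) : 0 ≤ Hh n := by
  apply Finset.sum_nonneg; intro i _; positivity

lemma Hh_le (n : ℕ) : Hh n ≤ 2 * Real.sqrt n := by
  induction n with
  | zero => simp [Hh]
  | succ n ih =>
    rw [Hh_succ]
    have h1 : Real.sqrt n ^ 2 = n := Real.sq_sqrt (by positivity)
    have h2 : Real.sqrt (n+1) ^ 2 = (n:ℝ)+1 := by
      rw [← Real.sq_sqrt (x := (n:ℝ)+1) (by positivity)]; norm_num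
    have h3 : 0 ≤ Real.sqrt n := Real.sqrt_nonneg _
    have h4 : 0 ≤ Real.sqrt (n+1) := Real.sqrt_nonneg _
    have key : ((n:ℝ)+1)⁻¹ ≤ 2 * (Real.sqrt (n+1) - Real.sqrt n) := by
      rw [inv_le_iff_one_le_mul₀ (by positivity)]
      nlinarith [sq_nonneg (Real.sqrt (n+1) - Real.sqrt n), sq_nonneg (Real.sqrt (n+1) + Real.sqrt n), sq_nonneg (Real.sqrt (n+1) * Real.sqrt n - 1)]
    push_cast
    linarith

lemma summable_p32 : Summable (fun n : ℕ => (((n:ℝ)+1) ^ (3/2 : ℝ))⁻¹) := by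
  have h : Summable (fun n : ℕ => ((n:ℝ) ^ (3/2 : ℝ))⁻¹) :=
    (Real.summable_nat_rpow_inv).2 (by norm_num)
  have := (summable_nat_add_iff 1).2 h
  simpa using this

-- the basic kernel f
noncomputable def ff (m n : ℕ) : ℝ := (((m:ℝ)+1) * (((n:ℝ)+1) * ((m:ℝ)+(n:ℝ)+2)))⁻¹

lemma ff_nonneg (m n : ℕ) : 0 ≤ ff m n := by unfold ff; positivity

lemma ff_le (m n : ℕ) : ff m n ≤ (((m:ℝ)+1) ^ (3/2:ℝ))⁻¹ * (((n:ℝ)+1) ^ (3/2:ℝ))⁻¹ := by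
  set a : ℝ := (m:ℝ)+1 with ha
  set b : ℝ := (n:ℝ)+1 with hb
  have hA : (0:ℝ) < a := by positivity
  have hB : (0:ℝ) < b := by positivity
  have h32 : ∀ x : ℝ, 0 < x → x ^ (3/2:ℝ) = x * Real.sqrt x := by
    intro x hx
    rw [Real.sqrt_eq_rpow, ← Real.rpow_one_add' hx.le (by norm_num : (1:ℝ) + 1/2 ≠ 0)]
    norm_num
  rw [← mul_inv]
  rw [ff]
  have hab : (m:ℝ)+(n:ℝ)+2 = a + b := by rw [ha, hb]; ring
  rw [hab]
  apply inv_anti₀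
  · rw [h32 a hA, h32 b hB]; positivity
  · rw [h32 a hA, h32 b hB]
    have hs : Real.sqrt a * Real.sqrt b ≤ a + b := by
      nlinarith [sq_nonneg (Real.sqrt a - Real.sqrt b), Real.sq_sqrt hA.le, Real.sq_sqrt hB.le, Real.sqrt_nonneg a, Real.sqrt_nonneg b]
    calc a * Real.sqrt a * (b * Real.sqrt b) = (a*b) * (Real.sqrt a * Real.sqrt b) := by ring
    _ ≤ (a*b) * (a+b) := by
        apply mul_le_mul_of_nonneg_left hs (by positivity)
    _ = a * (b * (a+b)) := by ring

lemma summable_ff : Summable (fun p : ℕ × ℕ => ff p.1 p.2) := by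
  have hs : Summable (fun p : ℕ × ℕ =>
      (((p.1:ℝ)+1) ^ (3/2:ℝ))⁻¹ * (((p.2:ℝ)+1) ^ (3/2:ℝ))⁻¹) :=
    summable_p32.mul_of_nonneg summable_p32 (fun n => by positivity) (fun n => by positivity)
  exact Summable.of_nonneg_of_le (fun p => ff_nonneg p.1 p.2) (fun p => ff_le p.1 p.2) hs

lemma sum_shift (m N : ℕ) :
    ∑ n ∈ Finset.range N, ((m:ℝ)+(n:ℝ)+2)⁻¹ = Hh (N+m+1) - Hh (m+1) := by
  have h1 : Hh (N+m+1) - Hh (m+1) = ∑ j ∈ Finset.Ico (m+1) (N+m+1), ((j:ℝ)+1)⁻¹ := by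
    rw [eq_comm, Finset.sum_Ico_eq_sub _ (by omega)]
    rfl
  rw [h1, Finset.sum_Ico_eq_sum_range]
  have : N + m + 1 - (m+1) = N := by omega
  rw [this]
  apply Finset.sum_congr rfl
  intro n _
  push_cast
  ring_nf

lemma tendsto_tail (m : ℕ) :
    Filter.Tendsto (fun N : ℕ => Hh (N+m+1) - Hh N) Filter.atTop (nhds 0) := by
  have h0 : ∀ N : ℕ, 0 ≤ Hh (N+m+1) - Hh N := by
    intro N
    have : Hh N ≤ Hh (N+m+1) := by
      unfold Hh
      apply Finset.sum_le_sum_of_subset_of_nonneg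
      · exact Finset.range_subset_range.2 (by omega)
      · intro i _ _; positivity
    linarith
  have hb : ∀ N : ℕ, Hh (N+m+1) - Hh N ≤ ((m:ℝ)+1) * ((N:ℝ)+1)⁻¹ := by
    intro N
    have h1 : Hh (N+m+1) - Hh N = ∑ j ∈ Finset.Ico N (N+m+1), ((j:ℝ)+1)⁻¹ := by
      rw [eq_comm, Finset.sum_Ico_eq_sub _ (by omega)]
      rfl
    rw [h1]
    calc ∑ j ∈ Finset.Ico N (N+m+1), ((j:ℝ)+1)⁻¹
        ≤ ∑ _j ∈ Finset.Ico N (N+m+1), ((N:ℝ)+1)⁻¹ := by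
          apply Finset.sum_le_sum
          intro j hj
          have hj' := (Finset.mem_Ico.1 hj).1
          apply inv_anti₀ (by positivity)
          have : (N:ℝ) ≤ (j:ℝ) := by exact_mod_cast hj'
          linarith
      _ = ((m:ℝ)+1) * ((N:ℝ)+1)⁻¹ := by
          rw [Finset.sum_const, Nat.card_Ico]
          have : N + m + 1 - N = m + 1 := by omega
          rw [this]
          push_cast
          ring
  have hg : Filter.Tendsto (fun N : ℕ => ((m:ℝ)+1) * ((N:ℝ)+1)⁻¹) Filter.atTop (nhds 0) := by
    have h2 := tendsto_one_div_add_atTop_nhds_zero_nat.const_mul ((m:ℝ)+1)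
    simpa [one_div] using h2
  exact squeeze_zero h0 hb hg

lemma hasSum_tele (m : ℕ) :
    HasSum (fun n : ℕ => ((n:ℝ)+1)⁻¹ - ((m:ℝ)+(n:ℝ)+2)⁻¹) (Hh (m+1)) := by
  rw [hasSum_iff_tendsto_nat_of_nonneg]
  · have heq : ∀ N : ℕ, ∑ n ∈ Finset.range N, (((n:ℝ)+1)⁻¹ - ((m:ℝ)+(n:ℝ)+2)⁻¹)
        = Hh (m+1) - (Hh (N+m+1) - Hh N) := by
      intro N
      rw [Finset.sum_sub_distrib, sum_shift]
      have : ∑ n ∈ Finset.range N, ((n:ℝ)+1)⁻¹ = Hh N := rfl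
      rw [this]; ring
    simp_rw [heq]
    have := (tendsto_tail m).const_sub (Hh (m+1))
    simpa using this
  · intro n
    have h1 : ((n:ℝ)+1) ≤ ((m:ℝ)+(n:ℝ)+2) := by
      have : (0:ℝ) ≤ m := Nat.cast_nonneg m
      linarith
    have := inv_anti₀ (by positivity : (0:ℝ) < (n:ℝ)+1) h1
    linarith

lemma ff_eq (m n : ℕ) :
    ff m n = ((((m:ℝ)+1)^2)⁻¹) * (((n:ℝ)+1)⁻¹ - ((m:ℝ)+(n:ℝ)+2)⁻¹) := by
  have h1 : (0:ℝ) < (n:ℝ)+1 := by positivity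
  have h2 : (0:ℝ) < (m:ℝ)+(n:ℝ)+2 := by positivity
  have h3 : (0:ℝ) < (m:ℝ)+1 := by positivity
  rw [ff]
  field_simp
  ring

lemma hasSum_ff_row (m : ℕ) :
    HasSum (fun n : ℕ => ff m n) (Hh (m+1) * (((m:ℝ)+1)^2)⁻¹) := by
  have := (hasSum_tele m).mul_left ((((m:ℝ)+1)^2)⁻¹)
  rw [mul_comm]
  simpa [← ff_eq m] using this

lemma abs_m1_pow (n : ℕ) : |(-1:ℝ)^n| = 1 := by
  rw [abs_pow]; simp

-- single sequences
noncomputable def bb (k : ℕ) : ℝ := (((k:ℝ)+1)^3)⁻¹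
noncomputable def gu (m : ℕ) : ℝ := Hh (m+1) * (((m:ℝ)+1)^2)⁻¹
noncomputable def gt' (m : ℕ) : ℝ := (-1:ℝ)^(m+1) * gu m
noncomputable def wseq (k : ℕ) : ℝ := (-1:ℝ)^(k+1) * bb k

lemma summable_bb : Summable bb := by
  have h : Summable (fun n : ℕ => ((n:ℝ) ^ (3:ℕ))⁻¹) :=
    (Real.summable_nat_pow_inv).2 (by norm_num)
  have := (summable_nat_add_iff 1).2 h
  unfold bb
  simpa using this

lemma gu_nonneg (m : ℕ) : 0 ≤ gu m := by
  unfold gu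
  have := Hh_nonneg (m+1)
  positivity

lemma gu_le (m : ℕ) : gu m ≤ 2 * (((m:ℝ)+1) ^ (3/2:ℝ))⁻¹ := by
  unfold gu
  have h1 : Hh (m+1) ≤ 2 * Real.sqrt ((m:ℝ)+1) := by
    have := Hh_le (m+1); push_cast at this ⊢; linarith
  have h2 : (0:ℝ) < (m:ℝ)+1 := by positivity
  have hs : 0 < Real.sqrt ((m:ℝ)+1) := Real.sqrt_pos.2 h2
  have e1 : ((m:ℝ)+1) ^ (3/2:ℝ) * Real.sqrt ((m:ℝ)+1) = ((m:ℝ)+1)^2 := by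
    rw [Real.sqrt_eq_rpow, ← Real.rpow_add h2]
    norm_num
  have h3 : (((m:ℝ)+1) ^ (3/2:ℝ))⁻¹ = Real.sqrt ((m:ℝ)+1) * (((m:ℝ)+1)^2)⁻¹ := by
    rw [← e1, mul_inv]
    field_simp
  rw [h3]
  have h4 : (0:ℝ) ≤ (((m:ℝ)+1)^2)⁻¹ := by positivity
  calc Hh (m+1) * (((m:ℝ)+1)^2)⁻¹ ≤ (2 * Real.sqrt ((m:ℝ)+1)) * (((m:ℝ)+1)^2)⁻¹ :=
        mul_le_mul_of_nonneg_right h1 h4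
    _ = 2 * (Real.sqrt ((m:ℝ)+1) * (((m:ℝ)+1)^2)⁻¹) := by ring

lemma summable_gu : Summable gu := by
  apply Summable.of_nonneg_of_le gu_nonneg gu_le
  exact summable_p32.mul_left 2

lemma summable_gt' : Summable gt' := by
  apply Summable.of_norm_bounded summable_gu
  intro m
  unfold gt'
  rw [Real.norm_eq_abs, abs_mul, abs_m1_pow, one_mul, abs_of_nonneg (gu_nonneg m)]

lemma summable_wseq : Summable wseq := by
  apply Summable.of_norm_bounded summable_bb
  intro m
  unfold wseq
  rw [Real.norm_eq_abs, abs_mul, abs_m1_pow, one_mul, abs_of_nonneg]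
  unfold bb; positivity

-- prod families
noncomputable def G0 (m n : ℕ) : ℝ := (((m:ℝ)+(n:ℝ)+2)^2 * ((m:ℝ)+1))⁻¹
noncomputable def GA (m n : ℕ) : ℝ := (-1:ℝ)^(m+n) * G0 m n

lemma G0_nonneg (m n : ℕ) : 0 ≤ G0 m n := by unfold G0; positivity

lemma G0_le_ff (m n : ℕ) : G0 m n ≤ ff m n := by
  unfold G0 ff
  apply inv_anti₀
  · positivity
  · have h1 : (0:ℝ) ≤ (m:ℝ) := Nat.cast_nonneg m
    have h2 : (0:ℝ) ≤ (n:ℝ) := Nat.cast_nonneg n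
    nlinarith [mul_nonneg (mul_nonneg (by linarith : (0:ℝ) ≤ (m:ℝ)+1) (by linarith : (0:ℝ) ≤ (m:ℝ)+1)) (by linarith : (0:ℝ) ≤ (m:ℝ)+(n:ℝ)+2)]

lemma summable_G0 : Summable (fun p : ℕ × ℕ => G0 p.1 p.2) :=
  Summable.of_nonneg_of_le (fun p => G0_nonneg p.1 p.2) (fun p => G0_le_ff p.1 p.2) summable_ff

lemma summable_GA : Summable (fun p : ℕ × ℕ => GA p.1 p.2) := by
  apply Summable.of_norm_bounded summable_G0
  intro p
  unfold GA
  rw [Real.norm_eq_abs, abs_mul, abs_m1_pow, one_mul, abs_of_nonneg (G0_nonneg p.1 p.2)]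

lemma summable_T1 : Summable (fun p : ℕ × ℕ => (-1:ℝ)^(p.1+1) * ff p.1 p.2) := by
  apply Summable.of_norm_bounded summable_ff
  intro p
  rw [Real.norm_eq_abs, abs_mul, abs_m1_pow, one_mul, abs_of_nonneg (ff_nonneg p.1 p.2)]

lemma summable_T2 : Summable (fun p : ℕ × ℕ => (-1:ℝ)^(p.2+1) * ff p.1 p.2) := by
  apply Summable.of_norm_bounded summable_ff
  intro p
  rw [Real.norm_eq_abs, abs_mul, abs_m1_pow, one_mul, abs_of_nonneg (ff_nonneg p.1 p.2)]

lemma summable_A : Summable (fun p : ℕ × ℕ => (-1:ℝ)^(p.1+p.2) * ff p.1 p.2) := by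
  apply Summable.of_norm_bounded summable_ff
  intro p
  rw [Real.norm_eq_abs, abs_mul, abs_m1_pow, one_mul, abs_of_nonneg (ff_nonneg p.1 p.2)]

-- the statement's double-sum families
noncomputable def FA : ℕ × ℕ → ℝ := fun p =>
  if 1 ≤ p.2 ∧ p.2 < p.1 then (-1:ℝ)^p.1 * ((p.1:ℝ)^2 * (p.2:ℝ))⁻¹ else 0
noncomputable def F0 : ℕ × ℕ → ℝ := fun p =>
  if 1 ≤ p.2 ∧ p.2 < p.1 then ((p.1:ℝ)^2 * (p.2:ℝ))⁻¹ else 0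

def ii : ℕ × ℕ → ℕ × ℕ := fun q => (q.1+q.2+2, q.1+1)

lemma ii_inj : Function.Injective ii := by
  intro a b h
  have h1 : a.1+a.2+2 = b.1+b.2+2 := congrArg Prod.fst h
  have h2 : a.1+1 = b.1+1 := congrArg Prod.snd h
  exact Prod.ext_iff.2 ⟨by omega, by omega⟩

lemma FA_supp : Function.support FA ⊆ Set.range ii := by
  intro p hp
  unfold FA at hp
  by_cases h : 1 ≤ p.2 ∧ p.2 < p.1
  · exact ⟨(p.2 - 1, p.1 - p.2 - 1), by unfold ii; exact Prod.ext_iff.2 ⟨by omega, by omega⟩⟩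
  · simp [h] at hp

lemma F0_supp : Function.support F0 ⊆ Set.range ii := by
  intro p hp
  unfold F0 at hp
  by_cases h : 1 ≤ p.2 ∧ p.2 < p.1
  · exact ⟨(p.2 - 1, p.1 - p.2 - 1), by unfold ii; exact Prod.ext_iff.2 ⟨by omega, by omega⟩⟩
  · simp [h] at hp

lemma FA_comp (q : ℕ × ℕ) : FA (ii q) = GA q.1 q.2 := by
  obtain ⟨m, n⟩ := q
  unfold FA ii GA G0
  have hcond : 1 ≤ m+1 ∧ m+1 < m+n+2 := by omega
  rw [if_pos hcond]
  have hsign : (-1:ℝ)^(m+n+2) = (-1:ℝ)^(m+n) := by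
    rw [pow_add]; norm_num
  push_cast
  rw [hsign]

lemma F0_comp (q : ℕ × ℕ) : F0 (ii q) = G0 q.1 q.2 := by
  obtain ⟨m, n⟩ := q
  unfold F0 ii G0
  have hcond : 1 ≤ m+1 ∧ m+1 < m+n+2 := by omega
  rw [if_pos hcond]
  push_cast
  ring_nf

lemma summable_FA : Summable FA := by
  rw [← ii_inj.summable_iff (Function.support_subset_iff'.1 FA_supp)]
  exact Summable.congr summable_GA (fun q => (FA_comp q).symm)

lemma summable_F0 : Summable F0 := by
  rw [← ii_inj.summable_iff (Function.support_subset_iff'.1 F0_supp)]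
  exact Summable.congr summable_G0 (fun q => (F0_comp q).symm)

lemma tsum_FA_eq : ∑' q : ℕ × ℕ, GA q.1 q.2 = ∑' p, FA p := by
  rw [← ii_inj.tsum_eq FA_supp]
  exact tsum_congr (fun q => (FA_comp q).symm)

lemma tsum_F0_eq : ∑' q : ℕ × ℕ, G0 q.1 q.2 = ∑' p, F0 p := by
  rw [← ii_inj.tsum_eq F0_supp]
  exact tsum_congr (fun q => (F0_comp q).symm)

lemma ff_symm (m n : ℕ) : ff m n = ff n m := by
  unfold ff; ring_nf

lemma ff_split (m n : ℕ) : ff m n = G0 m n + G0 n m := by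
  unfold ff G0
  have h1 : (0:ℝ) < (m:ℝ)+1 := by positivity
  have h2 : (0:ℝ) < (n:ℝ)+1 := by positivity
  have h3 : (0:ℝ) < (m:ℝ)+(n:ℝ)+2 := by positivity
  have h4 : (0:ℝ) < (n:ℝ)+(m:ℝ)+2 := by positivity
  field_simp
  ring

-- Fubini: S and T row evaluations
lemma S_eq_U : ∑' p : ℕ × ℕ, ff p.1 p.2 = ∑' m, gu m := by
  rw [Summable.tsum_prod summable_ff]
  exact tsum_congr (fun m => (hasSum_ff_row m).tsum_eq)

lemma T_eq : ∑' p : ℕ × ℕ, (-1:ℝ)^(p.1+1) * ff p.1 p.2 = ∑' m, gt' m := by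
  rw [Summable.tsum_prod summable_T1]
  exact tsum_congr (fun m => (((hasSum_ff_row m).mul_left ((-1:ℝ)^(m+1)))).tsum_eq)

-- A = 2 * ∑ GA
lemma A_eq : ∑' p : ℕ × ℕ, (-1:ℝ)^(p.1+p.2) * ff p.1 p.2 = 2 * ∑' q : ℕ × ℕ, GA q.1 q.2 := by
  have hsw : Summable (fun q : ℕ × ℕ => GA q.2 q.1) := by
    have := (Equiv.prodComm ℕ ℕ).summable_iff.2 summable_GA
    exact this
  have hpt : ∀ p : ℕ × ℕ, (-1:ℝ)^(p.1+p.2) * ff p.1 p.2 = GA p.1 p.2 + GA p.2 p.1 := by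
    intro ⟨m, n⟩
    unfold GA
    have : (-1:ℝ)^(n+m) = (-1:ℝ)^(m+n) := by rw [add_comm]
    rw [this, ← mul_add, ← ff_split]
  calc ∑' p : ℕ × ℕ, (-1:ℝ)^(p.1+p.2) * ff p.1 p.2
      = ∑' p : ℕ × ℕ, (GA p.1 p.2 + GA p.2 p.1) := tsum_congr hpt
    _ = (∑' p : ℕ × ℕ, GA p.1 p.2) + ∑' p : ℕ × ℕ, GA p.2 p.1 := Summable.tsum_add summable_GA hsw
    _ = 2 * ∑' q : ℕ × ℕ, GA q.1 q.2 := by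
        have h := (Equiv.prodComm ℕ ℕ).tsum_eq (fun q : ℕ × ℕ => GA q.1 q.2)
        simp only [Equiv.prodComm_apply, Prod.fst_swap, Prod.snd_swap] at h
        rw [h]; ring

-- S = 2 * ∑ G0
lemma S_eq2 : ∑' p : ℕ × ℕ, ff p.1 p.2 = 2 * ∑' q : ℕ × ℕ, G0 q.1 q.2 := by
  have hsw : Summable (fun q : ℕ × ℕ => G0 q.2 q.1) :=
    (Equiv.prodComm ℕ ℕ).summable_iff.2 summable_G0
  calc ∑' p : ℕ × ℕ, ff p.1 p.2
      = ∑' p : ℕ × ℕ, (G0 p.1 p.2 + G0 p.2 p.1) := tsum_congr (fun ⟨m,n⟩ => ff_split m n)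
    _ = (∑' p : ℕ × ℕ, G0 p.1 p.2) + ∑' p : ℕ × ℕ, G0 p.2 p.1 := Summable.tsum_add summable_G0 hsw
    _ = 2 * ∑' q : ℕ × ℕ, G0 q.1 q.2 := by
        have h := (Equiv.prodComm ℕ ℕ).tsum_eq (fun q : ℕ × ℕ => G0 q.1 q.2)
        simp only [Equiv.prodComm_apply, Prod.fst_swap, Prod.snd_swap] at h
        rw [h]; ring

lemma inner_eval (r : ℝ) (k : ℕ) :
    ∑' l : ℕ, (if 1 ≤ l ∧ l < k then r * ((k:ℝ)^2 * (l:ℝ))⁻¹ else 0)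
      = r * Hh (k-1) * ((k:ℝ)^2)⁻¹ := by
  cases k with
  | zero => simp [Hh]
  | succ j =>
    rw [tsum_eq_sum (s := Finset.range (j+1))
      (by intro l hl
          rw [Finset.mem_range, not_lt] at hl
          rw [if_neg]
          omega)]
    rw [Finset.sum_range_succ']
    rw [if_neg (by omega)]
    have hterm : ∀ i ∈ Finset.range j,
        (if 1 ≤ i+1 ∧ i+1 < j+1 then r * (((j+1:ℕ):ℝ)^2 * ((i+1:ℕ):ℝ))⁻¹ else 0)
          = (r * (((j:ℝ)+1)^2)⁻¹) * ((i:ℝ)+1)⁻¹ := by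
      intro i hi
      rw [Finset.mem_range] at hi
      rw [if_pos (by omega)]
      push_cast
      rw [mul_inv]
      ring
    rw [Finset.sum_congr rfl hterm, ← Finset.mul_sum]
    have : ∑ i ∈ Finset.range j, ((i:ℝ)+1)⁻¹ = Hh j := rfl
    rw [this]
    have : j + 1 - 1 = j := by omega
    rw [this]
    push_cast
    ring

-- η(3): ∑' wseq = -(3/4) * z
lemma eta3 : ∑' k, wseq k = -(3/4) * ∑' k, bb k := by
  set z := ∑' k, bb k with hz
  have i2 : Function.Injective (fun a : ℕ => 2*a+1) := by
    intro a b h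
    simp only [] at h
    omega
  set e : ℕ → ℝ := fun k => bb k + wseq k with he
  have hsupp : Function.support e ⊆ Set.range (fun a : ℕ => 2*a+1) := by
    intro k hk
    rcases Nat.even_or_odd k with hev | hod
    · exfalso
      apply hk
      rw [he]
      have h1 : (-1:ℝ)^(k+1) = -1 := by
        rw [pow_add, hev.neg_one_pow]; norm_num
      simp only [wseq, h1]
      ring
    · obtain ⟨a, ha⟩ := hod
      exact ⟨a, show 2*a+1 = k by omega⟩
  have hcomp : ∀ a : ℕ, e (2*a+1) = (1/4) * bb a := by
    intro a
    rw [he]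
    simp only [wseq, bb]
    have h1 : (-1:ℝ)^(2*a+1+1) = 1 := by
      have : 2*a+1+1 = 2*(a+1) := by omega
      rw [this, pow_mul]; norm_num
    rw [h1, one_mul]
    push_cast
    have h2 : ((2:ℝ)*a+1+1)^3 = 8 * ((a:ℝ)+1)^3 := by ring
    rw [h2]
    have h3 : (0:ℝ) < ((a:ℝ)+1)^3 := by positivity
    field_simp
    ring
  have hesum : Summable e := summable_bb.add summable_wseq
  have h1 : ∑' k, e k = ∑' a, e (2*a+1) := (i2.tsum_eq hsupp).symm
  have h2 : ∑' a, e (2*a+1) = (1/4) * z := by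
    rw [tsum_congr hcomp, tsum_mul_left]
  have h3 : ∑' k, e k = z + ∑' k, wseq k := by
    rw [he]
    exact Summable.tsum_add summable_bb summable_wseq
  have := h3.symm.trans (h1.trans h2)
  linarith

noncomputable def ee : ℕ × ℕ → ℝ := fun p =>
  (1+(-1:ℝ)^(p.1+1)) * ((1+(-1:ℝ)^(p.2+1)) * ff p.1 p.2)

lemma ee_expand (p : ℕ × ℕ) : ee p =
    ff p.1 p.2 + (-1:ℝ)^(p.1+1) * ff p.1 p.2
      + ((-1:ℝ)^(p.2+1) * ff p.1 p.2 + (-1:ℝ)^(p.1+p.2) * ff p.1 p.2) := by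
  unfold ee
  simp only [pow_add, pow_one]
  ring

lemma abs_one_add_pow (n : ℕ) : |1+(-1:ℝ)^n| ≤ 2 := by
  rcases Nat.even_or_odd n with h | h
  · rw [h.neg_one_pow]; norm_num
  · rw [h.neg_one_pow]; norm_num

lemma summable_ee : Summable ee := by
  apply Summable.of_norm_bounded (g := fun p : ℕ × ℕ => 4 * ff p.1 p.2)
    (summable_ff.mul_left 4)
  intro p
  unfold ee
  rw [Real.norm_eq_abs, abs_mul, abs_mul, abs_of_nonneg (ff_nonneg p.1 p.2)]
  have h1 := abs_one_add_pow (p.1+1)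
  have h2 := abs_one_add_pow (p.2+1)
  have h3 := ff_nonneg p.1 p.2
  have h4 : |1+(-1:ℝ)^(p.2+1)| * ff p.1 p.2 ≤ 2 * ff p.1 p.2 :=
    mul_le_mul_of_nonneg_right h2 h3
  calc |1+(-1:ℝ)^(p.1+1)| * (|1+(-1:ℝ)^(p.2+1)| * ff p.1 p.2)
      ≤ 2 * (2 * ff p.1 p.2) := by
        apply mul_le_mul h1 h4 (by positivity) (by norm_num)
    _ = 4 * ff p.1 p.2 := by ring

def jj : ℕ × ℕ → ℕ × ℕ := fun q => (2*q.1+1, 2*q.2+1)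

lemma jj_inj : Function.Injective jj := by
  intro a b h
  have h1 : 2*a.1+1 = 2*b.1+1 := congrArg Prod.fst h
  have h2 : 2*a.2+1 = 2*b.2+1 := congrArg Prod.snd h
  exact Prod.ext_iff.2 ⟨by omega, by omega⟩

lemma ee_supp : Function.support ee ⊆ Set.range jj := by
  intro p hp
  rcases Nat.even_or_odd p.1 with h1 | h1
  · exfalso
    apply hp
    unfold ee
    have : (-1:ℝ)^(p.1+1) = -1 := by rw [pow_add, h1.neg_one_pow]; norm_num
    rw [this]
    ring
  rcases Nat.even_or_odd p.2 with h2 | h2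
  · exfalso
    apply hp
    unfold ee
    have : (-1:ℝ)^(p.2+1) = -1 := by rw [pow_add, h2.neg_one_pow]; norm_num
    rw [this]
    ring
  obtain ⟨a, ha⟩ := h1
  obtain ⟨b, hb⟩ := h2
  exact ⟨(a, b), Prod.ext_iff.2 ⟨show 2*a+1 = p.1 by omega, show 2*b+1 = p.2 by omega⟩⟩

lemma ee_comp (q : ℕ × ℕ) : ee (jj q) = (1/2) * ff q.1 q.2 := by
  obtain ⟨a, b⟩ := q
  unfold ee jj ff
  have h1 : ∀ c : ℕ, (-1:ℝ)^(2*c+1+1) = 1 := by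
    intro c
    have : 2*c+1+1 = 2*(c+1) := by omega
    rw [this, pow_mul]; norm_num
  rw [h1 a, h1 b]
  push_cast
  have d1 : (0:ℝ) < (a:ℝ)+1 := by positivity
  have d2 : (0:ℝ) < (b:ℝ)+1 := by positivity
  have d3 : (0:ℝ) < (a:ℝ)+(b:ℝ)+2 := by positivity
  have d4 : (2*(a:ℝ)+1+1) * ((2*(b:ℝ)+1+1) * (2*(a:ℝ)+1+(2*(b:ℝ)+1)+2))
      = 8 * (((a:ℝ)+1) * (((b:ℝ)+1) * ((a:ℝ)+(b:ℝ)+2))) := by ring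
  rw [d4, mul_inv]
  have h8 : ((8:ℝ))⁻¹ = 1/8 := by norm_num
  rw [h8]
  ring

lemma tsum_ee : ∑' p, ee p = (1/2) * ∑' p : ℕ × ℕ, ff p.1 p.2 := by
  rw [← jj_inj.tsum_eq ee_supp, tsum_congr ee_comp, tsum_mul_left]

lemma T2_eq_T1 :
    ∑' p : ℕ × ℕ, (-1:ℝ)^(p.2+1) * ff p.1 p.2
      = ∑' p : ℕ × ℕ, (-1:ℝ)^(p.1+1) * ff p.1 p.2 := by
  have h := (Equiv.prodComm ℕ ℕ).tsum_eq (fun q : ℕ × ℕ => (-1:ℝ)^(q.1+1) * ff q.1 q.2)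
  simp only [Equiv.prodComm_apply, Prod.fst_swap, Prod.snd_swap] at h
  rw [← h]
  exact tsum_congr (fun p => by rw [ff_symm p.2 p.1])

lemma even_even :
    (∑' p : ℕ × ℕ, ff p.1 p.2) + 2 * (∑' p : ℕ × ℕ, (-1:ℝ)^(p.1+1) * ff p.1 p.2)
      + (∑' p : ℕ × ℕ, (-1:ℝ)^(p.1+p.2) * ff p.1 p.2)
      = (1/2) * ∑' p : ℕ × ℕ, ff p.1 p.2 := by
  have hsplit : ∑' p, ee p
      = (∑' p : ℕ × ℕ, ff p.1 p.2) + (∑' p : ℕ × ℕ, (-1:ℝ)^(p.1+1) * ff p.1 p.2)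
        + ((∑' p : ℕ × ℕ, (-1:ℝ)^(p.2+1) * ff p.1 p.2)
          + (∑' p : ℕ × ℕ, (-1:ℝ)^(p.1+p.2) * ff p.1 p.2)) := by
    rw [tsum_congr ee_expand]
    rw [Summable.tsum_add (summable_ff.add summable_T1) (summable_T2.add summable_A),
        Summable.tsum_add summable_ff summable_T1, Summable.tsum_add summable_T2 summable_A]
  have h2 := tsum_ee
  rw [hsplit, T2_eq_T1] at h2
  linarith

lemma x_eval :
    (∑' p, FA p) = (∑' m, gt' m) - ∑' k, wseq k := by
  have haa : ∀ k : ℕ, (∑' l, FA (k, l)) = (-1:ℝ)^k * Hh (k-1) * ((k:ℝ)^2)⁻¹ := by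
    intro k
    exact inner_eval ((-1:ℝ)^k) k
  have hsum_aa : Summable (fun k : ℕ => (-1:ℝ)^k * Hh (k-1) * ((k:ℝ)^2)⁻¹) :=
    Summable.congr summable_FA.prod haa
  have step : ∀ j : ℕ, (-1:ℝ)^(j+1) * Hh (j+1-1) * (((j+1:ℕ):ℝ)^2)⁻¹ = gt' j - wseq j := by
    intro j
    have hj : j + 1 - 1 = j := by omega
    rw [hj]
    unfold gt' gu wseq bb
    rw [Hh_succ]
    push_cast
    have d1 : (0:ℝ) < (j:ℝ)+1 := by positivity
    field_simp
    ring
  calc (∑' p, FA p) = ∑' k, ∑' l, FA (k, l) := Summable.tsum_prod summable_FA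
    _ = ∑' k : ℕ, (-1:ℝ)^k * Hh (k-1) * ((k:ℝ)^2)⁻¹ := tsum_congr haa
    _ = ((-1:ℝ)^(0:ℕ) * Hh (0-1) * (((0:ℕ):ℝ)^2)⁻¹)
        + ∑' j : ℕ, (-1:ℝ)^(j+1) * Hh (j+1-1) * (((j+1:ℕ):ℝ)^2)⁻¹ :=
          Summable.tsum_eq_zero_add hsum_aa
    _ = ∑' j : ℕ, (gt' j - wseq j) := by
          rw [tsum_congr step]
          simp [Hh]
    _ = (∑' m, gt' m) - ∑' k, wseq k := Summable.tsum_sub summable_gt' summable_wseq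

lemma v_eval :
    (∑' p, F0 p) = (∑' m, gu m) - ∑' k, bb k := by
  have haa : ∀ k : ℕ, (∑' l, F0 (k, l)) = (1:ℝ) * Hh (k-1) * ((k:ℝ)^2)⁻¹ := by
    intro k
    rw [← inner_eval (1:ℝ) k]
    apply tsum_congr
    intro l
    unfold F0
    by_cases h : 1 ≤ l ∧ l < k
    · rw [if_pos h, if_pos h, one_mul]
    · rw [if_neg h, if_neg h]
  have hsum_aa : Summable (fun k : ℕ => (1:ℝ) * Hh (k-1) * ((k:ℝ)^2)⁻¹) :=
    Summable.congr summable_F0.prod haa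
  have step : ∀ j : ℕ, (1:ℝ) * Hh (j+1-1) * (((j+1:ℕ):ℝ)^2)⁻¹ = gu j - bb j := by
    intro j
    have hj : j + 1 - 1 = j := by omega
    rw [hj]
    unfold gu bb
    rw [Hh_succ]
    push_cast
    have d1 : (0:ℝ) < (j:ℝ)+1 := by positivity
    field_simp
    ring
  calc (∑' p, F0 p) = ∑' k, ∑' l, F0 (k, l) := Summable.tsum_prod summable_F0
    _ = ∑' k : ℕ, (1:ℝ) * Hh (k-1) * ((k:ℝ)^2)⁻¹ := tsum_congr haa
    _ = ((1:ℝ) * Hh (0-1) * (((0:ℕ):ℝ)^2)⁻¹)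
        + ∑' j : ℕ, (1:ℝ) * Hh (j+1-1) * (((j+1:ℕ):ℝ)^2)⁻¹ :=
          Summable.tsum_eq_zero_add hsum_aa
    _ = ∑' j : ℕ, (gu j - bb j) := by
          rw [tsum_congr step]
          simp [Hh]
    _ = (∑' m, gu m) - ∑' k, bb k := Summable.tsum_sub summable_gu summable_bb

/-- ζ(3) = 8·ζ(2̄,1): ∑_{k≥1} 1/k³ = 8 ∑_{k>l≥1} (−1)^k/(k²·l). -/
theorem zeta_three_eq :
    (∑' k : ℕ, (((k : ℝ) + 1) ^ 3)⁻¹)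
      = 8 * ∑' k : ℕ, ∑' l : ℕ, if 1 ≤ l ∧ l < k then
          (-1 : ℝ) ^ k * ((k : ℝ) ^ 2 * (l : ℝ))⁻¹ else 0 := by
  have hz : (∑' k : ℕ, (((k : ℝ) + 1) ^ 3)⁻¹) = ∑' k, bb k := rfl
  have hx : (∑' k : ℕ, ∑' l : ℕ, if 1 ≤ l ∧ l < k then
          (-1 : ℝ) ^ k * ((k : ℝ) ^ 2 * (l : ℝ))⁻¹ else 0) = ∑' p, FA p := by
    rw [Summable.tsum_prod summable_FA]
    rfl
  rw [hz, hx]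
  have r1 : (∑' p : ℕ × ℕ, ff p.1 p.2) = ∑' m, gu m := S_eq_U
  have r2 : (∑' p : ℕ × ℕ, ff p.1 p.2) = 2 * ((∑' m, gu m) - ∑' k, bb k) := by
    rw [S_eq2, tsum_F0_eq, v_eval]
  have r3 : (∑' p : ℕ × ℕ, (-1:ℝ)^(p.1+1) * ff p.1 p.2) = ∑' m, gt' m := T_eq
  have r4 : (∑' p, FA p) = (∑' m, gt' m) - ∑' k, wseq k := x_eval
  have r5 : (∑' p : ℕ × ℕ, (-1:ℝ)^(p.1+p.2) * ff p.1 p.2) = 2 * ∑' p, FA p := by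
    rw [A_eq, tsum_FA_eq]
  have r6 := even_even
  have r7 : (∑' k, wseq k) = -(3/4) * ∑' k, bb k := eta3
  linarith
end

section
/- ζ(2,1) = ζ(3), i.e., Σ_{k>l≥1} 1/(k²·l) = Σ_{k≥1} 1/k³. -/
open Filter Finset Topology Function
open scoped ENNReal


lemma sq_inv_summable : Summable (fun q : ℕ => (((q:ℝ)+1)^2)⁻¹) := by
  have h : Summable (fun n : ℕ => ((n:ℝ)^2)⁻¹) := by
    simpa [one_div] using Real.summable_one_div_nat_pow.2 (le_refl 2)
  exact ((summable_nat_add_iff 1).2 h).congr (fun n => by push_cast; ring_nf)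

lemma telescope_summable (j : ℕ) :
    Summable (fun q : ℕ => ((((q+1) * (q+1+j) : ℕ)) : ℝ)⁻¹) := by
  refine Summable.of_nonneg_of_le (fun q => by positivity) (fun q => ?_) sq_inv_summable
  push_cast
  rw [inv_le_inv₀ (by positivity) (by positivity)]
  nlinarith [sq_nonneg ((q:ℝ)+1), Nat.cast_nonneg (α := ℝ) j]

lemma telescope_partial (j : ℕ) (hj : 0 < j) (N : ℕ) :
    ∑ q ∈ range N, ((((q+1) * (q+1+j) : ℕ)) : ℝ)⁻¹
      = (j:ℝ)⁻¹ * (∑ i ∈ range j, ((i:ℝ)+1)⁻¹ - ∑ i ∈ range j, (((N+i:ℕ):ℝ)+1)⁻¹) := by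
  have hjR : (0:ℝ) < j := by exact_mod_cast hj
  have hterm : ∀ q : ℕ, ((((q+1) * (q+1+j) : ℕ)) : ℝ)⁻¹
      = (j:ℝ)⁻¹ * (((q:ℝ)+1)⁻¹ - (((j+q:ℕ):ℝ)+1)⁻¹) := by
    intro q
    push_cast
    have h1 : ((q:ℝ)+1) ≠ 0 := by positivity
    have h2 : ((j:ℝ)+(q:ℝ)+1) ≠ 0 := by positivity
    have : ((q:ℝ)+1)⁻¹ - ((j:ℝ)+q+1)⁻¹ = j * (((q:ℝ)+1) * ((q:ℝ)+1+j))⁻¹ := by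
      rw [inv_sub_inv h1 h2]
      rw [div_eq_iff (by positivity)]
      field_simp
      ring_nf
    rw [this, ← mul_assoc, inv_mul_cancel₀ (ne_of_gt hjR), one_mul]
  simp_rw [hterm, ← Finset.mul_sum]
  congr 1
  rw [Finset.sum_sub_distrib]
  have e1 := Finset.sum_range_add (fun q : ℕ => ((q:ℝ)+1)⁻¹) j N
  have e2 := Finset.sum_range_add (fun q : ℕ => ((q:ℝ)+1)⁻¹) N j
  rw [Nat.add_comm j N] at e1
  have key : ∑ q ∈ range N, (((j+q:ℕ):ℝ)+1)⁻¹
      = ∑ q ∈ range N, ((q:ℝ)+1)⁻¹ + ∑ i ∈ range j, (((N+i:ℕ):ℝ)+1)⁻¹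
        - ∑ q ∈ range j, ((q:ℝ)+1)⁻¹ := by
    push_cast at e1 e2 ⊢
    linarith
  rw [key]
  ring

lemma telescope_hasSum (j : ℕ) (hj : 0 < j) :
    HasSum (fun q : ℕ => ((((q+1) * (q+1+j) : ℕ)) : ℝ)⁻¹)
      ((j:ℝ)⁻¹ * ∑ i ∈ Finset.range j, ((i:ℝ)+1)⁻¹) := by
  have hsum := telescope_summable j
  have hlim : Tendsto (fun N => ∑ q ∈ range N, ((((q+1) * (q+1+j) : ℕ)) : ℝ)⁻¹) atTop
      (𝓝 ((j:ℝ)⁻¹ * ∑ i ∈ range j, ((i:ℝ)+1)⁻¹)) := by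
    simp_rw [telescope_partial j hj]
    have h0 : ∀ i : ℕ, Tendsto (fun N : ℕ => (((N+i:ℕ):ℝ)+1)⁻¹) atTop (𝓝 0) := by
      intro i
      apply Tendsto.comp tendsto_inv_atTop_zero
      apply tendsto_atTop_add_const_right
      exact (tendsto_natCast_atTop_atTop (R := ℝ)).comp (tendsto_add_atTop_nat i)
    have htail : Tendsto (fun N : ℕ => ∑ i ∈ range j, (((N+i:ℕ):ℝ)+1)⁻¹) atTop (𝓝 0) := by
      simpa using tendsto_finset_sum (range j) (fun i _ => h0 i)
    have := (tendsto_const_nhds (x := ∑ i ∈ range j, ((i:ℝ)+1)⁻¹)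
      (f := atTop (α := ℕ))).sub htail
    simpa using (tendsto_const_nhds (x := (j:ℝ)⁻¹) (f := atTop (α := ℕ))).mul this
  have heq := tendsto_nhds_unique hsum.hasSum.tendsto_sum_nat hlim
  rw [← heq]
  exact hsum.hasSum



lemma inv_natCast_ofReal (n : ℕ) (hn : 0 < n) :
    ((n : ℝ≥0∞))⁻¹ = ENNReal.ofReal ((n:ℝ)⁻¹) := by
  rw [ENNReal.ofReal_inv_of_pos (by exact_mod_cast hn), ENNReal.ofReal_natCast]

lemma telescope_ennreal (j : ℕ) (hj : 0 < j) :
    ∑' q : ℕ, ((((q+1)*(q+1+j) : ℕ)):ℝ≥0∞)⁻¹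
      = ((j:ℝ≥0∞))⁻¹ * ∑ i ∈ Finset.range j, (((i+1:ℕ)):ℝ≥0∞)⁻¹ := by
  have hs := telescope_hasSum j hj
  calc ∑' q : ℕ, ((((q+1)*(q+1+j) : ℕ)):ℝ≥0∞)⁻¹
      = ∑' q : ℕ, ENNReal.ofReal (((((q+1)*(q+1+j) : ℕ)):ℝ)⁻¹) := by
        refine tsum_congr fun q => inv_natCast_ofReal _ (by positivity)
    _ = ENNReal.ofReal (∑' q : ℕ, ((((q+1)*(q+1+j) : ℕ)):ℝ)⁻¹) :=
        (ENNReal.ofReal_tsum_of_nonneg (fun q => by positivity) hs.summable).symm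
    _ = ENNReal.ofReal ((j:ℝ)⁻¹ * ∑ i ∈ Finset.range j, ((i:ℝ)+1)⁻¹) := by
        rw [hs.tsum_eq]
    _ = ((j:ℝ≥0∞))⁻¹ * ∑ i ∈ Finset.range j, (((i+1:ℕ)):ℝ≥0∞)⁻¹ := by
        rw [ENNReal.ofReal_mul (by positivity), ENNReal.ofReal_sum_of_nonneg
          (fun i _ => by positivity), ← inv_natCast_ofReal j hj]
        congr 1
        refine Finset.sum_congr rfl fun i _ => ?_
        rw [inv_natCast_ofReal _ (Nat.succ_pos i)]
        congr 1
        push_cast; ring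



lemma stepA_pointwise (p q : ℕ) :
    ((((p+1)*(q+1)*(p+q+2) : ℕ)):ℝ≥0∞)⁻¹
      = ((((p+q+2)^2*(q+1) : ℕ)):ℝ≥0∞)⁻¹ + ((((q+p+2)^2*(p+1) : ℕ)):ℝ≥0∞)⁻¹ := by
  rw [inv_natCast_ofReal _ (by positivity), inv_natCast_ofReal _ (by positivity),
    inv_natCast_ofReal _ (by positivity), ← ENNReal.ofReal_add (by positivity) (by positivity)]
  congr 1
  push_cast
  have h1 : ((p:ℝ)+1) ≠ 0 := by positivity
  have h2 : ((q:ℝ)+1) ≠ 0 := by positivity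
  have h3 : ((p:ℝ)+q+2) ≠ 0 := by positivity
  have h4 : ((q:ℝ)+p+2) ≠ 0 := by positivity
  field_simp
  ring

lemma stepA :
    (∑' pq : ℕ×ℕ, ((((pq.1+1)*(pq.2+1)*(pq.1+pq.2+2) : ℕ)):ℝ≥0∞)⁻¹)
      = (∑' pq : ℕ×ℕ, ((((pq.1+pq.2+2)^2*(pq.2+1) : ℕ)):ℝ≥0∞)⁻¹)
        + (∑' pq : ℕ×ℕ, ((((pq.1+pq.2+2)^2*(pq.2+1) : ℕ)):ℝ≥0∞)⁻¹) := by
  have swap : (∑' pq : ℕ×ℕ, ((((pq.2+pq.1+2)^2*(pq.1+1) : ℕ)):ℝ≥0∞)⁻¹)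
      = (∑' pq : ℕ×ℕ, ((((pq.1+pq.2+2)^2*(pq.2+1) : ℕ)):ℝ≥0∞)⁻¹) := by
    exact ((Equiv.prodComm ℕ ℕ).tsum_eq
      (fun pq : ℕ×ℕ => ((((pq.1+pq.2+2)^2*(pq.2+1) : ℕ)):ℝ≥0∞)⁻¹))
  nth_rewrite 2 [← swap]
  rw [← ENNReal.tsum_add]
  exact tsum_congr fun pq => stepA_pointwise pq.1 pq.2



lemma natCast_mul_inv (a b : ℕ) :
    (((a*b : ℕ)):ℝ≥0∞)⁻¹ = ((a:ℝ≥0∞))⁻¹ * ((b:ℝ≥0∞))⁻¹ := by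
  push_cast
  rw [ENNReal.mul_inv (Or.inr (ENNReal.natCast_ne_top b)) (Or.inl (ENNReal.natCast_ne_top a))]

lemma stepB_inner (p : ℕ) :
    ∑' q : ℕ, ((((p+1)*(q+1)*(p+q+2) : ℕ)):ℝ≥0∞)⁻¹
      = ∑ i ∈ Finset.range (p+1), ((((p+1)^2*(i+1) : ℕ)):ℝ≥0∞)⁻¹ := by
  have h1 : ∀ q : ℕ, ((((p+1)*(q+1)*(p+q+2) : ℕ)):ℝ≥0∞)⁻¹
      = (((p+1:ℕ)):ℝ≥0∞)⁻¹ * ((((q+1)*(q+1+(p+1)) : ℕ)):ℝ≥0∞)⁻¹ := by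
    intro q
    rw [← natCast_mul_inv]
    congr 1
    ring
  simp_rw [h1]
  rw [ENNReal.tsum_mul_left, telescope_ennreal (p+1) (Nat.succ_pos p), ← mul_assoc,
    Finset.mul_sum]
  refine Finset.sum_congr rfl fun i _ => ?_
  rw [natCast_mul_inv ((p+1)^2) (i+1), pow_two, natCast_mul_inv (p+1) (p+1)]


-- reindex for step B remainder
lemma reindexB :
    (∑' pq : ℕ×ℕ, ((((pq.1+pq.2+2)^2*(pq.2+1) : ℕ)):ℝ≥0∞)⁻¹)
      = ∑' p : ℕ, ∑ i ∈ Finset.range p, ((((p+1)^2*(i+1) : ℕ)):ℝ≥0∞)⁻¹ := by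
  have hfin : ∀ p : ℕ, ∑ i ∈ Finset.range p, ((((p+1)^2*(i+1) : ℕ)):ℝ≥0∞)⁻¹
      = ∑' i : ℕ, (if i < p then ((((p+1)^2*(i+1) : ℕ)):ℝ≥0∞)⁻¹ else 0) := by
    intro p
    rw [tsum_eq_sum (s := Finset.range p) (fun i hi => if_neg (by simpa using hi))]
    exact (Finset.sum_congr rfl fun i hi => (if_pos (by simpa using hi))).symm
  simp_rw [hfin]
  rw [← ENNReal.tsum_prod]
  have hinj : Injective (fun ab : ℕ×ℕ => ((ab.1+ab.2+1, ab.2) : ℕ×ℕ)) := by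
    intro a b h
    simp only [Prod.mk.injEq] at h
    exact Prod.ext (by omega) h.2
  have := hinj.tsum_eq
    (f := fun pq : ℕ×ℕ => (if pq.2 < pq.1 then ((((pq.1+1)^2*(pq.2+1) : ℕ)):ℝ≥0∞)⁻¹ else 0))
    (by
      intro pq hpq
      simp only [Function.mem_support, ne_eq, ite_eq_right_iff, not_forall] at hpq
      obtain ⟨h, -⟩ := hpq
      exact ⟨(pq.1 - pq.2 - 1, pq.2), Prod.ext (by simp; omega) rfl⟩)
  rw [← this]
  refine tsum_congr fun ab => ?_
  beta_reduce
  rw [if_pos (by omega)]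

-- reindex for statement LHS
lemma reindexL :
    (∑' k : ℕ, ∑' l : ℕ, if 1 ≤ l ∧ l < k then ((k:ℝ≥0∞) ^ 2 * (l:ℝ≥0∞))⁻¹ else 0)
      = ∑' pq : ℕ×ℕ, ((((pq.1+pq.2+2)^2*(pq.2+1) : ℕ)):ℝ≥0∞)⁻¹ := by
  rw [← ENNReal.tsum_prod]
  have hinj : Injective (fun ab : ℕ×ℕ => ((ab.1+ab.2+2, ab.2+1) : ℕ×ℕ)) := by
    intro a b h
    simp only [Prod.mk.injEq] at h
    exact Prod.ext (by omega) (by omega)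
  have := hinj.tsum_eq
    (f := fun kl : ℕ×ℕ => if 1 ≤ kl.2 ∧ kl.2 < kl.1 then ((kl.1:ℝ≥0∞) ^ 2 * (kl.2:ℝ≥0∞))⁻¹ else 0)
    (by
      intro kl hkl
      simp only [Function.mem_support, ne_eq, ite_eq_right_iff, not_forall] at hkl
      obtain ⟨h, -⟩ := hkl
      exact ⟨(kl.1 - kl.2 - 1, kl.2 - 1), Prod.ext (by simp; omega) (by simp; omega)⟩)
  rw [← this]
  refine (tsum_congr fun ab => ?_).symm
  beta_reduce
  rw [if_pos (by constructor <;> omega)]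
  push_cast
  congr 1


lemma rpow_summable : Summable (fun n : ℕ => ((n:ℝ)+1) ^ (-(3/2) : ℝ)) := by
  have h : Summable (fun n : ℕ => (n:ℝ) ^ (-(3/2) : ℝ)) :=
    Real.summable_nat_rpow.2 (by norm_num)
  exact ((summable_nat_add_iff 1).2 h).congr (fun n => by push_cast; ring_nf)

lemma Z21_real_summable :
    Summable (fun pq : ℕ×ℕ => ((((pq.1+pq.2+2)^2*(pq.2+1) : ℕ)):ℝ)⁻¹) := by
  have hb : ∀ pq : ℕ×ℕ, ((((pq.1+pq.2+2)^2*(pq.2+1) : ℕ)):ℝ)⁻¹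
      ≤ ((pq.1:ℝ)+1) ^ (-(3/2) : ℝ) * ((pq.2:ℝ)+1) ^ (-(3/2) : ℝ) := by
    rintro ⟨p, q⟩
    dsimp only
    set a : ℝ := (p:ℝ)+1 with ha
    set b : ℝ := (q:ℝ)+1 with hb
    have ha0 : (1:ℝ) ≤ a := by simp [ha]
    have hb0 : (1:ℝ) ≤ b := by simp [hb]
    have has : a ≤ a + b := by linarith
    have hbs : b ≤ a + b := by linarith
    have hs0 : (0:ℝ) < a + b := by linarith
    have key : a ^ ((3:ℝ)/2) * b ^ ((1:ℝ)/2) ≤ (a+b)^2 := by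
      have h1 : a ^ ((3:ℝ)/2) ≤ (a+b) ^ ((3:ℝ)/2) :=
        Real.rpow_le_rpow (by linarith) has (by norm_num)
      have h2 : b ^ ((1:ℝ)/2) ≤ (a+b) ^ ((1:ℝ)/2) :=
        Real.rpow_le_rpow (by linarith) hbs (by norm_num)
      have h3 : (a+b) ^ ((3:ℝ)/2) * (a+b) ^ ((1:ℝ)/2) = (a+b)^2 := by
        rw [← Real.rpow_add hs0]
        norm_num
      calc a ^ ((3:ℝ)/2) * b ^ ((1:ℝ)/2)
          ≤ (a+b) ^ ((3:ℝ)/2) * (a+b) ^ ((1:ℝ)/2) := by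
            apply mul_le_mul h1 h2 (Real.rpow_nonneg (by linarith) _)
              (Real.rpow_nonneg (by linarith) _)
        _ = (a+b)^2 := h3
    have hmain : a ^ ((3:ℝ)/2) * b ^ ((3:ℝ)/2) ≤ (a+b)^2 * b := by
      have hb32 : b ^ ((3:ℝ)/2) = b ^ ((1:ℝ)/2) * b := by
        rw [show (3:ℝ)/2 = 1/2 + 1 by norm_num, Real.rpow_add_one (by positivity)]
      rw [hb32, ← mul_assoc]
      exact mul_le_mul_of_nonneg_right key (by linarith)
    have hcast : ((((p+q+2)^2*(q+1) : ℕ)):ℝ) = (a+b)^2 * b := by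
      push_cast [ha, hb]; ring
    rw [hcast, Real.rpow_neg (by linarith), Real.rpow_neg (by linarith),
      ← mul_inv]
    rw [inv_le_inv₀ (by positivity) (by positivity)]
    exact hmain
  apply Summable.of_nonneg_of_le (fun pq => by positivity) hb
  exact rpow_summable.mul_of_nonneg rpow_summable
    (fun n => Real.rpow_nonneg (by positivity) _)
    (fun n => Real.rpow_nonneg (by positivity) _)

lemma Z21_ne_top :
    (∑' pq : ℕ×ℕ, ((((pq.1+pq.2+2)^2*(pq.2+1) : ℕ)):ℝ≥0∞)⁻¹) ≠ ⊤ := by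
  have h : ∀ pq : ℕ×ℕ, ((((pq.1+pq.2+2)^2*(pq.2+1) : ℕ)):ℝ≥0∞)⁻¹
      = ENNReal.ofReal (((((pq.1+pq.2+2)^2*(pq.2+1) : ℕ)):ℝ)⁻¹) := by
    intro pq
    rw [ENNReal.ofReal_inv_of_pos (by positivity), ENNReal.ofReal_natCast]
  simp_rw [h]
  rw [← ENNReal.ofReal_tsum_of_nonneg (fun pq => by positivity) Z21_real_summable]
  exact ENNReal.ofReal_ne_top

lemma stepB :
    (∑' pq : ℕ×ℕ, ((((pq.1+1)*(pq.2+1)*(pq.1+pq.2+2) : ℕ)):ℝ≥0∞)⁻¹)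
      = (∑' pq : ℕ×ℕ, ((((pq.1+pq.2+2)^2*(pq.2+1) : ℕ)):ℝ≥0∞)⁻¹)
        + ∑' p : ℕ, ((((p+1)^3 : ℕ)):ℝ≥0∞)⁻¹ := by
  rw [ENNReal.tsum_prod']
  have h : ∀ p : ℕ, (∑' q : ℕ, ((((p+1)*(q+1)*(p+q+2) : ℕ)):ℝ≥0∞)⁻¹)
      = (∑ i ∈ Finset.range p, ((((p+1)^2*(i+1) : ℕ)):ℝ≥0∞)⁻¹)
        + ((((p+1)^3 : ℕ)):ℝ≥0∞)⁻¹ := by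
    intro p
    rw [stepB_inner p, Finset.sum_range_succ]
    congr 2
  simp_rw [h]
  rw [ENNReal.tsum_add, ← reindexB]

lemma key_ennreal :
    (∑' k : ℕ, ∑' l : ℕ, if 1 ≤ l ∧ l < k then ((k:ℝ≥0∞) ^ 2 * (l:ℝ≥0∞))⁻¹ else 0)
      = ∑' k : ℕ, (((k:ℝ≥0∞) + 1) ^ 3)⁻¹ := by
  have h1 := stepA
  rw [stepB] at h1
  have h2 : (∑' pq : ℕ×ℕ, ((((pq.1+pq.2+2)^2*(pq.2+1) : ℕ)):ℝ≥0∞)⁻¹)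
      = ∑' p : ℕ, ((((p+1)^3 : ℕ)):ℝ≥0∞)⁻¹ :=
    ((ENNReal.add_right_inj Z21_ne_top).1 h1).symm
  rw [reindexL, h2]
  refine tsum_congr fun k => ?_
  congr 1
  push_cast
  ring

/-- ζ(2,1) = ζ(3): ∑_{k>l≥1} 1/(k²·l) = ∑_{k≥1} 1/k³. -/
theorem zeta_two_one_eq_zeta_three :
    (∑' k : ℕ, ∑' l : ℕ, if 1 ≤ l ∧ l < k then ((k : ℝ) ^ 2 * (l : ℝ))⁻¹ else 0)
      = ∑' k : ℕ, (((k : ℝ) + 1) ^ 3)⁻¹ := by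
  have hterm : ∀ k l : ℕ,
      ((if 1 ≤ l ∧ l < k then ((k:ℝ≥0∞) ^ 2 * (l:ℝ≥0∞))⁻¹ else 0)).toReal
        = if 1 ≤ l ∧ l < k then ((k : ℝ) ^ 2 * (l : ℝ))⁻¹ else 0 := by
    intro k l
    rw [apply_ite ENNReal.toReal]
    simp [ENNReal.toReal_inv]
  have htop : ∀ k l : ℕ,
      (if 1 ≤ l ∧ l < k then ((k:ℝ≥0∞) ^ 2 * (l:ℝ≥0∞))⁻¹ else 0) ≠ ⊤ := by
    intro k l
    split_ifs with h
    · simp only [ne_eq, ENNReal.inv_eq_top]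
      intro hc
      have hk : (k:ℝ≥0∞) ≠ 0 := by
        simp only [ne_eq, Nat.cast_eq_zero]
        omega
      have hl : (l:ℝ≥0∞) ≠ 0 := by
        simp only [ne_eq, Nat.cast_eq_zero]
        omega
      exact (mul_ne_zero (pow_ne_zero 2 hk) hl) hc
    · exact ENNReal.zero_ne_top
  have hinner : ∀ k : ℕ,
      (∑' l : ℕ, if 1 ≤ l ∧ l < k then ((k:ℝ≥0∞) ^ 2 * (l:ℝ≥0∞))⁻¹ else 0) ≠ ⊤ := by
    intro k
    rw [tsum_eq_sum (s := Finset.range k)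
      (fun l hl => if_neg (by simp at hl; omega))]
    exact ENNReal.sum_ne_top.2 fun l _ => htop k l
  have lhs_eq : (∑' k : ℕ, ∑' l : ℕ, if 1 ≤ l ∧ l < k then ((k : ℝ) ^ 2 * (l : ℝ))⁻¹ else 0)
      = (∑' k : ℕ, ∑' l : ℕ,
          if 1 ≤ l ∧ l < k then ((k:ℝ≥0∞) ^ 2 * (l:ℝ≥0∞))⁻¹ else 0).toReal := by
    rw [ENNReal.tsum_toReal_eq hinner]
    refine (tsum_congr fun k => ?_).symm
    rw [ENNReal.tsum_toReal_eq (htop k)]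
    exact tsum_congr fun l => hterm k l
  have rhs_eq : (∑' k : ℕ, (((k : ℝ) + 1) ^ 3)⁻¹)
      = (∑' k : ℕ, (((k:ℝ≥0∞) + 1) ^ 3)⁻¹).toReal := by
    rw [ENNReal.tsum_toReal_eq (fun k => by
      simp only [ne_eq, ENNReal.inv_eq_top, pow_eq_zero_iff, OfNat.ofNat_ne_zero,
        and_false, not_false_eq_true]
      simp)]
    refine (tsum_congr fun k => ?_).symm
    rw [ENNReal.toReal_inv]
    congr 1
  rw [lhs_eq, rhs_eq, key_ennreal]
end

section
/- ζ(1̄,2̄) = −2·ζ(1̄,2) + ζ(2̄,1), i.e., Σ_{k>l≥1} (−1)^{k+l}/(k·l²) = −2·Σ_{k>l≥1} (−1)^k/(k·l²) + Σ_{k>l≥1} (−1)^k/(k²·l). -/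
open Filter Topology Finset



private lemma zb_sum_Icc_eq (f : ℕ → ℝ) (h0 : f 0 = 0) (N : ℕ) :
    ∑ k ∈ Finset.Icc 1 N, f k = ∑ k ∈ Finset.range (N + 1), f k := by
  have h : Finset.range (N + 1) = insert 0 (Finset.Icc 1 N) := by
    ext x; simp [Nat.lt_succ_iff]; omega
  rw [h, Finset.sum_insert (by simp), h0, zero_add]

private lemma zb_tendsto_Icc (f : ℕ → ℝ) (c : ℝ) (h : HasSum f c) (h0 : f 0 = 0) :
    Tendsto (fun N : ℕ => ∑ k ∈ Finset.Icc 1 N, f k) atTop (𝓝 c) := by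
  have h1 := h.tendsto_sum_nat
  have h2 : Tendsto (fun N : ℕ => ∑ k ∈ Finset.range (N + 1), f k) atTop (𝓝 c) :=
    h1.comp (tendsto_add_atTop_nat 1)
  exact h2.congr (fun N => (zb_sum_Icc_eq f h0 N).symm)

private lemma zb_bounded (g : ℕ → ℝ) (c : ℝ) (h : Tendsto g atTop (𝓝 c)) :
    ∃ C : ℝ, 0 ≤ C ∧ ∀ n, |g n| ≤ C := by
  obtain ⟨R, hR0, hR⟩ := cauchySeq_bdd h.cauchySeq
  refine ⟨|g 0| + R, by positivity, fun n => ?_⟩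
  have := hR n 0
  rw [Real.dist_eq] at this
  calc |g n| = |g n - g 0 + g 0| := by ring_nf
    _ ≤ |g n - g 0| + |g 0| := abs_add_le _ _
    _ ≤ _ := by linarith

private lemma zb_square_split (N : ℕ) (f g : ℕ → ℝ) :
    (∑ k ∈ Finset.Icc 1 N, f k) * (∑ l ∈ Finset.Icc 1 N, g l) =
      (∑ k ∈ Finset.Icc 1 N, ∑ l ∈ Finset.Ico 1 k, f k * g l)
      + (∑ l ∈ Finset.Icc 1 N, ∑ k ∈ Finset.Ico 1 l, f k * g l)
      + ∑ k ∈ Finset.Icc 1 N, f k * g k := by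
  rw [Finset.sum_mul_sum]
  have key : ∀ k ∈ Finset.Icc 1 N, ∑ l ∈ Finset.Icc 1 N, f k * g l =
      (∑ l ∈ Finset.Ico 1 k, f k * g l) + (f k * g k + ∑ l ∈ Finset.Ico (k+1) (N+1), f k * g l) := by
    intro k hk
    simp only [Finset.mem_Icc] at hk
    have h1 : Finset.Icc 1 N = Finset.Ico 1 (N+1) := by ext x; simp [Nat.lt_succ_iff]
    rw [h1, ← Finset.sum_Ico_consecutive _ (by omega : 1 ≤ k) (by omega : k ≤ N+1),
      Finset.sum_eq_sum_Ico_succ_bot (by omega : k < N+1)]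
  rw [Finset.sum_congr rfl key]
  rw [Finset.sum_add_distrib, Finset.sum_add_distrib]
  have h1 : Finset.Icc 1 N = Finset.Ico 1 (N+1) := by ext x; simp [Nat.lt_succ_iff]
  have h2 : (∑ k ∈ Finset.Icc 1 N, ∑ l ∈ Finset.Ico (k+1) (N+1), f k * g l)
      = ∑ l ∈ Finset.Icc 1 N, ∑ k ∈ Finset.Ico 1 l, f k * g l := by
    rw [h1, Finset.sum_Ico_Ico_comm']
  rw [h2]; ring

private lemma zb_triangle_reindex (N : ℕ) (f : ℕ → ℕ → ℝ) :
    (∑ k ∈ Finset.Icc 1 N, ∑ j ∈ Finset.Ico 1 k, f k j)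
      = ∑ d ∈ Finset.Icc 1 N, ∑ j ∈ Finset.Icc 1 (N - d), f (j + d) j := by
  rw [Finset.sum_sigma', Finset.sum_sigma']
  refine Finset.sum_nbij' (fun x => ⟨x.1 - x.2, x.2⟩) (fun x => ⟨x.2 + x.1, x.2⟩) ?_ ?_ ?_ ?_ ?_
  · rintro ⟨p, q⟩ h
    simp only [Finset.mem_sigma, Finset.mem_Icc, Finset.mem_Ico] at h ⊢
    omega
  · rintro ⟨p, q⟩ h
    simp only [Finset.mem_sigma, Finset.mem_Icc, Finset.mem_Ico] at h ⊢
    omega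
  · rintro ⟨p, q⟩ h
    simp only [Finset.mem_sigma, Finset.mem_Icc, Finset.mem_Ico] at h
    simp only [Sigma.mk.inj_iff]
    exact ⟨by omega, HEq.rfl⟩
  · rintro ⟨p, q⟩ h
    simp only [Finset.mem_sigma, Finset.mem_Icc, Finset.mem_Ico] at h
    simp only [Sigma.mk.inj_iff]
    exact ⟨by omega, HEq.rfl⟩
  · rintro ⟨p, q⟩ h
    simp only [Finset.mem_sigma, Finset.mem_Icc, Finset.mem_Ico] at h
    have hq : q + (p - q) = p := by omega
    simp only [hq]

private lemma zb_triangle_swap (N : ℕ) (f : ℕ → ℕ → ℝ) :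
    ∑ d ∈ Finset.Icc 1 N, ∑ j ∈ Finset.Icc 1 (N - d), f d j
      = ∑ d ∈ Finset.Icc 1 N, ∑ j ∈ Finset.Icc 1 (N - d), f j d := by
  rw [Finset.sum_sigma', Finset.sum_sigma']
  refine Finset.sum_nbij' (fun x => ⟨x.2, x.1⟩) (fun x => ⟨x.2, x.1⟩) ?_ ?_ ?_ ?_ ?_
  · rintro ⟨p, q⟩ h
    simp only [Finset.mem_sigma, Finset.mem_Icc] at h ⊢
    omega
  · rintro ⟨p, q⟩ h
    simp only [Finset.mem_sigma, Finset.mem_Icc] at h ⊢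
    omega
  · rintro ⟨p, q⟩ h; rfl
  · rintro ⟨p, q⟩ h; rfl
  · rintro ⟨p, q⟩ h; rfl



noncomputable def zbH (n : ℕ) : ℝ := ∑ j ∈ Finset.Icc 1 n, (j : ℝ)⁻¹

private lemma zbH_nonneg (n : ℕ) : 0 ≤ zbH n :=
  Finset.sum_nonneg fun j _ => by positivity

private lemma zbH_mono : Monotone zbH := by
  intro m n h
  exact Finset.sum_le_sum_of_subset_of_nonneg (Finset.Icc_subset_Icc_right h)
    (fun j _ _ => by positivity)

private lemma zbH_range (n : ℕ) : zbH n = ∑ i ∈ Finset.range n, ((1 + i : ℕ) : ℝ)⁻¹ := by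
  unfold zbH
  have h : Finset.Icc 1 n = Finset.Ico 1 (n + 1) := by
    ext x; simp only [Finset.mem_Icc, Finset.mem_Ico]; omega
  rw [h, Finset.sum_Ico_eq_sum_range]
  norm_num

private lemma zb_Ioc_range (m n : ℕ) (f : ℕ → ℝ) :
    ∑ j ∈ Finset.Ioc m n, f j = ∑ i ∈ Finset.range (n - m), f (m + 1 + i) := by
  have h : Finset.Ioc m n = Finset.Ico (m + 1) (n + 1) := by
    ext x; simp only [Finset.mem_Ioc, Finset.mem_Ico]; omega
  rw [h, Finset.sum_Ico_eq_sum_range]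
  have h2 : n + 1 - (m + 1) = n - m := by omega
  rw [h2]

private lemma zbH_split {m n : ℕ} (h : m ≤ n) :
    zbH n = zbH m + ∑ j ∈ Finset.Ioc m n, (j : ℝ)⁻¹ := by
  have h0 : ∀ k : ℕ, zbH k = ∑ j ∈ Finset.Ioc 0 k, (j : ℝ)⁻¹ := by
    intro k; unfold zbH
    apply Finset.sum_congr _ (fun _ _ => rfl)
    ext x; simp only [Finset.mem_Icc, Finset.mem_Ioc]; omega
  rw [h0, h0, ← Finset.sum_Ioc_consecutive _ (Nat.zero_le m) h]

private lemma zbH_diff_le {d N : ℕ} (h : d ≤ N) : zbH N - zbH (N - d) ≤ zbH d := by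
  rw [zbH_split (Nat.sub_le N d), zb_Ioc_range]
  have h3 : N - (N - d) = d := by omega
  rw [h3]
  have hzd : zbH d = ∑ i ∈ Finset.range d, ((1 + i : ℕ) : ℝ)⁻¹ := zbH_range d
  have key : ∑ i ∈ Finset.range d, ((N - d + 1 + i : ℕ) : ℝ)⁻¹
      ≤ ∑ i ∈ Finset.range d, ((1 + i : ℕ) : ℝ)⁻¹ := by
    apply Finset.sum_le_sum
    intro i _
    exact inv_anti₀ (by positivity) (Nat.cast_le.mpr (by omega))
  linarith

private lemma zbH_diff_nonneg {d N : ℕ} : 0 ≤ zbH N - zbH (N - d) := by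
  have := zbH_mono (Nat.sub_le N d)
  linarith

private lemma zbH_diff_le' {d N : ℕ} (h : d ≤ N) :
    zbH N - zbH (N - d) ≤ (d : ℝ) * (((N - d + 1 : ℕ) : ℝ))⁻¹ := by
  rw [zbH_split (Nat.sub_le N d), zb_Ioc_range]
  have h3 : N - (N - d) = d := by omega
  rw [h3]
  have key : ∑ i ∈ Finset.range d, ((N - d + 1 + i : ℕ) : ℝ)⁻¹
      ≤ ∑ i ∈ Finset.range d, (((N - d + 1 : ℕ) : ℝ))⁻¹ := by
    apply Finset.sum_le_sum
    intro i _
    exact inv_anti₀ (by positivity) (Nat.cast_le.mpr (by omega))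
  rw [Finset.sum_const, Finset.card_range, nsmul_eq_mul] at key
  linarith

private lemma zb_inner_eq {d N : ℕ} (hdN : d ≤ N) :
    ∑ j ∈ Finset.Icc 1 (N - d), (((j + d : ℕ) : ℝ)⁻¹ - (j : ℝ)⁻¹)
      = (zbH N - zbH (N - d)) - zbH d := by
  rw [Finset.sum_sub_distrib]
  have h1 : ∑ j ∈ Finset.Icc 1 (N - d), ((j : ℕ) : ℝ)⁻¹ = zbH (N - d) := rfl
  have h2 : ∑ j ∈ Finset.Icc 1 (N - d), (((j + d : ℕ) : ℝ))⁻¹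
      = ∑ j ∈ Finset.Ioc d N, ((j : ℕ) : ℝ)⁻¹ := by
    rw [zb_Ioc_range]
    have h : Finset.Icc 1 (N - d) = Finset.Ico 1 (N - d + 1) := by
      ext x; simp only [Finset.mem_Icc, Finset.mem_Ico]; omega
    rw [h, Finset.sum_Ico_eq_sum_range]
    have h4 : N - d + 1 - 1 = N - d := by omega
    rw [h4]
    apply Finset.sum_congr rfl
    intro i _
    rw [show 1 + i + d = d + 1 + i from by omega]
  rw [h1, h2]
  have h5 : zbH N = zbH d + ∑ j ∈ Finset.Ioc d N, ((j:ℕ) : ℝ)⁻¹ := zbH_split hdN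
  linarith
private lemma zbH_succ (n : ℕ) : zbH (n + 1) = zbH n + ((n : ℝ) + 1)⁻¹ := by
  unfold zbH
  rw [Finset.sum_Icc_succ_top (by omega)]
  push_cast
  ring

private lemma zbH_sqrt (n : ℕ) : zbH n ≤ 2 * Real.sqrt n := by
  induction n with
  | zero => simp [zbH]
  | succ n ih =>
    rw [zbH_succ]
    set s := Real.sqrt (n + 1) with hs
    set t := Real.sqrt n with ht
    have hs2 : s ^ 2 = (n : ℝ) + 1 := by
      rw [hs]; rw [Real.sq_sqrt (by positivity)]
    have ht2 : t ^ 2 = (n : ℝ) := by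
      rw [ht]; rw [Real.sq_sqrt (by positivity)]
    have hts : t ≤ s := Real.sqrt_le_sqrt (by push_cast; linarith)
    have ht0 : 0 ≤ t := Real.sqrt_nonneg _
    have hs0 : 0 < s := Real.sqrt_pos.mpr (by positivity)
    have hsx : s ≤ (n : ℝ) + 1 := by nlinarith [sq_nonneg (s - 1)]
    have key : ((n : ℝ) + 1)⁻¹ ≤ 2 * (s - t) := by
      have h1 : (s - t) * (s + t) = 1 := by nlinarith
      have h2 : s + t ≤ 2 * ((n : ℝ) + 1) := by nlinarith
      have h3 : 0 < (n : ℝ) + 1 := by positivity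
      have h4 : 1 ≤ 2 * (s - t) * ((n : ℝ) + 1) := by nlinarith
      rw [inv_eq_one_div, div_le_iff₀ h3]
      linarith
    have hcast : Real.sqrt ((n : ℕ) + 1 : ℕ) = s := by
      rw [hs]; norm_num
    calc zbH n + ((n : ℝ) + 1)⁻¹ ≤ 2 * t + 2 * (s - t) := by linarith
      _ = 2 * s := by ring
      _ = 2 * Real.sqrt ((n + 1 : ℕ) : ℝ) := by rw [hs]; norm_num

private lemma zb_bound_summable : Summable (fun d : ℕ => ((d:ℝ)^2)⁻¹ * zbH d) := by
  have hmaj : Summable (fun d : ℕ => 2 * (((d:ℝ) ^ ((3:ℝ)/2))⁻¹)) :=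
    (Real.summable_nat_rpow_inv.mpr (by norm_num)).mul_left 2
  apply Summable.of_nonneg_of_le (fun d => mul_nonneg (by positivity) (zbH_nonneg d)) _ hmaj
  intro d
  rcases Nat.eq_zero_or_pos d with rfl | hd
  · simp [zbH]
  · have hx : (0:ℝ) < d := by exact_mod_cast hd
    have hxx : (d:ℝ) ^ ((3:ℝ)/2) * Real.sqrt d = (d:ℝ) ^ 2 := by
      rw [Real.sqrt_eq_rpow, ← Real.rpow_add hx]
      norm_num
    have hne : ((d:ℝ) ^ ((3:ℝ)/2)) ≠ 0 := by positivity
    have hsne : Real.sqrt d ≠ 0 := by positivity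
    have key : ((d:ℝ)^2)⁻¹ * (2 * Real.sqrt d) = 2 * (((d:ℝ) ^ ((3:ℝ)/2))⁻¹) := by
      rw [← hxx, mul_inv]
      field_simp
    calc ((d:ℝ)^2)⁻¹ * zbH d ≤ ((d:ℝ)^2)⁻¹ * (2 * Real.sqrt d) :=
          mul_le_mul_of_nonneg_left (zbH_sqrt d) (by positivity)
      _ = _ := key

private lemma zb_HX (v : ℕ → ℝ) (hv : ∀ d, |v d| ≤ ((d:ℝ)^2)⁻¹) (hv0 : v 0 = 0) :
    Tendsto (fun N : ℕ => ∑ d ∈ Finset.Icc 1 N,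
        v d * (∑ j ∈ Finset.Icc 1 (N - d), (((j + d : ℕ) : ℝ)⁻¹ - (j : ℝ)⁻¹)))
      atTop (𝓝 (-∑' d : ℕ, v d * zbH d)) := by
  set inner : ℕ → ℕ → ℝ :=
    fun N d => ∑ j ∈ Finset.Icc 1 (N - d), (((j + d : ℕ) : ℝ)⁻¹ - (j : ℝ)⁻¹) with hinner
  have hin0 : ∀ N d, N < d → inner N d = 0 := by
    intro N d h
    rw [hinner]
    simp only []
    have : N - d = 0 := by omega
    rw [this]
    simp
  have habs : ∀ N d, 1 ≤ d → |inner N d| ≤ zbH d := by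
    intro N d hd
    rcases le_or_gt d N with h | h
    · have he : inner N d = (zbH N - zbH (N - d)) - zbH d := zb_inner_eq h
      have h1 := zbH_diff_le h
      have h2 := zbH_diff_nonneg (d := d) (N := N)
      have h3 := zbH_nonneg d
      rw [he, abs_le]
      constructor <;> linarith
    · rw [hin0 N d h, abs_zero]
      exact zbH_nonneg d
  have hbound : ∀ N d, |v d * inner N d| ≤ ((d:ℝ)^2)⁻¹ * zbH d := by
    intro N d
    rcases Nat.eq_zero_or_pos d with rfl | hd
    · rw [hv0, zero_mul, abs_zero]
      exact mul_nonneg (by positivity) (zbH_nonneg 0)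
    · rw [abs_mul]
      exact mul_le_mul (hv d) (habs N d hd) (abs_nonneg _) (by positivity)
  have hpt : ∀ d, Tendsto (fun N => v d * inner N d) atTop (𝓝 (-(v d * zbH d))) := by
    intro d
    rcases Nat.eq_zero_or_pos d with rfl | hd
    · simp only [hv0, zero_mul, neg_zero]
      exact tendsto_const_nhds
    · have hup : Tendsto (fun N : ℕ => (d : ℝ) * (((N - d + 1 : ℕ) : ℝ))⁻¹) atTop (𝓝 0) := by
        have h1 : Tendsto (fun N : ℕ => (N - d + 1 : ℕ)) atTop atTop :=
          (tendsto_add_atTop_nat 1).comp (tendsto_sub_atTop_nat d)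
        have h2 : Tendsto (fun N : ℕ => (((N - d + 1 : ℕ) : ℝ))) atTop atTop :=
          tendsto_natCast_atTop_atTop.comp h1
        have h3 := h2.inv_tendsto_atTop
        have := h3.const_mul (d : ℝ)
        simpa using this
      have hmid : Tendsto (fun N => inner N d + zbH d) atTop (𝓝 0) := by
        apply tendsto_of_tendsto_of_tendsto_of_le_of_le' tendsto_const_nhds hup
        · filter_upwards [eventually_ge_atTop d] with N hN
          have he : inner N d = (zbH N - zbH (N - d)) - zbH d := zb_inner_eq hN
          rw [he]
          have := zbH_diff_nonneg (d := d) (N := N)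
          linarith
        · filter_upwards [eventually_ge_atTop d] with N hN
          have he : inner N d = (zbH N - zbH (N - d)) - zbH d := zb_inner_eq hN
          rw [he]
          have := zbH_diff_le' hN
          linarith
      have : Tendsto (fun N => inner N d) atTop (𝓝 (-(zbH d))) := by
        have := hmid.sub_const (zbH d)
        simp only [add_sub_cancel_right, zero_sub] at this
        exact this
      have := this.const_mul (v d)
      simpa [mul_neg] using this
  have hsum := zb_bound_summable
  have key := tendsto_tsum_of_dominated_convergence hsum hpt
    (Filter.Eventually.of_forall hbound)
  have heq : ∀ N : ℕ, ∑' d : ℕ, v d * inner N d = ∑ d ∈ Finset.Icc 1 N, v d * inner N d := by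
    intro N
    apply tsum_eq_sum
    intro d hd
    simp only [Finset.mem_Icc] at hd
    rcases Nat.eq_zero_or_pos d with rfl | hd1
    · rw [hv0, zero_mul]
    · rw [hin0 N d (by omega), mul_zero]
  rw [tsum_neg] at key
  exact key.congr heq

private lemma zb_mertens (v u : ℕ → ℝ) (V L C : ℝ) (hv : Summable v) (hv0 : v 0 = 0)
    (hV : ∑' l : ℕ, v l = V)
    (hU : Tendsto (fun N : ℕ => ∑ m ∈ Finset.Icc 1 N, u m) atTop (𝓝 L))
    (hC : ∀ N, |∑ m ∈ Finset.Icc 1 N, u m| ≤ C) :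
    Tendsto (fun N : ℕ => ∑ l ∈ Finset.Icc 1 N, v l * ∑ m ∈ Finset.Icc 1 (N - l), u m)
      atTop (𝓝 (V * L)) := by
  set U : ℕ → ℝ := fun N => ∑ m ∈ Finset.Icc 1 N, u m with hUdef
  have hU0 : U 0 = 0 := by simp [hUdef]
  have hpt : ∀ l, Tendsto (fun N => v l * U (N - l)) atTop (𝓝 (v l * L)) :=
    fun l => ((hU.comp (tendsto_sub_atTop_nat l)).const_mul (v l))
  have hbd : ∀ N l, |v l * U (N - l)| ≤ |v l| * C := by
    intro N l; rw [abs_mul]; exact mul_le_mul_of_nonneg_left (hC _) (abs_nonneg _)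
  have hsum : Summable (fun l => |v l| * C) := hv.abs.mul_right C
  have key := tendsto_tsum_of_dominated_convergence hsum hpt
    (Filter.Eventually.of_forall hbd)
  have hg : ∑' l : ℕ, v l * L = V * L := by rw [tsum_mul_right, hV]
  rw [hg] at key
  refine key.congr ?_
  intro N
  apply tsum_eq_sum
  intro l hl
  simp only [Finset.mem_Icc] at hl
  rcases Nat.eq_zero_or_pos l with rfl | hl1
  · rw [hv0, zero_mul]
  · have : N - l = 0 := by omega
    rw [this, hU0, mul_zero]

private lemma zb_sumw2 : Summable (fun l : ℕ => ((l:ℝ)^2)⁻¹) := by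
  have := Real.summable_one_div_nat_pow.mpr (by norm_num : 1 < 2)
  exact this.congr (fun n => by rw [one_div])

private lemma zb_sumw3 : Summable (fun l : ℕ => ((l:ℝ)^3)⁻¹) := by
  have := Real.summable_one_div_nat_pow.mpr (by norm_num : 1 < 3)
  exact this.congr (fun n => by rw [one_div])

private lemma zb_sumw2a : Summable (fun l : ℕ => (-1:ℝ)^l * ((l:ℝ)^2)⁻¹) := by
  apply Summable.of_norm_bounded zb_sumw2
  intro l
  rw [Real.norm_eq_abs, abs_mul, abs_pow, abs_neg, abs_one, one_pow, one_mul, abs_inv,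
    abs_pow, Nat.abs_cast]

private lemma zb_sumw3a : Summable (fun l : ℕ => (-1:ℝ)^l * ((l:ℝ)^3)⁻¹) := by
  apply Summable.of_norm_bounded zb_sumw3
  intro l
  rw [Real.norm_eq_abs, abs_mul, abs_pow, abs_neg, abs_one, one_pow, one_mul, abs_inv,
    abs_pow, Nat.abs_cast]

private lemma zb_even_tsum (p : ℕ) (hp : Summable (fun l : ℕ => ((l:ℝ)^p)⁻¹))
    (hpa : Summable (fun l : ℕ => (-1:ℝ)^l * ((l:ℝ)^p)⁻¹)) :
    (∑' l : ℕ, ((l:ℝ)^p)⁻¹) + (∑' l : ℕ, (-1:ℝ)^l * ((l:ℝ)^p)⁻¹)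
      = ((2:ℝ)^p)⁻¹ * 2 * ∑' l : ℕ, ((l:ℝ)^p)⁻¹ := by
  set g : ℕ → ℝ := fun l => ((l:ℝ)^p)⁻¹ + (-1:ℝ)^l * ((l:ℝ)^p)⁻¹ with hg
  have h1 : (∑' l : ℕ, ((l:ℝ)^p)⁻¹) + (∑' l : ℕ, (-1:ℝ)^l * ((l:ℝ)^p)⁻¹) = ∑' l, g l :=
    (Summable.tsum_add hp hpa).symm
  have hinj : Function.Injective (fun j : ℕ => 2 * j) := fun a b h => by
    simp only [] at h; omega
  have hzero : ∀ x ∉ Set.range (fun j : ℕ => 2 * j), g x = 0 := by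
    intro x hx
    have hodd : Odd x := by
      rcases Nat.even_or_odd x with he | ho
      · obtain ⟨c, hc⟩ := he
        exact (hx ⟨c, by show 2 * c = x; omega⟩).elim
      · exact ho
    rw [hg]
    simp only [hodd.neg_one_pow]
    ring
  have hcomp : (fun j : ℕ => g (2 * j)) = fun j : ℕ => ((2:ℝ)^p)⁻¹ * 2 * ((j:ℝ)^p)⁻¹ := by
    funext j
    rw [hg]
    simp only []
    have he : Even (2 * j) := ⟨j, by omega⟩
    rw [he.neg_one_pow]
    push_cast
    rw [mul_pow, mul_inv]
    ring
  have hsum2 : HasSum (fun j : ℕ => ((2:ℝ)^p)⁻¹ * 2 * ((j:ℝ)^p)⁻¹)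
      (((2:ℝ)^p)⁻¹ * 2 * ∑' l : ℕ, ((l:ℝ)^p)⁻¹) := hp.hasSum.mul_left _
  have : HasSum g (((2:ℝ)^p)⁻¹ * 2 * ∑' l : ℕ, ((l:ℝ)^p)⁻¹) := by
    rw [← hinj.hasSum_iff hzero]
    rw [show (g ∘ fun j : ℕ => 2 * j) = fun j : ℕ => g (2 * j) from rfl, hcomp]
    exact hsum2
  rw [h1, this.tsum_eq]

private lemma zb_eta2 :
    2 * (∑' l : ℕ, (-1:ℝ)^l * ((l:ℝ)^2)⁻¹) + (∑' l : ℕ, ((l:ℝ)^2)⁻¹) = 0 := by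
  have := zb_even_tsum 2 zb_sumw2 zb_sumw2a
  norm_num at this
  linarith

private lemma zb_eta3 :
    4 * (∑' l : ℕ, (-1:ℝ)^l * ((l:ℝ)^3)⁻¹) + 3 * (∑' l : ℕ, ((l:ℝ)^3)⁻¹) = 0 := by
  have := zb_even_tsum 3 zb_sumw3 zb_sumw3a
  norm_num at this
  linarith

private lemma zb_alt_harmonic :
    ∃ L : ℝ, Tendsto (fun N : ℕ => ∑ k ∈ Finset.Icc 1 N, (-1:ℝ)^k * (k:ℝ)⁻¹) atTop (𝓝 L) := by
  set f : ℕ → ℝ := fun i => ((1 + i : ℕ) : ℝ)⁻¹ with hf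
  have hanti : Antitone f := by
    intro m n h
    exact inv_anti₀ (by positivity) (Nat.cast_le.mpr (by omega))
  have hf0 : Tendsto f atTop (𝓝 0) := by
    have h1 : Tendsto (fun i : ℕ => (1 + i : ℕ)) atTop atTop :=
      (tendsto_add_atTop_nat 1).congr (fun a => by omega)
    exact (tendsto_natCast_atTop_atTop.comp h1).inv_tendsto_atTop
  obtain ⟨l, hl⟩ := hanti.tendsto_alternating_series_of_tendsto_zero hf0
  refine ⟨-l, ?_⟩
  have key : ∀ N : ℕ, ∑ k ∈ Finset.Icc 1 N, (-1:ℝ)^k * (k:ℝ)⁻¹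
      = -(∑ i ∈ Finset.range N, (-1:ℝ)^i * f i) := by
    intro N
    have h : Finset.Icc 1 N = Finset.Ico 1 (N + 1) := by
      ext x; simp only [Finset.mem_Icc, Finset.mem_Ico]; omega
    rw [h, Finset.sum_Ico_eq_sum_range]
    have h2 : N + 1 - 1 = N := by omega
    rw [h2, ← Finset.sum_neg_distrib]
    apply Finset.sum_congr rfl
    intro i _
    rw [hf]
    simp only []
    rw [pow_add, pow_one]
    push_cast
    ring
  exact (hl.neg).congr (fun N => (key N).symm)

private lemma zb_Ico_Icc (l : ℕ) : Finset.Ico 1 l = Finset.Icc 1 (l - 1) := by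
  ext x; simp only [Finset.mem_Ico, Finset.mem_Icc]; omega

private lemma zb_sign1 (j d : ℕ) : (-1:ℝ)^(j + d + j) = (-1:ℝ)^d := by
  rw [show j + d + j = 2 * j + d from by ring, pow_add, pow_mul]
  norm_num

private lemma zb_sign2 (j d : ℕ) : (-1:ℝ)^j * (-1:ℝ)^(j + d) = (-1:ℝ)^d := by
  rw [← pow_add, show j + (j + d) = 2 * j + d from by ring, pow_add, pow_mul]
  norm_num

-- partial fraction identities
private lemma zb_pf1 {j d : ℕ} (hj : 1 ≤ j) (hd : 1 ≤ d) :
    (-1:ℝ)^(j + d + j) * (((j + d : ℕ) : ℝ) * (j:ℝ)^2)⁻¹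
      = (-1:ℝ)^d * ((d:ℝ) * (j:ℝ)^2)⁻¹
        + ((-1:ℝ)^d * ((d:ℝ)^2)⁻¹) * ((((j + d : ℕ) : ℝ))⁻¹ - ((j:ℝ))⁻¹) := by
  rw [zb_sign1]
  have hjr : (0:ℝ) < (j:ℝ) := by exact_mod_cast hj
  have hdr : (0:ℝ) < (d:ℝ) := by exact_mod_cast hd
  push_cast
  have hjd : (0:ℝ) < (j:ℝ) + (d:ℝ) := by linarith
  field_simp
  ring

private lemma zb_pf2 {j d : ℕ} (hj : 1 ≤ j) (hd : 1 ≤ d) :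
    (-1:ℝ)^(j + d) * ((((j + d : ℕ) : ℝ))^2 * (j:ℝ))⁻¹
      = ((-1:ℝ)^d * ((d:ℝ)^2)⁻¹) * ((-1:ℝ)^j * ((j:ℝ))⁻¹)
        - (-1:ℝ)^(j + d) * ((d:ℝ)^2 * (((j + d : ℕ) : ℝ)))⁻¹
        - (-1:ℝ)^(j + d) * ((d:ℝ) * (((j + d : ℕ) : ℝ))^2)⁻¹ := by
  have hjr : (0:ℝ) < (j:ℝ) := by exact_mod_cast hj
  have hdr : (0:ℝ) < (d:ℝ) := by exact_mod_cast hd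
  have hsg : (-1:ℝ)^(j+d) = (-1:ℝ)^j * (-1:ℝ)^d := by rw [pow_add]
  push_cast
  have hjd : (0:ℝ) < (j:ℝ) + (d:ℝ) := by linarith
  rw [hsg]
  field_simp
  ring

private lemma zb_pf3 {j d : ℕ} (hj : 1 ≤ j) (hd : 1 ≤ d) :
    ((-1:ℝ)^j * (j:ℝ)⁻¹) * ((-1:ℝ)^(j + d) * ((((j + d : ℕ) : ℝ))^2)⁻¹)
      = -(((-1:ℝ)^d * ((d:ℝ)^2)⁻¹) * ((((j + d : ℕ) : ℝ))⁻¹ - ((j:ℝ))⁻¹))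
        + -((-1:ℝ)^d * ((d:ℝ) * (((j + d : ℕ) : ℝ))^2)⁻¹) := by
  have hjr : (0:ℝ) < (j:ℝ) := by exact_mod_cast hj
  have hdr : (0:ℝ) < (d:ℝ) := by exact_mod_cast hd
  have hsg : (-1:ℝ)^(j+d) = (-1:ℝ)^j * (-1:ℝ)^d := by rw [pow_add]
  push_cast
  have hjd : (0:ℝ) < (j:ℝ) + (d:ℝ) := by linarith
  rw [hsg]
  have hj2 : (-1:ℝ)^j * (-1:ℝ)^j = 1 := by
    rw [← pow_add, show j + j = 2 * j from by ring, pow_mul]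
    norm_num
  field_simp
  have hj2' : ((-1:ℝ)^j)^2 = 1 := by rw [sq]; exact hj2
  rw [hj2']; ring

private lemma zb_identS1 (N : ℕ) :
    (∑ k ∈ Finset.Icc 1 N, (-1:ℝ)^k * (k:ℝ)⁻¹) * (∑ l ∈ Finset.Icc 1 N, (-1:ℝ)^l * ((l:ℝ)^2)⁻¹)
      = (∑ k ∈ Finset.Icc 1 N, ∑ l ∈ Finset.Ico 1 k, (-1:ℝ)^(k + l) * ((k:ℝ) * (l:ℝ)^2)⁻¹)
        + (∑ l ∈ Finset.Icc 1 N,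
            (∑ k ∈ Finset.Icc 1 (l - 1), (-1:ℝ)^k * (k:ℝ)⁻¹) * ((-1:ℝ)^l * ((l:ℝ)^2)⁻¹))
        + ∑ k ∈ Finset.Icc 1 N, ((k:ℝ)^3)⁻¹ := by
  rw [zb_square_split N (fun k => (-1:ℝ)^k * (k:ℝ)⁻¹) (fun l => (-1:ℝ)^l * ((l:ℝ)^2)⁻¹)]
  congr 1
  congr 1
  · apply Finset.sum_congr rfl; intro k _
    apply Finset.sum_congr rfl; intro l _
    rw [pow_add, mul_inv]; ring
  · apply Finset.sum_congr rfl; intro l _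
    rw [zb_Ico_Icc, Finset.sum_mul]
  · apply Finset.sum_congr rfl; intro k _
    have hj2 : (-1:ℝ)^k * (-1:ℝ)^k = 1 := by
      rw [← pow_add, show k + k = 2 * k from by ring, pow_mul]; norm_num
    have h3 : ((k:ℝ)^3)⁻¹ = (k:ℝ)⁻¹ * ((k:ℝ)^2)⁻¹ := by
      rw [← mul_inv]; congr 1; ring
    rw [h3]
    linear_combination ((k:ℝ)⁻¹ * ((k:ℝ)^2)⁻¹) * hj2

private lemma zb_identS2 (N : ℕ) :
    (∑ k ∈ Finset.Icc 1 N, (-1:ℝ)^k * (k:ℝ)⁻¹) * (∑ l ∈ Finset.Icc 1 N, ((l:ℝ)^2)⁻¹)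
      = (∑ k ∈ Finset.Icc 1 N, ∑ l ∈ Finset.Ico 1 k, (-1:ℝ)^k * ((k:ℝ) * (l:ℝ)^2)⁻¹)
        + (∑ l ∈ Finset.Icc 1 N,
            (∑ k ∈ Finset.Icc 1 (l - 1), (-1:ℝ)^k * (k:ℝ)⁻¹) * ((l:ℝ)^2)⁻¹)
        + ∑ k ∈ Finset.Icc 1 N, (-1:ℝ)^k * ((k:ℝ)^3)⁻¹ := by
  rw [zb_square_split N (fun k => (-1:ℝ)^k * (k:ℝ)⁻¹) (fun l => ((l:ℝ)^2)⁻¹)]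
  congr 1
  congr 1
  · apply Finset.sum_congr rfl; intro k _
    apply Finset.sum_congr rfl; intro l _
    rw [mul_inv]; ring
  · apply Finset.sum_congr rfl; intro l _
    rw [zb_Ico_Icc, Finset.sum_mul]
  · apply Finset.sum_congr rfl; intro k _
    have h3 : ((k:ℝ)^3)⁻¹ = (k:ℝ)⁻¹ * ((k:ℝ)^2)⁻¹ := by
      rw [← mul_inv]; congr 1; ring
    rw [h3]; ring

private lemma zb_identA (N : ℕ) :
    (∑ k ∈ Finset.Icc 1 N, ∑ l ∈ Finset.Ico 1 k, (-1:ℝ)^(k + l) * ((k:ℝ) * (l:ℝ)^2)⁻¹)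
      = (∑ d ∈ Finset.Icc 1 N, ((d:ℝ)^2)⁻¹ * ∑ j ∈ Finset.Icc 1 (N - d), (-1:ℝ)^j * (j:ℝ)⁻¹)
        + ∑ d ∈ Finset.Icc 1 N, ((-1:ℝ)^d * ((d:ℝ)^2)⁻¹) *
            ∑ j ∈ Finset.Icc 1 (N - d), ((((j + d : ℕ)) : ℝ)⁻¹ - (j:ℝ)⁻¹) := by
  have h0 := zb_triangle_reindex N (fun k j => (-1:ℝ)^(k + j) * ((k:ℝ) * (j:ℝ)^2)⁻¹)
  rw [h0]
  calc ∑ d ∈ Finset.Icc 1 N, ∑ j ∈ Finset.Icc 1 (N - d),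
        (-1:ℝ)^(j + d + j) * (((j + d : ℕ) : ℝ) * (j:ℝ)^2)⁻¹
      = ∑ d ∈ Finset.Icc 1 N, ∑ j ∈ Finset.Icc 1 (N - d),
          ((-1:ℝ)^d * ((d:ℝ) * (j:ℝ)^2)⁻¹
            + ((-1:ℝ)^d * ((d:ℝ)^2)⁻¹) * ((((j + d : ℕ) : ℝ))⁻¹ - ((j:ℝ))⁻¹)) := by
        apply Finset.sum_congr rfl; intro d hd
        apply Finset.sum_congr rfl; intro j hj
        simp only [Finset.mem_Icc] at hd hj
        exact zb_pf1 hj.1 hd.1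
    _ = (∑ d ∈ Finset.Icc 1 N, ∑ j ∈ Finset.Icc 1 (N - d), (-1:ℝ)^d * ((d:ℝ) * (j:ℝ)^2)⁻¹)
        + ∑ d ∈ Finset.Icc 1 N, ∑ j ∈ Finset.Icc 1 (N - d),
            ((-1:ℝ)^d * ((d:ℝ)^2)⁻¹) * ((((j + d : ℕ) : ℝ))⁻¹ - ((j:ℝ))⁻¹) := by
        rw [← Finset.sum_add_distrib]
        exact Finset.sum_congr rfl fun d _ => Finset.sum_add_distrib
    _ = _ := by
        congr 1
        · rw [zb_triangle_swap N (fun d j => (-1:ℝ)^d * ((d:ℝ) * (j:ℝ)^2)⁻¹)]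
          apply Finset.sum_congr rfl; intro d _
          rw [Finset.mul_sum]
          apply Finset.sum_congr rfl; intro j _
          rw [mul_inv]; ring
        · exact Finset.sum_congr rfl fun d _ => (Finset.mul_sum _ _ _).symm

private lemma zb_T2 (N : ℕ) :
    ∑ d ∈ Finset.Icc 1 N, ∑ j ∈ Finset.Icc 1 (N - d),
        (-1:ℝ)^(j + d) * ((d:ℝ)^2 * ((j + d : ℕ) : ℝ))⁻¹
      = ∑ k ∈ Finset.Icc 1 N, ∑ l ∈ Finset.Ico 1 k, (-1:ℝ)^k * ((k:ℝ) * (l:ℝ)^2)⁻¹ := by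
  have hsw := zb_triangle_swap N
    (fun d j => (-1:ℝ)^(j + d) * ((d:ℝ)^2 * ((j + d : ℕ) : ℝ))⁻¹)
  rw [hsw]
  have hcomm : ∑ d ∈ Finset.Icc 1 N, ∑ j ∈ Finset.Icc 1 (N - d),
        (-1:ℝ)^(d + j) * ((j:ℝ)^2 * ((d + j : ℕ):ℝ))⁻¹
      = ∑ d ∈ Finset.Icc 1 N, ∑ j ∈ Finset.Icc 1 (N - d),
        (-1:ℝ)^(j + d) * ((j:ℝ)^2 * ((j + d : ℕ):ℝ))⁻¹ := by
    apply Finset.sum_congr rfl; intro d _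
    apply Finset.sum_congr rfl; intro j _
    rw [add_comm d j]
  rw [hcomm]
  have hre := zb_triangle_reindex N (fun k j => (-1:ℝ)^k * ((j:ℝ)^2 * (k:ℝ))⁻¹)
  rw [← hre]
  apply Finset.sum_congr rfl; intro k _
  apply Finset.sum_congr rfl; intro l _
  rw [mul_comm ((l:ℝ)^2) (k:ℝ)]

private lemma zb_T3 (N : ℕ) :
    ∑ d ∈ Finset.Icc 1 N, ∑ j ∈ Finset.Icc 1 (N - d),
        (-1:ℝ)^(j + d) * ((d:ℝ) * (((j + d : ℕ) : ℝ))^2)⁻¹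
      = ∑ k ∈ Finset.Icc 1 N, ∑ j ∈ Finset.Ico 1 k, (-1:ℝ)^k * ((k:ℝ)^2 * (j:ℝ))⁻¹ := by
  have hsw := zb_triangle_swap N
    (fun d j => (-1:ℝ)^(j + d) * ((d:ℝ) * (((j + d : ℕ) : ℝ))^2)⁻¹)
  rw [hsw]
  have hcomm : ∑ d ∈ Finset.Icc 1 N, ∑ j ∈ Finset.Icc 1 (N - d),
        (-1:ℝ)^(d + j) * ((j:ℝ) * (((d + j : ℕ):ℝ))^2)⁻¹
      = ∑ d ∈ Finset.Icc 1 N, ∑ j ∈ Finset.Icc 1 (N - d),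
        (-1:ℝ)^(j + d) * ((j:ℝ) * (((j + d : ℕ):ℝ))^2)⁻¹ := by
    apply Finset.sum_congr rfl; intro d _
    apply Finset.sum_congr rfl; intro j _
    rw [add_comm d j]
  rw [hcomm]
  have hre := zb_triangle_reindex N (fun k j => (-1:ℝ)^k * ((j:ℝ) * ((k:ℝ))^2)⁻¹)
  rw [← hre]
  apply Finset.sum_congr rfl; intro k _
  apply Finset.sum_congr rfl; intro j _
  rw [mul_comm ((j:ℝ)) ((k:ℝ)^2)]

private lemma zb_T3' (N : ℕ) :
    ∑ d ∈ Finset.Icc 1 N, ∑ j ∈ Finset.Icc 1 (N - d),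
        (-1:ℝ)^d * ((d:ℝ) * (((j + d : ℕ) : ℝ))^2)⁻¹
      = ∑ l ∈ Finset.Icc 1 N,
          (∑ k ∈ Finset.Icc 1 (l - 1), (-1:ℝ)^k * (k:ℝ)⁻¹) * ((l:ℝ)^2)⁻¹ := by
  have hsw := zb_triangle_swap N
    (fun d j => (-1:ℝ)^d * ((d:ℝ) * (((j + d : ℕ) : ℝ))^2)⁻¹)
  rw [hsw]
  have hcomm : ∑ d ∈ Finset.Icc 1 N, ∑ j ∈ Finset.Icc 1 (N - d),
        (-1:ℝ)^j * ((j:ℝ) * (((d + j : ℕ):ℝ))^2)⁻¹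
      = ∑ d ∈ Finset.Icc 1 N, ∑ j ∈ Finset.Icc 1 (N - d),
        ((-1:ℝ)^j * (j:ℝ)⁻¹) * ((((j + d : ℕ):ℝ))^2)⁻¹ := by
    apply Finset.sum_congr rfl; intro d _
    apply Finset.sum_congr rfl; intro j _
    rw [add_comm d j, mul_inv]
    ring
  rw [hcomm]
  have hre := zb_triangle_reindex N (fun k j => ((-1:ℝ)^j * (j:ℝ)⁻¹) * (((k:ℝ))^2)⁻¹)
  rw [← hre]
  apply Finset.sum_congr rfl; intro l _
  rw [zb_Ico_Icc, Finset.sum_mul]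

private lemma zb_identC (N : ℕ) :
    (∑ k ∈ Finset.Icc 1 N, ∑ j ∈ Finset.Ico 1 k, (-1:ℝ)^k * ((k:ℝ)^2 * (j:ℝ))⁻¹)
      = (∑ d ∈ Finset.Icc 1 N,
            ((-1:ℝ)^d * ((d:ℝ)^2)⁻¹) * ∑ j ∈ Finset.Icc 1 (N - d), (-1:ℝ)^j * (j:ℝ)⁻¹)
        - (∑ k ∈ Finset.Icc 1 N, ∑ l ∈ Finset.Ico 1 k, (-1:ℝ)^k * ((k:ℝ) * (l:ℝ)^2)⁻¹)
        - (∑ k ∈ Finset.Icc 1 N, ∑ j ∈ Finset.Ico 1 k, (-1:ℝ)^k * ((k:ℝ)^2 * (j:ℝ))⁻¹) := by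
  have h0 := zb_triangle_reindex N (fun k j => (-1:ℝ)^k * ((k:ℝ)^2 * (j:ℝ))⁻¹)
  rw [h0]
  calc ∑ d ∈ Finset.Icc 1 N, ∑ j ∈ Finset.Icc 1 (N - d),
        (-1:ℝ)^(j + d) * ((((j + d : ℕ) : ℝ))^2 * (j:ℝ))⁻¹
      = ∑ d ∈ Finset.Icc 1 N, ∑ j ∈ Finset.Icc 1 (N - d),
          (((-1:ℝ)^d * ((d:ℝ)^2)⁻¹) * ((-1:ℝ)^j * ((j:ℝ))⁻¹)
            - (-1:ℝ)^(j + d) * ((d:ℝ)^2 * (((j + d : ℕ) : ℝ)))⁻¹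
            - (-1:ℝ)^(j + d) * ((d:ℝ) * (((j + d : ℕ) : ℝ))^2)⁻¹) := by
        apply Finset.sum_congr rfl; intro d hd
        apply Finset.sum_congr rfl; intro j hj
        simp only [Finset.mem_Icc] at hd hj
        exact zb_pf2 hj.1 hd.1
    _ = (∑ d ∈ Finset.Icc 1 N, ∑ j ∈ Finset.Icc 1 (N - d),
          ((-1:ℝ)^d * ((d:ℝ)^2)⁻¹) * ((-1:ℝ)^j * ((j:ℝ))⁻¹))
        - (∑ d ∈ Finset.Icc 1 N, ∑ j ∈ Finset.Icc 1 (N - d),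
            (-1:ℝ)^(j + d) * ((d:ℝ)^2 * (((j + d : ℕ) : ℝ)))⁻¹)
        - (∑ d ∈ Finset.Icc 1 N, ∑ j ∈ Finset.Icc 1 (N - d),
            (-1:ℝ)^(j + d) * ((d:ℝ) * (((j + d : ℕ) : ℝ))^2)⁻¹) := by
        rw [← Finset.sum_sub_distrib, ← Finset.sum_sub_distrib]
        apply Finset.sum_congr rfl; intro d _
        rw [← Finset.sum_sub_distrib, ← Finset.sum_sub_distrib]
    _ = _ := by
        rw [zb_T2, zb_T3]
        congr 1
        congr 1
        exact Finset.sum_congr rfl fun d _ => (Finset.mul_sum _ _ _).symm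

private lemma zb_identD (N : ℕ) :
    (∑ l ∈ Finset.Icc 1 N,
        (∑ k ∈ Finset.Icc 1 (l - 1), (-1:ℝ)^k * (k:ℝ)⁻¹) * ((-1:ℝ)^l * ((l:ℝ)^2)⁻¹))
      = -(∑ d ∈ Finset.Icc 1 N, ((-1:ℝ)^d * ((d:ℝ)^2)⁻¹) *
            ∑ j ∈ Finset.Icc 1 (N - d), ((((j + d : ℕ)) : ℝ)⁻¹ - (j:ℝ)⁻¹))
        + -(∑ l ∈ Finset.Icc 1 N,
            (∑ k ∈ Finset.Icc 1 (l - 1), (-1:ℝ)^k * (k:ℝ)⁻¹) * ((l:ℝ)^2)⁻¹) := by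
  have hstart : (∑ l ∈ Finset.Icc 1 N,
        (∑ k ∈ Finset.Icc 1 (l - 1), (-1:ℝ)^k * (k:ℝ)⁻¹) * ((-1:ℝ)^l * ((l:ℝ)^2)⁻¹))
      = ∑ l ∈ Finset.Icc 1 N, ∑ k ∈ Finset.Ico 1 l,
          ((-1:ℝ)^k * (k:ℝ)⁻¹) * ((-1:ℝ)^l * ((l:ℝ)^2)⁻¹) := by
    apply Finset.sum_congr rfl; intro l _
    rw [zb_Ico_Icc, Finset.sum_mul]
  rw [hstart]
  have h0 := zb_triangle_reindex N
    (fun K j => ((-1:ℝ)^j * (j:ℝ)⁻¹) * ((-1:ℝ)^K * ((K:ℝ)^2)⁻¹))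
  rw [h0]
  calc ∑ d ∈ Finset.Icc 1 N, ∑ j ∈ Finset.Icc 1 (N - d),
        ((-1:ℝ)^j * (j:ℝ)⁻¹) * ((-1:ℝ)^(j + d) * ((((j + d : ℕ) : ℝ))^2)⁻¹)
      = ∑ d ∈ Finset.Icc 1 N, ∑ j ∈ Finset.Icc 1 (N - d),
          (-(((-1:ℝ)^d * ((d:ℝ)^2)⁻¹) * ((((j + d : ℕ) : ℝ))⁻¹ - ((j:ℝ))⁻¹))
            + -((-1:ℝ)^d * ((d:ℝ) * (((j + d : ℕ) : ℝ))^2)⁻¹)) := by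
        apply Finset.sum_congr rfl; intro d hd
        apply Finset.sum_congr rfl; intro j hj
        simp only [Finset.mem_Icc] at hd hj
        exact zb_pf3 hj.1 hd.1
    _ = (∑ d ∈ Finset.Icc 1 N, ∑ j ∈ Finset.Icc 1 (N - d),
          -(((-1:ℝ)^d * ((d:ℝ)^2)⁻¹) * ((((j + d : ℕ) : ℝ))⁻¹ - ((j:ℝ))⁻¹)))
        + (∑ d ∈ Finset.Icc 1 N, ∑ j ∈ Finset.Icc 1 (N - d),
            -((-1:ℝ)^d * ((d:ℝ) * (((j + d : ℕ) : ℝ))^2)⁻¹)) := by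
        rw [← Finset.sum_add_distrib]
        exact Finset.sum_congr rfl fun d _ => Finset.sum_add_distrib
    _ = _ := by
        congr 1
        · have h1 : ∑ d ∈ Finset.Icc 1 N, ∑ j ∈ Finset.Icc 1 (N - d),
              -(((-1:ℝ)^d * ((d:ℝ)^2)⁻¹) * ((((j + d : ℕ) : ℝ))⁻¹ - ((j:ℝ))⁻¹))
              = -∑ d ∈ Finset.Icc 1 N, ∑ j ∈ Finset.Icc 1 (N - d),
                (((-1:ℝ)^d * ((d:ℝ)^2)⁻¹) * ((((j + d : ℕ) : ℝ))⁻¹ - ((j:ℝ))⁻¹)) := by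
            rw [← Finset.sum_neg_distrib]
            exact Finset.sum_congr rfl fun d _ => Finset.sum_neg_distrib _
          rw [h1]
          congr 1
          exact Finset.sum_congr rfl fun d _ => (Finset.mul_sum _ _ _).symm
        · have h1 : ∑ d ∈ Finset.Icc 1 N, ∑ j ∈ Finset.Icc 1 (N - d),
              -((-1:ℝ)^d * ((d:ℝ) * (((j + d : ℕ) : ℝ))^2)⁻¹)
              = -∑ d ∈ Finset.Icc 1 N, ∑ j ∈ Finset.Icc 1 (N - d),
                ((-1:ℝ)^d * ((d:ℝ) * (((j + d : ℕ) : ℝ))^2)⁻¹) := by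
            rw [← Finset.sum_neg_distrib]
            exact Finset.sum_congr rfl fun d _ => Finset.sum_neg_distrib _
          rw [h1, zb_T3' N]

/-- ζ(1̄,2̄) = −2·ζ(1̄,2) + ζ(2̄,1).  The conditionally convergent sums
ζ(1̄,2̄) and ζ(1̄,2) are interpreted as limits of partial sums. -/
theorem zeta_1bar_2bar (a b : ℝ)
    (ha : Tendsto (fun N : ℕ => ∑ k ∈ Finset.Icc 1 N, ∑ l ∈ Finset.Ico 1 k,
        (-1 : ℝ) ^ (k + l) * ((k : ℝ) * (l : ℝ) ^ 2)⁻¹) atTop (𝓝 a))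
    (hb : Tendsto (fun N : ℕ => ∑ k ∈ Finset.Icc 1 N, ∑ l ∈ Finset.Ico 1 k,
        (-1 : ℝ) ^ k * ((k : ℝ) * (l : ℝ) ^ 2)⁻¹) atTop (𝓝 b)) :
    a = -2 * b + ∑' k : ℕ, ∑' l : ℕ, if 1 ≤ l ∧ l < k then
          (-1 : ℝ) ^ k * ((k : ℝ) ^ 2 * (l : ℝ))⁻¹ else 0 := by
  classical
  obtain ⟨L, hU⟩ := zb_alt_harmonic
  obtain ⟨C, hC0, hC⟩ := zb_bounded _ L hU
  -- basic limits of Icc partial sums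
  have hZ2t : Tendsto (fun N : ℕ => ∑ l ∈ Finset.Icc 1 N, ((l:ℝ)^2)⁻¹) atTop
      (𝓝 (∑' l : ℕ, ((l:ℝ)^2)⁻¹)) :=
    zb_tendsto_Icc _ _ zb_sumw2.hasSum (by norm_num)
  have hE2t : Tendsto (fun N : ℕ => ∑ l ∈ Finset.Icc 1 N, (-1:ℝ)^l * ((l:ℝ)^2)⁻¹) atTop
      (𝓝 (∑' l : ℕ, (-1:ℝ)^l * ((l:ℝ)^2)⁻¹)) :=
    zb_tendsto_Icc _ _ zb_sumw2a.hasSum (by norm_num)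
  have hZ3t : Tendsto (fun N : ℕ => ∑ l ∈ Finset.Icc 1 N, ((l:ℝ)^3)⁻¹) atTop
      (𝓝 (∑' l : ℕ, ((l:ℝ)^3)⁻¹)) :=
    zb_tendsto_Icc _ _ zb_sumw3.hasSum (by norm_num)
  have hZ3at : Tendsto (fun N : ℕ => ∑ l ∈ Finset.Icc 1 N, (-1:ℝ)^l * ((l:ℝ)^3)⁻¹) atTop
      (𝓝 (∑' l : ℕ, (-1:ℝ)^l * ((l:ℝ)^3)⁻¹)) :=
    zb_tendsto_Icc _ _ zb_sumw3a.hasSum (by norm_num)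
  -- d-sequence
  have hdsum : Summable (fun l : ℕ =>
      (∑ k ∈ Finset.Icc 1 (l-1), (-1:ℝ)^k * (k:ℝ)⁻¹) * ((-1:ℝ)^l * ((l:ℝ)^2)⁻¹)) := by
    apply Summable.of_norm_bounded (g := fun l : ℕ => C * ((l:ℝ)^2)⁻¹) (zb_sumw2.mul_left C)
    intro l
    rw [Real.norm_eq_abs, abs_mul]
    have h2 : |(-1:ℝ)^l * ((l:ℝ)^2)⁻¹| = ((l:ℝ)^2)⁻¹ := by
      rw [abs_mul, abs_pow, abs_neg, abs_one, one_pow, one_mul, abs_inv, abs_pow, Nat.abs_cast]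
    rw [h2]
    exact mul_le_mul_of_nonneg_right (hC (l-1)) (by positivity)
  have hDt : Tendsto (fun N : ℕ => ∑ l ∈ Finset.Icc 1 N,
      (∑ k ∈ Finset.Icc 1 (l-1), (-1:ℝ)^k * (k:ℝ)⁻¹) * ((-1:ℝ)^l * ((l:ℝ)^2)⁻¹)) atTop
      (𝓝 (∑' l : ℕ,
        (∑ k ∈ Finset.Icc 1 (l-1), (-1:ℝ)^k * (k:ℝ)⁻¹) * ((-1:ℝ)^l * ((l:ℝ)^2)⁻¹))) :=
    zb_tendsto_Icc _ _ hdsum.hasSum (by simp)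
  -- e-sequence
  have hesum : Summable (fun l : ℕ =>
      (∑ k ∈ Finset.Icc 1 (l-1), (-1:ℝ)^k * (k:ℝ)⁻¹) * ((l:ℝ)^2)⁻¹) := by
    apply Summable.of_norm_bounded (g := fun l : ℕ => C * ((l:ℝ)^2)⁻¹) (zb_sumw2.mul_left C)
    intro l
    rw [Real.norm_eq_abs, abs_mul]
    have h2 : |((l:ℝ)^2)⁻¹| = ((l:ℝ)^2)⁻¹ := by
      rw [abs_inv, abs_pow, Nat.abs_cast]
    rw [h2]
    exact mul_le_mul_of_nonneg_right (hC (l-1)) (by positivity)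
  have hEt : Tendsto (fun N : ℕ => ∑ l ∈ Finset.Icc 1 N,
      (∑ k ∈ Finset.Icc 1 (l-1), (-1:ℝ)^k * (k:ℝ)⁻¹) * ((l:ℝ)^2)⁻¹) atTop
      (𝓝 (∑' l : ℕ,
        (∑ k ∈ Finset.Icc 1 (l-1), (-1:ℝ)^k * (k:ℝ)⁻¹) * ((l:ℝ)^2)⁻¹)) :=
    zb_tendsto_Icc _ _ hesum.hasSum (by simp)
  -- c-sequence
  have hwcsum : Summable (fun k : ℕ => (-1:ℝ)^k * ((k:ℝ)^2)⁻¹ * zbH (k-1)) := by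
    apply Summable.of_norm_bounded zb_bound_summable
    intro k
    rw [Real.norm_eq_abs, abs_mul, abs_mul, abs_pow, abs_neg, abs_one, one_pow, one_mul,
      abs_inv, abs_pow, Nat.abs_cast, abs_of_nonneg (zbH_nonneg _)]
    exact mul_le_mul_of_nonneg_left (zbH_mono (by omega)) (by positivity)
  have hwct : Tendsto (fun N : ℕ => ∑ k ∈ Finset.Icc 1 N,
      (-1:ℝ)^k * ((k:ℝ)^2)⁻¹ * zbH (k-1)) atTop
      (𝓝 (∑' k : ℕ, (-1:ℝ)^k * ((k:ℝ)^2)⁻¹ * zbH (k-1))) :=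
    zb_tendsto_Icc _ _ hwcsum.hasSum (by norm_num)
  -- C2 double sum equals wc sums
  have hC2eq : ∀ N : ℕ, (∑ k ∈ Finset.Icc 1 N, ∑ j ∈ Finset.Ico 1 k,
      (-1:ℝ)^k * ((k:ℝ)^2 * (j:ℝ))⁻¹)
      = ∑ k ∈ Finset.Icc 1 N, (-1:ℝ)^k * ((k:ℝ)^2)⁻¹ * zbH (k-1) := by
    intro N
    apply Finset.sum_congr rfl; intro k _
    rw [zb_Ico_Icc]
    have h1 : ∀ j : ℕ, (-1:ℝ)^k * ((k:ℝ)^2 * (j:ℝ))⁻¹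
        = ((-1:ℝ)^k * ((k:ℝ)^2)⁻¹) * (j:ℝ)⁻¹ := by
      intro j; rw [mul_inv]; ring
    rw [Finset.sum_congr rfl (fun j _ => h1 j), ← Finset.mul_sum]
    rfl
  have hCt : Tendsto (fun N : ℕ => ∑ k ∈ Finset.Icc 1 N, ∑ j ∈ Finset.Ico 1 k,
      (-1:ℝ)^k * ((k:ℝ)^2 * (j:ℝ))⁻¹) atTop
      (𝓝 (∑' k : ℕ, (-1:ℝ)^k * ((k:ℝ)^2)⁻¹ * zbH (k-1))) :=
    hwct.congr (fun N => (hC2eq N).symm)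
  -- HX limit
  have hv1 : ∀ d : ℕ, |(-1:ℝ)^d * ((d:ℝ)^2)⁻¹| ≤ ((d:ℝ)^2)⁻¹ := by
    intro d
    rw [abs_mul, abs_pow, abs_neg, abs_one, one_pow, one_mul, abs_inv, abs_pow, Nat.abs_cast]
  have hHX : Tendsto (fun N : ℕ => ∑ d ∈ Finset.Icc 1 N, ((-1:ℝ)^d * ((d:ℝ)^2)⁻¹) *
      ∑ j ∈ Finset.Icc 1 (N - d), ((((j + d : ℕ)) : ℝ)⁻¹ - (j:ℝ)⁻¹)) atTop
      (𝓝 (-∑' d : ℕ, (-1:ℝ)^d * ((d:ℝ)^2)⁻¹ * zbH d)) :=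
    zb_HX (fun d => (-1:ℝ)^d * ((d:ℝ)^2)⁻¹) hv1 (by norm_num)
  -- mertens limits
  have hmert1 : Tendsto (fun N : ℕ => ∑ d ∈ Finset.Icc 1 N, ((d:ℝ)^2)⁻¹ *
      ∑ j ∈ Finset.Icc 1 (N - d), (-1:ℝ)^j * (j:ℝ)⁻¹) atTop
      (𝓝 ((∑' l : ℕ, ((l:ℝ)^2)⁻¹) * L)) :=
    zb_mertens _ _ _ L C zb_sumw2 (by norm_num) rfl hU hC
  have hmert2 : Tendsto (fun N : ℕ => ∑ d ∈ Finset.Icc 1 N, ((-1:ℝ)^d * ((d:ℝ)^2)⁻¹) *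
      ∑ j ∈ Finset.Icc 1 (N - d), (-1:ℝ)^j * (j:ℝ)⁻¹) atTop
      (𝓝 ((∑' l : ℕ, (-1:ℝ)^l * ((l:ℝ)^2)⁻¹) * L)) :=
    zb_mertens _ _ _ L C zb_sumw2a (by norm_num) rfl hU hC
  -- equation 1 (stuffle for a)
  have eq1 : L * (∑' l : ℕ, (-1:ℝ)^l * ((l:ℝ)^2)⁻¹)
      = a + (∑' l : ℕ, (∑ k ∈ Finset.Icc 1 (l-1), (-1:ℝ)^k * (k:ℝ)⁻¹)
          * ((-1:ℝ)^l * ((l:ℝ)^2)⁻¹)) + (∑' l : ℕ, ((l:ℝ)^3)⁻¹) :=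
    tendsto_nhds_unique ((hU.mul hE2t).congr (fun N => zb_identS1 N)) ((ha.add hDt).add hZ3t)
  -- equation 2 (stuffle for b)
  have eq2 : L * (∑' l : ℕ, ((l:ℝ)^2)⁻¹)
      = b + (∑' l : ℕ, (∑ k ∈ Finset.Icc 1 (l-1), (-1:ℝ)^k * (k:ℝ)⁻¹)
          * ((l:ℝ)^2)⁻¹) + (∑' l : ℕ, (-1:ℝ)^l * ((l:ℝ)^3)⁻¹) :=
    tendsto_nhds_unique ((hU.mul hZ2t).congr (fun N => zb_identS2 N)) ((hb.add hEt).add hZ3at)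
  -- equation 3 (rearrangement of a)
  have eq3 : a = (∑' l : ℕ, ((l:ℝ)^2)⁻¹) * L
      + -(∑' d : ℕ, (-1:ℝ)^d * ((d:ℝ)^2)⁻¹ * zbH d) :=
    tendsto_nhds_unique ha ((hmert1.add hHX).congr (fun N => (zb_identA N).symm))
  -- equation 4 (rearrangement of c)
  have eq4 : (∑' k : ℕ, (-1:ℝ)^k * ((k:ℝ)^2)⁻¹ * zbH (k-1))
      = (∑' l : ℕ, (-1:ℝ)^l * ((l:ℝ)^2)⁻¹) * L - b
        - (∑' k : ℕ, (-1:ℝ)^k * ((k:ℝ)^2)⁻¹ * zbH (k-1)) :=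
    tendsto_nhds_unique hCt (((hmert2.sub hb).sub hCt).congr (fun N => (zb_identC N).symm))
  -- equation 5 (rearrangement of d)
  have eq5 : (∑' l : ℕ, (∑ k ∈ Finset.Icc 1 (l-1), (-1:ℝ)^k * (k:ℝ)⁻¹)
        * ((-1:ℝ)^l * ((l:ℝ)^2)⁻¹))
      = -(-(∑' d : ℕ, (-1:ℝ)^d * ((d:ℝ)^2)⁻¹ * zbH d))
        + -(∑' l : ℕ, (∑ k ∈ Finset.Icc 1 (l-1), (-1:ℝ)^k * (k:ℝ)⁻¹) * ((l:ℝ)^2)⁻¹) :=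
    tendsto_nhds_unique hDt ((hHX.neg.add hEt.neg).congr (fun N => (zb_identD N).symm))
  -- XH = c + Z3a
  have hXC : (∑' d : ℕ, (-1:ℝ)^d * ((d:ℝ)^2)⁻¹ * zbH d)
      = (∑' k : ℕ, (-1:ℝ)^k * ((k:ℝ)^2)⁻¹ * zbH (k-1))
        + (∑' l : ℕ, (-1:ℝ)^l * ((l:ℝ)^3)⁻¹) := by
    have hterm : ∀ d : ℕ, (-1:ℝ)^d * ((d:ℝ)^2)⁻¹ * zbH d
        = (-1:ℝ)^d * ((d:ℝ)^2)⁻¹ * zbH (d-1) + (-1:ℝ)^d * ((d:ℝ)^3)⁻¹ := by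
      intro d
      rcases Nat.eq_zero_or_pos d with rfl | hd
      · simp [zbH]
      · have hsplit : zbH d = zbH (d-1) + ((d:ℝ))⁻¹ := by
          have h1 := zbH_succ (d-1)
          have h2 : d - 1 + 1 = d := by omega
          rw [h2] at h1
          rw [h1]
          have h3 : (((d:ℕ) - 1 : ℕ) : ℝ) + 1 = (d:ℝ) := by
            have : (1:ℕ) ≤ d := hd
            push_cast [Nat.cast_sub this]
            ring
          rw [h3]
        rw [hsplit]
        have h4 : ((d:ℝ)^2)⁻¹ * ((d:ℝ))⁻¹ = ((d:ℝ)^3)⁻¹ := by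
          rw [← mul_inv, ← pow_succ]
        linear_combination ((-1:ℝ)^d) * h4
    calc (∑' d : ℕ, (-1:ℝ)^d * ((d:ℝ)^2)⁻¹ * zbH d)
        = ∑' d : ℕ, ((-1:ℝ)^d * ((d:ℝ)^2)⁻¹ * zbH (d-1) + (-1:ℝ)^d * ((d:ℝ)^3)⁻¹) :=
          tsum_congr hterm
      _ = _ := Summable.tsum_add hwcsum zb_sumw3a
  -- eta relations
  have eta2L : 2 * ((∑' l : ℕ, (-1:ℝ)^l * ((l:ℝ)^2)⁻¹) * L)
      + (∑' l : ℕ, ((l:ℝ)^2)⁻¹) * L = 0 := by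
    linear_combination L * zb_eta2
  have eta3 := zb_eta3
  -- identify the goal tsum
  have hgoal : (∑' k : ℕ, ∑' l : ℕ, if 1 ≤ l ∧ l < k then
        (-1 : ℝ) ^ k * ((k : ℝ) ^ 2 * (l : ℝ))⁻¹ else 0)
      = ∑' k : ℕ, (-1:ℝ)^k * ((k:ℝ)^2)⁻¹ * zbH (k-1) := by
    apply tsum_congr
    intro k
    have h1 : (∑' l : ℕ, if 1 ≤ l ∧ l < k then
          (-1 : ℝ) ^ k * ((k : ℝ) ^ 2 * (l : ℝ))⁻¹ else 0)
        = ∑ l ∈ Finset.Ico 1 k, (if 1 ≤ l ∧ l < k then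
            (-1 : ℝ) ^ k * ((k : ℝ) ^ 2 * (l : ℝ))⁻¹ else 0) :=
      tsum_eq_sum (fun l hl => if_neg (by simpa [Finset.mem_Ico] using hl))
    rw [h1, Finset.sum_congr rfl (fun l hl => if_pos (by simpa [Finset.mem_Ico] using hl))]
    rw [zb_Ico_Icc]
    have h2 : ∀ j : ℕ, (-1:ℝ)^k * ((k:ℝ)^2 * (j:ℝ))⁻¹
        = ((-1:ℝ)^k * ((k:ℝ)^2)⁻¹) * (j:ℝ)⁻¹ := by
      intro j; rw [mul_inv]; ring
    rw [Finset.sum_congr rfl (fun j _ => h2 j), ← Finset.mul_sum]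
    rfl
  rw [hgoal]
  linarith [eq1, eq2, eq3, eq4, eq5, hXC, eta2L, eta3]
end

section
/- Define a_n(t) by a₁(t)=a₂(t)=1 and n(n+1)²·a_{n+2}(t) = n(2n+1)·a_{n+1}(t) + (n³+(−1)^{n+1}t)·a_n(t) for n≥1. Then the sequence ã_n(t) = 1 + Σ_{i≥1} t^i · Σ_{n>l₁>k₁>...>l_i>k_i≥1} (−1)^{l₁+...+l_i}/(l₁²k₁···l_i²k_i) satisfies the same initial conditions and recursion, hence a_n(t)=ã_n(t) for all n≥1. -/
/-- ã_n(t) = 1 + ∑_{i≥1} t^i ∑_{n>l₁>k₁>...>l_i>k_i≥1} (−1)^{l₁+⋯+l_i}/(l₁²k₁⋯l_i²k_i).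
For each fixed n only finitely many terms are nonzero. -/
noncomputable def atilde (t : ℝ) (n : ℕ) : ℝ :=
  1 + ∑' i : ℕ, t ^ (i + 1) *
    ∑' p : (Fin (i + 1) → ℕ) × (Fin (i + 1) → ℕ),
      if p.1 0 < n ∧ (∀ j, p.2 j < p.1 j)
          ∧ (∀ j j' : Fin (i + 1), (j' : ℕ) = (j : ℕ) + 1 → p.1 j' < p.2 j)
          ∧ (∀ j, 1 ≤ p.2 j) then
        ∏ j, (-1 : ℝ) ^ (p.1 j) * ((p.1 j : ℝ) ^ 2 * (p.2 j : ℝ))⁻¹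
      else 0

/- ### Auxiliary coefficient sequences -/

noncomputable def Cc : ℕ → ℕ → ℝ
  | 0, _ => 1
  | (m+1), n => ∑ l ∈ Finset.range n, (-1:ℝ)^l * ((l:ℝ)^2)⁻¹ *
      ∑ k ∈ Finset.range l, if 1 ≤ k then ((k:ℝ))⁻¹ * Cc m k else 0

noncomputable def Ee (m n : ℕ) : ℝ :=
  ∑ k ∈ Finset.range n, if 1 ≤ k then ((k:ℝ))⁻¹ * Cc m k else 0

lemma Cc_zero (n : ℕ) : Cc 0 n = 1 := rfl

lemma Cc_succ (m n : ℕ) :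
    Cc (m+1) n = ∑ l ∈ Finset.range n, (-1:ℝ)^l * ((l:ℝ)^2)⁻¹ * Ee m l := rfl

lemma Ee_succ (m n : ℕ) :
    Ee m (n+1) = Ee m n + if 1 ≤ n then ((n:ℝ))⁻¹ * Cc m n else 0 :=
  Finset.sum_range_succ _ _

lemma Cc_succ_succ (m n : ℕ) :
    Cc (m+1) (n+1) = Cc (m+1) n + (-1:ℝ)^n * ((n:ℝ)^2)⁻¹ * Ee m n := by
  rw [Cc_succ, Cc_succ, Finset.sum_range_succ]

lemma Cc_vanish_of_Ee {m : ℕ} (h : ∀ l ≤ 2*m+1, Ee m l = 0) :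
    ∀ n ≤ 2*m+2, Cc (m+1) n = 0 := by
  intro n hn
  rw [Cc_succ]
  apply Finset.sum_eq_zero
  intro l hl
  rw [Finset.mem_range] at hl
  rw [h l (by omega), mul_zero]

lemma Ee_vanish : ∀ m, ∀ l ≤ 2*m+1, Ee m l = 0 := by
  intro m
  induction m with
  | zero =>
    intro l hl
    apply Finset.sum_eq_zero
    intro k hk
    rw [Finset.mem_range] at hk
    rw [if_neg (by omega)]
  | succ m ih =>
    intro l hl
    apply Finset.sum_eq_zero
    intro k hk
    rw [Finset.mem_range] at hk
    by_cases h1 : 1 ≤ k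
    · rw [if_pos h1, Cc_vanish_of_Ee ih k (by omega), mul_zero]
    · rw [if_neg h1]

lemma Cc_vanish (m n : ℕ) (h : n ≤ 2*m+2) : Cc (m+1) n = 0 :=
  Cc_vanish_of_Ee (Ee_vanish m) n h

/- ### The coefficient-level recursion -/

lemma Cc_key (m n : ℕ) (hn : 1 ≤ n) :
    (n:ℝ) * ((n:ℝ)+1)^2 * Cc (m+1) (n+2)
      = (n:ℝ) * (2*(n:ℝ)+1) * Cc (m+1) (n+1) + (n:ℝ)^3 * Cc (m+1) n
        + (-1:ℝ)^(n+1) * Cc m n := by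
  have hx : (n:ℝ) ≠ 0 := Nat.cast_ne_zero.2 (by omega)
  have hx1 : (n:ℝ) + 1 ≠ 0 := by positivity
  have h1 := Cc_succ_succ m (n+1)
  have h2 := Cc_succ_succ m n
  have h3 : Ee m (n+1) = Ee m n + ((n:ℝ))⁻¹ * Cc m n := by
    rw [Ee_succ, if_pos hn]
  rw [show n + 2 = (n+1)+1 from rfl, h1, h3, h2]
  push_cast
  field_simp
  ring

/- ### The inner tsums -/

noncomputable def gfun (i n : ℕ) (p : (Fin (i + 1) → ℕ) × (Fin (i + 1) → ℕ)) : ℝ :=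
  if p.1 0 < n ∧ (∀ j, p.2 j < p.1 j)
      ∧ (∀ j j' : Fin (i + 1), (j' : ℕ) = (j : ℕ) + 1 → p.1 j' < p.2 j)
      ∧ (∀ j, 1 ≤ p.2 j) then
    ∏ j, (-1 : ℝ) ^ (p.1 j) * ((p.1 j : ℝ) ^ 2 * (p.2 j : ℝ))⁻¹
  else 0

noncomputable def Tt (i n : ℕ) : ℝ := ∑' p, gfun i n p

lemma atilde_eq_T (t : ℝ) (n : ℕ) : atilde t n = 1 + ∑' i, t^(i+1) * Tt i n := rfl

lemma chain_lt {i n : ℕ} {p : (Fin (i+1) → ℕ) × (Fin (i+1) → ℕ)}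
    (h1 : p.1 0 < n) (h2 : ∀ j, p.2 j < p.1 j)
    (h3 : ∀ j j' : Fin (i+1), (j' : ℕ) = (j : ℕ) + 1 → p.1 j' < p.2 j) :
    ∀ j, p.1 j < n ∧ p.2 j < n := by
  have key : ∀ v (hv : v < i+1), p.1 ⟨v, hv⟩ < n := by
    intro v
    induction v with
    | zero =>
      intro hv
      have h0 : (⟨0, hv⟩ : Fin (i+1)) = 0 := by ext; simp
      rw [h0]; exact h1
    | succ v ih =>
      intro hv
      have hv' : v < i+1 := Nat.lt_of_succ_lt hv
      have ha := h3 ⟨v, hv'⟩ ⟨v+1, hv⟩ rfl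
      exact lt_trans (lt_trans ha (h2 ⟨v, hv'⟩)) (ih hv')
  intro j
  have hj := key j.val j.isLt
  rw [Fin.eta] at hj
  exact ⟨hj, lt_trans (h2 j) hj⟩

lemma gfun_eq_zero {i k M : ℕ} (hkM : k ≤ M) {p : (Fin (i+1) → ℕ) × (Fin (i+1) → ℕ)}
    (hp : p ∉ (Fintype.piFinset fun _ : Fin (i+1) => Finset.range M)
        ×ˢ (Fintype.piFinset fun _ : Fin (i+1) => Finset.range M)) :
    gfun i k p = 0 := by
  unfold gfun
  split_ifs with h
  · exfalso
    apply hp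
    obtain ⟨h1, h2, h3, h4⟩ := h
    have hlt := chain_lt h1 h2 h3
    simp only [Finset.mem_product, Fintype.mem_piFinset, Finset.mem_range]
    exact ⟨fun j => lt_of_lt_of_le (hlt j).1 hkM, fun j => lt_of_lt_of_le (hlt j).2 hkM⟩
  · rfl

lemma Tt_eq_sum (i k M : ℕ) (hkM : k ≤ M) :
    Tt i k = ∑ p ∈ (Fintype.piFinset fun _ : Fin (i+1) => Finset.range M)
        ×ˢ (Fintype.piFinset fun _ : Fin (i+1) => Finset.range M), gfun i k p :=
  tsum_eq_sum fun _ hp => gfun_eq_zero hkM hp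

lemma sum_head (n m : ℕ) :
    ∑ l ∈ Finset.range n, ∑ k ∈ Finset.range n,
      (if l < n ∧ k < l ∧ 1 ≤ k then (-1:ℝ)^l * ((l:ℝ)^2 * (k:ℝ))⁻¹ else 0) * Cc m k
      = Cc (m+1) n := by
  rw [Cc_succ]
  apply Finset.sum_congr rfl
  intro l hl
  rw [Finset.mem_range] at hl
  unfold Ee
  rw [Finset.mul_sum, ← Finset.sum_subset (Finset.range_subset_range.2 hl.le) ?_]
  · apply Finset.sum_congr rfl
    intro k hk
    rw [Finset.mem_range] at hk
    by_cases h1 : 1 ≤ k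
    · rw [if_pos ⟨hl, hk, h1⟩, if_pos h1, mul_inv]
      ring
    · rw [if_neg h1, if_neg (by tauto), zero_mul, mul_zero]
  · intro k _ hk'
    rw [Finset.mem_range] at hk'
    rw [if_neg (by omega), zero_mul]

/- base case -/
def pairOneEquiv : ℕ × ℕ ≃ (Fin 1 → ℕ) × (Fin 1 → ℕ) where
  toFun q := (fun _ => q.1, fun _ => q.2)
  invFun p := (p.1 0, p.2 0)
  left_inv q := rfl
  right_inv p := Prod.ext (funext fun j => congrArg p.1 (Subsingleton.elim 0 j))
    (funext fun j => congrArg p.2 (Subsingleton.elim 0 j))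

lemma Tt_zero (n : ℕ) : Tt 0 n = Cc 1 n := by
  have hpt : ∀ q : ℕ × ℕ, gfun 0 n (pairOneEquiv q)
      = (if q.1 < n ∧ q.2 < q.1 ∧ 1 ≤ q.2 then
          (-1:ℝ)^q.1 * ((q.1:ℝ)^2 * (q.2:ℝ))⁻¹ else 0) * Cc 0 q.2 := by
    rintro ⟨l, k⟩
    rw [Cc_zero, mul_one]
    unfold gfun
    apply if_congr
    · constructor
      · rintro ⟨hl, hk, -, h1⟩
        exact ⟨hl, hk 0, h1 0⟩
      · rintro ⟨hl, hk, h1⟩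
        exact ⟨hl, fun _ => hk, fun j j' hj => by
          have := j.isLt; have := j'.isLt; omega, fun _ => h1⟩
    · exact Fin.prod_univ_one _
    · rfl
  unfold Tt
  rw [← pairOneEquiv.tsum_eq (gfun 0 n), tsum_congr hpt,
    tsum_eq_sum (s := Finset.range n ×ˢ Finset.range n) ?_, Finset.sum_product]
  · exact sum_head n 0
  · rintro ⟨l, k⟩ hq
    rw [Finset.mem_product, Finset.mem_range, Finset.mem_range] at hq
    rw [if_neg (by omega), zero_mul]

/- the cons equivalence -/
def consPairEquiv (i : ℕ) :
    ((ℕ × ℕ) × ((Fin (i+1) → ℕ) × (Fin (i+1) → ℕ)))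
      ≃ ((Fin (i+2) → ℕ) × (Fin (i+2) → ℕ)) where
  toFun q := (Fin.cons q.1.1 q.2.1, Fin.cons q.1.2 q.2.2)
  invFun p := ((p.1 0, p.2 0), (fun j => p.1 j.succ, fun j => p.2 j.succ))
  left_inv q := by
    obtain ⟨⟨l, k⟩, a, b⟩ := q
    simp [Fin.cons_zero, Fin.cons_succ]
  right_inv p := by
    obtain ⟨f, g⟩ := p
    exact Prod.ext (Fin.cons_self_tail f) (Fin.cons_self_tail g)

lemma cond_cons_iff (i n l k : ℕ) (a b : Fin (i+1) → ℕ) :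
    ((Fin.cons l a : Fin (i+2) → ℕ) 0 < n
      ∧ (∀ j, (Fin.cons k b : Fin (i+2) → ℕ) j < (Fin.cons l a : Fin (i+2) → ℕ) j)
      ∧ (∀ j j' : Fin (i+2), (j' : ℕ) = (j : ℕ) + 1 →
          (Fin.cons l a : Fin (i+2) → ℕ) j' < (Fin.cons k b : Fin (i+2) → ℕ) j)
      ∧ (∀ j, 1 ≤ (Fin.cons k b : Fin (i+2) → ℕ) j))
    ↔ ((l < n ∧ k < l ∧ 1 ≤ k) ∧ (a 0 < k ∧ (∀ j, b j < a j)
      ∧ (∀ j j' : Fin (i+1), (j' : ℕ) = (j : ℕ) + 1 → a j' < b j) ∧ (∀ j, 1 ≤ b j))) := by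
  constructor
  · rintro ⟨hl, h2, h3, h4⟩
    have hk : k < l := by simpa using h2 0
    have h1k : 1 ≤ k := by simpa using h4 0
    have ha0 : a 0 < k := by
      have := h3 0 ((0 : Fin (i+1)).succ) (by simp)
      simpa using this
    refine ⟨⟨by simpa using hl, hk, h1k⟩, ha0, fun j => by simpa using h2 j.succ,
      ?_, fun j => by simpa using h4 j.succ⟩
    intro j j' hjj
    have := h3 j.succ j'.succ (by simp [Fin.val_succ, hjj])
    simpa using this
  · rintro ⟨⟨hl, hk, h1k⟩, ha0, hb, hch, hb1⟩
    refine ⟨by simpa using hl, ?_, ?_, ?_⟩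
    · intro j
      rcases Fin.eq_zero_or_eq_succ j with rfl | ⟨jj, rfl⟩
      · simpa using hk
      · simpa using hb jj
    · intro j j' hjj
      rcases Fin.eq_zero_or_eq_succ j' with rfl | ⟨jj', rfl⟩
      · exact absurd hjj (by simp)
      · rcases Fin.eq_zero_or_eq_succ j with rfl | ⟨jj, rfl⟩
        · have hz : jj' = 0 := by ext; simpa using hjj
          subst hz
          simpa using ha0
        · have hv : (jj' : ℕ) = (jj : ℕ) + 1 := by
            simpa [Fin.val_succ] using hjj
          simpa using hch jj jj' hv
    · intro j
      rcases Fin.eq_zero_or_eq_succ j with rfl | ⟨jj, rfl⟩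
      · simpa using h1k
      · simpa using hb1 jj

lemma gfun_cons (i n l k : ℕ) (a b : Fin (i+1) → ℕ) :
    gfun (i+1) n (Fin.cons l a, Fin.cons k b)
      = (if l < n ∧ k < l ∧ 1 ≤ k then (-1:ℝ)^l * ((l:ℝ)^2 * (k:ℝ))⁻¹ else 0)
        * gfun i k (a, b) := by
  unfold gfun
  by_cases hh : l < n ∧ k < l ∧ 1 ≤ k
  · by_cases ht : a 0 < k ∧ (∀ j, b j < a j)
        ∧ (∀ j j' : Fin (i+1), (j' : ℕ) = (j : ℕ) + 1 → a j' < b j) ∧ (∀ j, 1 ≤ b j)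
    · rw [if_pos hh, if_pos ht, if_pos ((cond_cons_iff i n l k a b).2 ⟨hh, ht⟩)]
      rw [Fin.prod_univ_succ]
      simp only [Fin.cons_zero, Fin.cons_succ]
    · rw [if_pos hh, if_neg ht,
        if_neg (fun hcc => ht ((cond_cons_iff i n l k a b).1 hcc).2), mul_zero]
  · rw [if_neg hh,
      if_neg (fun hcc => hh ((cond_cons_iff i n l k a b).1 hcc).1), zero_mul]

lemma Tt_succ (i n : ℕ) :
    Tt (i+1) n = ∑ l ∈ Finset.range n, ∑ k ∈ Finset.range n,
      (if l < n ∧ k < l ∧ 1 ≤ k then (-1:ℝ)^l * ((l:ℝ)^2 * (k:ℝ))⁻¹ else 0) * Tt i k := by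
  classical
  have hrw : Tt (i+1) n = ∑' q : ((ℕ × ℕ) × ((Fin (i+1) → ℕ) × (Fin (i+1) → ℕ))),
      (if q.1.1 < n ∧ q.1.2 < q.1.1 ∧ 1 ≤ q.1.2 then
        (-1:ℝ)^q.1.1 * ((q.1.1:ℝ)^2 * (q.1.2:ℝ))⁻¹ else 0) * gfun i q.1.2 q.2 := by
    unfold Tt
    rw [← (consPairEquiv i).tsum_eq (gfun (i+1) n)]
    exact tsum_congr fun q => gfun_cons i n q.1.1 q.1.2 q.2.1 q.2.2
  rw [hrw]
  set B := (Fintype.piFinset fun _ : Fin (i+1) => Finset.range n)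
      ×ˢ (Fintype.piFinset fun _ : Fin (i+1) => Finset.range n) with hB
  rw [tsum_eq_sum (s := (Finset.range n ×ˢ Finset.range n) ×ˢ B) ?_]
  · rw [Finset.sum_product]
    have hinner : ∀ q1 ∈ Finset.range n ×ˢ Finset.range n,
        (∑ r ∈ B, (if q1.1 < n ∧ q1.2 < q1.1 ∧ 1 ≤ q1.2 then
          (-1:ℝ)^q1.1 * ((q1.1:ℝ)^2 * (q1.2:ℝ))⁻¹ else 0) * gfun i q1.2 r)
        = (if q1.1 < n ∧ q1.2 < q1.1 ∧ 1 ≤ q1.2 then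
          (-1:ℝ)^q1.1 * ((q1.1:ℝ)^2 * (q1.2:ℝ))⁻¹ else 0) * Tt i q1.2 := by
      rintro ⟨l, k⟩ hq
      by_cases hh : l < n ∧ k < l ∧ 1 ≤ k
      · rw [← Finset.mul_sum, ← Tt_eq_sum i k n (by omega)]
      · simp only [if_neg hh, zero_mul]
        exact Finset.sum_eq_zero fun _ _ => rfl
    rw [Finset.sum_congr rfl hinner, Finset.sum_product]
  · rintro ⟨⟨l, k⟩, r⟩ hq
    by_cases hh : l < n ∧ k < l ∧ 1 ≤ k
    · have hr : r ∉ B := by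
        intro hr
        exact hq (Finset.mem_product.2 ⟨Finset.mem_product.2
          ⟨Finset.mem_range.2 hh.1, Finset.mem_range.2 (lt_trans hh.2.1 hh.1)⟩, hr⟩)
      rw [gfun_eq_zero (le_of_lt (lt_trans hh.2.1 hh.1)) hr, mul_zero]
    · rw [if_neg hh, zero_mul]

lemma Tt_eq_Cc (i n : ℕ) : Tt i n = Cc (i+1) n := by
  induction i generalizing n with
  | zero => exact Tt_zero n
  | succ i ih =>
    rw [Tt_succ]
    rw [Finset.sum_congr rfl fun l _ => Finset.sum_congr rfl fun k _ => by rw [ih k]]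
    exact sum_head n (i+1)

/- ### atilde as a finite sum -/

lemma atilde_finite (t : ℝ) (n N : ℕ) (h : n ≤ 2*N + 2) :
    atilde t n = 1 + ∑ i ∈ Finset.range N, t^(i+1) * Cc (i+1) n := by
  rw [atilde_eq_T]
  congr 1
  rw [tsum_congr fun i => by rw [Tt_eq_Cc i n]]
  apply tsum_eq_sum
  intro i hi
  rw [Finset.mem_range] at hi
  rw [Cc_vanish i n (by omega), mul_zero]

lemma atilde_one (t : ℝ) : atilde t 1 = 1 := by
  rw [atilde_finite t 1 0 (by norm_num)]
  simp

lemma atilde_two (t : ℝ) : atilde t 2 = 1 := by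
  rw [atilde_finite t 2 0 (by norm_num)]
  simp

lemma atilde_rec (t : ℝ) (n : ℕ) (hn : 1 ≤ n) :
    (n : ℝ) * ((n : ℝ) + 1) ^ 2 * atilde t (n + 2)
      = (n : ℝ) * (2 * (n : ℝ) + 1) * atilde t (n + 1)
        + ((n : ℝ) ^ 3 + (-1 : ℝ) ^ (n + 1) * t) * atilde t n := by
  rw [atilde_finite t (n+2) n (by omega), atilde_finite t (n+1) n (by omega),
    atilde_finite t n n (by omega)]
  have hshift : ∑ i ∈ Finset.range n, t^(i+1) * Cc i n
      = t * (1 + ∑ i ∈ Finset.range n, t^(i+1) * Cc (i+1) n) := by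
    obtain ⟨n', rfl⟩ : ∃ n', n = n' + 1 := ⟨n - 1, by omega⟩
    rw [Finset.sum_range_succ' (fun i => t^(i+1) * Cc i (n'+1)) n',
      Finset.sum_range_succ (fun i => t^(i+1) * Cc (i+1) (n'+1)) n',
      Cc_vanish n' (n'+1) (by omega), Cc_zero, mul_zero, add_zero]
    rw [Finset.sum_congr rfl (fun i _ => show t^(i+1+1) * Cc (i+1) (n'+1)
        = t * (t^(i+1) * Cc (i+1) (n'+1)) by ring), ← Finset.mul_sum]
    ring
  have H : (n:ℝ) * ((n:ℝ)+1)^2 * (∑ i ∈ Finset.range n, t^(i+1) * Cc (i+1) (n+2))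
      = (n:ℝ) * (2*(n:ℝ)+1) * (∑ i ∈ Finset.range n, t^(i+1) * Cc (i+1) (n+1))
        + (n:ℝ)^3 * (∑ i ∈ Finset.range n, t^(i+1) * Cc (i+1) n)
        + (-1:ℝ)^(n+1) * ∑ i ∈ Finset.range n, t^(i+1) * Cc i n := by
    rw [Finset.mul_sum, Finset.mul_sum, Finset.mul_sum, Finset.mul_sum,
      ← Finset.sum_add_distrib, ← Finset.sum_add_distrib]
    apply Finset.sum_congr rfl
    intro i _
    have := Cc_key i n hn
    calc (n:ℝ) * ((n:ℝ)+1)^2 * (t^(i+1) * Cc (i+1) (n+2))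
        = t^(i+1) * ((n:ℝ) * ((n:ℝ)+1)^2 * Cc (i+1) (n+2)) := by ring
      _ = t^(i+1) * ((n:ℝ) * (2*(n:ℝ)+1) * Cc (i+1) (n+1) + (n:ℝ)^3 * Cc (i+1) n
            + (-1:ℝ)^(n+1) * Cc i n) := by rw [this]
      _ = _ := by ring
  rw [hshift] at H
  linear_combination H

/- ### Main theorem -/

/-- The sequence ã_n(t) satisfies ã₁ = ã₂ = 1 and the recursion
n(n+1)²a_{n+2} = n(2n+1)a_{n+1} + (n³+(−1)^{n+1}t)a_n; hence any sequence a
satisfying these initial conditions and this recursion equals ã. -/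
theorem atilde_satisfies_recursion (t : ℝ) (a : ℕ → ℝ)
    (h1 : a 1 = 1) (h2 : a 2 = 1)
    (hrec : ∀ n : ℕ, 1 ≤ n →
      (n : ℝ) * ((n : ℝ) + 1) ^ 2 * a (n + 2)
        = (n : ℝ) * (2 * (n : ℝ) + 1) * a (n + 1)
          + ((n : ℝ) ^ 3 + (-1 : ℝ) ^ (n + 1) * t) * a n) :
    (atilde t 1 = 1 ∧ atilde t 2 = 1 ∧
      ∀ n : ℕ, 1 ≤ n →
        (n : ℝ) * ((n : ℝ) + 1) ^ 2 * atilde t (n + 2)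
          = (n : ℝ) * (2 * (n : ℝ) + 1) * atilde t (n + 1)
            + ((n : ℝ) ^ 3 + (-1 : ℝ) ^ (n + 1) * t) * atilde t n)
    ∧ ∀ n : ℕ, 1 ≤ n → a n = atilde t n := by
  refine ⟨⟨atilde_one t, atilde_two t, fun n hn => atilde_rec t n hn⟩, ?_⟩
  have key2 : ∀ n : ℕ, a (n+1) = atilde t (n+1) ∧ a (n+2) = atilde t (n+2) := by
    intro n
    induction n with
    | zero => exact ⟨by rw [h1, atilde_one], by rw [h2, atilde_two]⟩
    | succ n ih =>
      refine ⟨ih.2, ?_⟩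
      have hc : ((n:ℝ)+1) * (((n:ℝ)+1)+1)^2 ≠ 0 := by positivity
      have ha := hrec (n+1) (by omega)
      have hb := atilde_rec t (n+1) (by omega)
      push_cast at ha hb
      rw [ih.1, ih.2] at ha
      rw [← hb] at ha
      exact mul_left_cancel₀ hc ha
  intro n hn
  obtain ⟨m, rfl⟩ : ∃ m, n = m + 1 := ⟨n - 1, by omega⟩
  exact (key2 m).1
end
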